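/- arXiv:1010.1653 — 11 statements merged into one kernel-verified Lean document; each statement's English description precedes it below -/
import Mathlib

section
/- Let m ≥ 2 be an integer, R₀ > 0 and λ > 0 real numbers, and g : [R₀, ∞) → ℝ a continuously differentiable function with g(r) > 0 for all r ≥ R₀, such that ∫_{R₀}^∞ g(t)^{1-m} dt = +∞ (i.e. 1/g^{m-1} is not integrable at infinity). Let h : [R₀, ∞) → ℝ be a bounded, twice continuously differentiable function with h(r) > 0 for all r ≥ R₀, h(R₀) = 1, and h''(r) + (m-1)·(g'(r)/g(r))·h'(r) = λ·h(r) for all r ≥ R₀. Then h'(r) < 0 for every r ≥ R₀; in particular h is strictly decreasing on [R₀, ∞). -/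
open Set MeasureTheory Filter Topology

/-- on a parabolic model (`1/g^{m-1}` not integrable at infinity),
a bounded positive solution of `h'' + (m-1)(g'/g)h' = λ h` with `h(R₀) = 1`
has `h' < 0` everywhere; in particular `h` is strictly decreasing. -/
theorem stmt_2 (m : ℕ) (hm : 2 ≤ m) (R₀ lam : ℝ) (hR₀ : 0 < R₀) (hlam : 0 < lam)
    (g h : ℝ → ℝ)
    (hg : ContDiffOn ℝ 1 g (Set.Ici R₀))
    (hgpos : ∀ r ∈ Set.Ici R₀, 0 < g r)
    (hgint : ¬ MeasureTheory.IntegrableOn (fun t => (g t ^ (m - 1))⁻¹) (Set.Ici R₀))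
    (hbdd : ∃ C : ℝ, ∀ r ∈ Set.Ici R₀, h r ≤ C)
    (hh : ContDiffOn ℝ 2 h (Set.Ici R₀))
    (hhpos : ∀ r ∈ Set.Ici R₀, 0 < h r)
    (hval : h R₀ = 1)
    (hode : ∀ r ∈ Set.Ici R₀,
      deriv (deriv h) r + ((m : ℝ) - 1) * (deriv g r / g r) * deriv h r = lam * h r) :
    (∀ r ∈ Set.Ici R₀, deriv h r < 0) ∧ StrictAntiOn h (Set.Ici R₀) := by
  obtain ⟨C, hC⟩ := hbdd
  have hU : UniqueDiffOn ℝ (Set.Ici R₀) := uniqueDiffOn_Ici R₀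
  set φ : ℝ → ℝ := derivWithin h (Set.Ici R₀) with hφdef
  have hφC1 : ContDiffOn ℝ 1 φ (Set.Ici R₀) := hh.derivWithin hU (by norm_num)
  have hφcont : ContinuousOn φ (Set.Ici R₀) := hφC1.continuousOn
  have hmem : ∀ x : ℝ, R₀ < x → Set.Ici R₀ ∈ 𝓝 x := fun x hx => Ici_mem_nhds hx
  have hhd : ∀ x, R₀ < x → DifferentiableAt ℝ h x := fun x hx =>
    (hh.differentiableOn (by norm_num)).differentiableAt (hmem x hx)
  have hφeq : ∀ x, R₀ < x → φ x = deriv h x := fun x hx =>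
    derivWithin_of_mem_nhds (hmem x hx)
  have hφdh : ∀ x, R₀ < x → HasDerivAt h (φ x) x := fun x hx => by
    rw [hφeq x hx]; exact (hhd x hx).hasDerivAt
  have hφd : ∀ x, R₀ < x → HasDerivAt φ (deriv (deriv h) x) x := by
    intro x hx
    have h1 : DifferentiableAt ℝ φ x :=
      (hφC1.differentiableOn (by norm_num)).differentiableAt (hmem x hx)
    have h2 : φ =ᶠ[𝓝 x] deriv h := by
      filter_upwards [Ioi_mem_nhds hx] with y hy
      exact hφeq y hy
    have h3 := h1.hasDerivAt
    rwa [h2.deriv_eq] at h3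
  set F : ℝ → ℝ := fun r => g r ^ (m - 1) * φ r with hFdef
  have hgd : ∀ x, R₀ < x → HasDerivAt g (deriv g x) x := fun x hx =>
    ((hg.differentiableOn (by norm_num)).differentiableAt (hmem x hx)).hasDerivAt
  have hFd : ∀ x, R₀ < x → HasDerivAt F (lam * (g x ^ (m - 1) * h x)) x := by
    intro x hx
    have hgx : (0:ℝ) < g x := hgpos x (le_of_lt hx)
    have hd1 : HasDerivAt (fun r => g r ^ (m-1))
        ((m-1 : ℕ) * g x ^ (m - 1 - 1) * deriv g x) x := (hgd x hx).pow (m-1)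
    have hd2 := hd1.mul (hφd x hx)
    refine hd2.congr_deriv ?_
    have hode' := hode x (le_of_lt hx)
    have hdh : deriv h x = φ x := (hφeq x hx).symm
    rw [hdh] at hode'
    have hk1 : m - 1 = (m - 2) + 1 := by omega
    have hk2 : m - 1 - 1 = m - 2 := by omega
    have hcast : ((m - 1 : ℕ) : ℝ) = (m : ℝ) - 1 := by
      have : (1:ℕ) ≤ m := by omega
      push_cast [Nat.cast_sub this]; ring
    have hdd : deriv (deriv h) x = lam * h x - ((m:ℝ) - 1) * (deriv g x / g x) * φ x := by
      linarith
    rw [hdd, hcast, hk2, hk1]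
    field_simp
    ring
  have hFcont : ContinuousOn F (Set.Ici R₀) := (hg.continuousOn.pow _).mul hφcont
  have hFmono : StrictMonoOn F (Set.Ici R₀) := by
    apply strictMonoOn_of_deriv_pos (convex_Ici R₀) hFcont
    intro x hx
    rw [interior_Ici] at hx
    rw [(hFd x hx).deriv]
    have h1 := hgpos x (le_of_lt (Set.mem_Ioi.mp hx))
    have h2 := hhpos x (le_of_lt (Set.mem_Ioi.mp hx))
    positivity
  -- the key claim: F < 0 everywhere on Ici R₀
  have hFneg : ∀ r ∈ Set.Ici R₀, F r < 0 := by
    by_contra hcon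
    push_neg at hcon
    obtain ⟨r₁, hr₁, hF₁⟩ := hcon
    set r₂ := r₁ + 1 with hr₂def
    have hr₂R₀ : R₀ < r₂ := lt_of_le_of_lt hr₁ (by simp [hr₂def])
    have hr₂mem : r₂ ∈ Set.Ici R₀ := le_of_lt hr₂R₀
    have hc : 0 < F r₂ := lt_of_le_of_lt hF₁ (hFmono hr₁ hr₂mem (by simp [hr₂def]))
    set c := F r₂ with hcdef
    set ψ : ℝ → ℝ := fun t => (g t ^ (m - 1))⁻¹ with hψdef
    have hψcont : ContinuousOn ψ (Set.Ici R₀) := by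
      apply (hg.continuousOn.pow _).inv₀
      intro x hx
      exact (pow_pos (hgpos x hx) _).ne'
    have hψpos : ∀ x ∈ Set.Ici R₀, 0 < ψ x := fun x hx =>
      inv_pos.mpr (pow_pos (hgpos x hx) _)
    -- pointwise bound for x ≥ r₂
    have hkey : ∀ x, r₂ ≤ x → c * ψ x ≤ φ x := by
      intro x hx
      have hxR : R₀ ≤ x := le_trans (le_of_lt hr₂R₀) hx
      have hFx : c ≤ F x := by
        rcases eq_or_lt_of_le hx with heq | hlt
        · rw [← heq]
        · exact le_of_lt (hFmono hr₂mem hxR hlt)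
      have hgx : (0:ℝ) < g x ^ (m - 1) := pow_pos (hgpos x hxR) _
      have : c ≤ g x ^ (m - 1) * φ x := hFx
      rw [hψdef]
      rw [mul_inv_le_iff₀ hgx]
      linarith [this]
    -- FTC
    have hint : ∀ r, r₂ ≤ r → ∫ x in r₂..r, φ x = h r - h r₂ := by
      intro r hr
      apply intervalIntegral.integral_eq_sub_of_hasDerivAt
      · intro x hx
        rw [Set.uIcc_of_le hr] at hx
        exact hφdh x (lt_of_lt_of_le hr₂R₀ hx.1)
      · apply ContinuousOn.intervalIntegrable
        apply hφcont.mono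
        rw [Set.uIcc_of_le hr]
        intro x hx
        exact le_trans (le_of_lt hr₂R₀) hx.1
    -- bound on interval integrals of ψ
    have hψii : ∀ r, r₂ ≤ r → IntervalIntegrable ψ volume r₂ r := by
      intro r hr
      apply ContinuousOn.intervalIntegrable
      apply hψcont.mono
      rw [Set.uIcc_of_le hr]
      intro x hx
      exact le_trans (le_of_lt hr₂R₀) hx.1
    have hψbound : ∀ r, r₂ ≤ r → (∫ x in r₂..r, ψ x) ≤ (C - h r₂) / c := by
      intro r hr
      have hφii : IntervalIntegrable φ volume r₂ r := by
        apply ContinuousOn.intervalIntegrable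
        apply hφcont.mono
        rw [Set.uIcc_of_le hr]
        intro x hx
        exact le_trans (le_of_lt hr₂R₀) hx.1
      have hcψii : IntervalIntegrable (fun x => c * ψ x) volume r₂ r :=
        (hψii r hr).const_mul c
      have hmono : (∫ x in r₂..r, c * ψ x) ≤ ∫ x in r₂..r, φ x := by
        apply intervalIntegral.integral_mono_on hr hcψii hφii
        intro x hx
        exact hkey x hx.1
      rw [intervalIntegral.integral_const_mul, hint r hr] at hmono
      have hCr : h r ≤ C := hC r (le_trans (le_of_lt hr₂R₀) hr)
      rw [le_div_iff₀ hc, mul_comm]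
      linarith
    -- conclude integrability on Ioi r₂
    have hIoi : IntegrableOn ψ (Set.Ioi r₂) := by
      apply MeasureTheory.integrableOn_Ioi_of_intervalIntegral_norm_bounded
        ((C - h r₂) / c) r₂ (f := ψ) (b := fun n : ℕ => r₂ + n) (l := atTop)
      · intro n
        exact (hψii (r₂ + n) (le_add_of_nonneg_right (Nat.cast_nonneg n))).1
      · apply tendsto_atTop_add_const_left
        exact tendsto_natCast_atTop_atTop
      · filter_upwards with n
        have hle : r₂ ≤ r₂ + (n:ℝ) := le_add_of_nonneg_right (Nat.cast_nonneg n)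
        have : (∫ x in r₂..r₂ + (n:ℝ), ‖ψ x‖) = ∫ x in r₂..r₂ + (n:ℝ), ψ x := by
          apply intervalIntegral.integral_congr
          intro x hx
          rw [Set.uIcc_of_le hle] at hx
          have : 0 < ψ x := hψpos x (le_trans (le_of_lt hr₂R₀) hx.1)
          simp [Real.norm_eq_abs, abs_of_pos this]
        rw [this]
        exact hψbound _ hle
    -- integrability on the compact part
    have hIcc : IntegrableOn ψ (Set.Icc R₀ r₂) := by
      apply ContinuousOn.integrableOn_compact isCompact_Icc
      exact hψcont.mono (Set.Icc_subset_Ici_self)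
    have : IntegrableOn ψ (Set.Ici R₀) := by
      apply (hIcc.union hIoi).mono_set
      intro x hx
      by_cases hxr : x ≤ r₂
      · exact Or.inl ⟨hx, hxr⟩
      · exact Or.inr (lt_of_not_ge hxr)
    exact hgint this
  -- deriv h < 0 on Ioi R₀
  have hmain : ∀ x, R₀ < x → deriv h x < 0 := by
    intro x hx
    rw [← hφeq x hx]
    have hFx := hFneg x (le_of_lt hx)
    have hgx : (0:ℝ) < g x ^ (m-1) := pow_pos (hgpos x (le_of_lt hx)) _
    have hFx' : g x ^ (m-1) * φ x < 0 := hFx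
    nlinarith [hFx', hgx]
  have hφR₀ : φ R₀ < 0 := by
    have hF0 : g R₀ ^ (m-1) * φ R₀ < 0 := hFneg R₀ Set.self_mem_Ici
    have hg0 : (0:ℝ) < g R₀ ^ (m-1) := pow_pos (hgpos R₀ Set.self_mem_Ici) _
    nlinarith [hF0, hg0]
  -- boundary point
  have hbound : deriv h R₀ < 0 := by
    by_cases hd : DifferentiableAt ℝ h R₀
    · have heq : derivWithin h (Set.Ici R₀) R₀ = deriv h R₀ :=
        hd.derivWithin (hU R₀ Set.self_mem_Ici)
      rw [← heq]
      exact hφR₀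
    · exfalso
      have h0 : deriv h R₀ = 0 := deriv_zero_of_not_differentiableAt hd
      have hode0 := hode R₀ Set.self_mem_Ici
      rw [h0] at hode0
      have hpos0 := hhpos R₀ Set.self_mem_Ici
      have h2 : deriv (deriv h) R₀ = lam * h R₀ := by linarith
      have hdd : DifferentiableAt ℝ (deriv h) R₀ := by
        by_contra hnd
        rw [deriv_zero_of_not_differentiableAt hnd] at h2
        nlinarith
      have h3 : Tendsto (deriv h) (𝓝[>] R₀) (𝓝 0) := by
        rw [← h0]
        exact (hdd.continuousAt.continuousWithinAt).tendsto
      have h4 : Tendsto φ (𝓝[>] R₀) (𝓝 (φ R₀)) := by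
        apply ((hφcont R₀ Set.self_mem_Ici).tendsto).mono_left
        exact nhdsWithin_mono R₀ Set.Ioi_subset_Ici_self
      have h5 : Tendsto (deriv h) (𝓝[>] R₀) (𝓝 (φ R₀)) := by
        apply h4.congr'
        filter_upwards [self_mem_nhdsWithin] with y hy
        exact hφeq y hy
      have := tendsto_nhds_unique h3 h5
      linarith [hφR₀, this]
  constructor
  · intro r hr
    rcases eq_or_lt_of_le (Set.mem_Ici.mp hr) with heq | hlt
    · rw [← heq]; exact hbound
    · exact hmain r hlt
  · apply strictAntiOn_of_deriv_neg (convex_Ici R₀) hh.continuousOn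
    intro x hx
    rw [interior_Ici] at hx
    exact hmain x hx
end

section
/- Let m ≥ 2 be an integer, R₀ > 0 and λ > 0 real numbers, and g : [R₀, ∞) → ℝ a continuously differentiable function with g(r) > 0 for all r ≥ R₀, such that ∫_{R₀}^∞ g(t)^{1-m} dt = +∞. Let h : [R₀, ∞) → ℝ be a bounded, twice continuously differentiable function with h(r) > 0 for all r ≥ R₀ and h''(r) + (m-1)·(g'(r)/g(r))·h'(r) = λ·h(r) for all r ≥ R₀. Then g(r)^{m-1}·h'(r) → 0 as r → +∞. -/
open Set MeasureTheory Filter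


lemma div_int (R₀ : ℝ) (f : ℝ → ℝ) (hf : ContinuousOn f (Set.Ici R₀))
    (hfpos : ∀ r ∈ Set.Ici R₀, 0 ≤ f r)
    (hfint : ¬ MeasureTheory.IntegrableOn f (Set.Ici R₀))
    (r₁ : ℝ) (hr₁ : R₀ ≤ r₁) :
    Filter.Tendsto (fun x => ∫ t in r₁..x, f t) Filter.atTop Filter.atTop := by
  have hfc : ∀ x y, r₁ ≤ x → IntervalIntegrable f MeasureTheory.volume x (max y x) := by
    intro x y hx
    apply ContinuousOn.intervalIntegrable
    apply hf.mono
    rw [Set.uIcc_of_le (le_max_right _ _)]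
    exact fun t ht => le_trans (le_trans hr₁ hx) ht.1
  -- f is not integrable on Ioi r₁
  have hni : ¬ MeasureTheory.IntegrableOn f (Set.Ioi r₁) := by
    intro hint
    apply hfint
    have h1 : MeasureTheory.IntegrableOn f (Set.Icc R₀ r₁) :=
      (hf.mono (Set.Icc_subset_Ici_self)).integrableOn_Icc
    exact (h1.union hint).mono_set (by
      intro t ht
      rcases le_or_gt t r₁ with h | h
      · exact Or.inl ⟨ht, h⟩
      · exact Or.inr h)
  set I' : ℝ → ℝ := fun x => ∫ t in r₁..(max x r₁), f t with hI'
  have hmono : Monotone I' := by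
    intro x y hxy
    have hax : r₁ ≤ max x r₁ := le_max_right _ _
    have hxy' : max x r₁ ≤ max y r₁ := max_le_max hxy le_rfl
    have hi1 : IntervalIntegrable f MeasureTheory.volume r₁ (max x r₁) := by
      simpa using hfc r₁ x le_rfl
    have hi2 : IntervalIntegrable f MeasureTheory.volume (max x r₁) (max y r₁) := by
      have := hfc (max x r₁) y hax
      rwa [← max_assoc, max_eq_left hxy] at this
    have : I' y = I' x + ∫ t in (max x r₁)..(max y r₁), f t := by
      rw [hI']
      exact (intervalIntegral.integral_add_adjacent_intervals hi1 hi2).symm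
    rw [this]
    have : 0 ≤ ∫ t in (max x r₁)..(max y r₁), f t := by
      apply intervalIntegral.integral_nonneg hxy'
      exact fun u hu => hfpos u (le_trans hr₁ (le_trans hax hu.1))
    linarith
  have hItop : Filter.Tendsto I' Filter.atTop Filter.atTop := by
    by_contra hc
    have : ∃ C, ∀ x, I' x < C := by
      by_contra hc2
      push_neg at hc2
      exact hc (tendsto_atTop_atTop_of_monotone hmono (fun b => by
        obtain ⟨a, ha⟩ := hc2 b; exact ⟨a, ha⟩))
    obtain ⟨C, hC⟩ := this
    apply hni
    refine MeasureTheory.integrableOn_Ioi_of_intervalIntegral_norm_bounded C r₁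
      (b := fun i : ℝ => max i r₁) (fun i => ?_)
      (tendsto_atTop_mono (fun x => le_max_left x r₁) tendsto_id) ?_
    · have := hfc r₁ i le_rfl
      rwa [intervalIntegrable_iff_integrableOn_Ioc_of_le (le_max_right _ _)] at this
    · filter_upwards with i
      have : (∫ x in r₁..(max i r₁), ‖f x‖) = I' i := by
        apply intervalIntegral.integral_congr
        intro t ht
        rw [Set.uIcc_of_le (le_max_right _ _)] at ht
        exact Real.norm_of_nonneg (hfpos t (le_trans hr₁ ht.1))
      rw [this]
      exact le_of_lt (hC i)
  apply hItop.congr'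
  filter_upwards [Filter.eventually_ge_atTop r₁] with x hx
  rw [hI']
  simp only [max_eq_left hx]

/-- under the same parabolicity hypothesis, for a bounded positive
solution of `h'' + (m-1)(g'/g)h' = λ h` one has `g^{m-1} h' → 0` at infinity. -/
theorem stmt_3 (m : ℕ) (hm : 2 ≤ m) (R₀ lam : ℝ) (hR₀ : 0 < R₀) (hlam : 0 < lam)
    (g h : ℝ → ℝ)
    (hg : ContDiffOn ℝ 1 g (Set.Ici R₀))
    (hgpos : ∀ r ∈ Set.Ici R₀, 0 < g r)
    (hgint : ¬ MeasureTheory.IntegrableOn (fun t => (g t ^ (m - 1))⁻¹) (Set.Ici R₀))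
    (hbdd : ∃ C : ℝ, ∀ r ∈ Set.Ici R₀, h r ≤ C)
    (hh : ContDiffOn ℝ 2 h (Set.Ici R₀))
    (hhpos : ∀ r ∈ Set.Ici R₀, 0 < h r)
    (hode : ∀ r ∈ Set.Ici R₀,
      deriv (deriv h) r + ((m : ℝ) - 1) * (deriv g r / g r) * deriv h r = lam * h r) :
    Filter.Tendsto (fun r => g r ^ (m - 1) * deriv h r) Filter.atTop (nhds 0) := by
  obtain ⟨C, hC⟩ := hbdd
  set n := m - 1 with hn
  have hcast : ((m : ℝ) - 1) = (n : ℝ) := by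
    rw [hn, Nat.cast_sub (by omega : 1 ≤ m)]; norm_num
  set φ : ℝ → ℝ := fun r => g r ^ n * deriv h r with hφ
  have hopen : ContDiffOn ℝ 2 h (Set.Ioi R₀) := hh.mono Set.Ioi_subset_Ici_self
  have hd1 : ContDiffOn ℝ 1 (deriv h) (Set.Ioi R₀) :=
    hopen.deriv_of_isOpen isOpen_Ioi (by norm_num)
  have hhd : ∀ r ∈ Set.Ioi R₀, HasDerivAt h (deriv h r) r := fun r hr =>
    ((hh.contDiffAt (Ici_mem_nhds hr)).differentiableAt (by norm_num)).hasDerivAt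
  have hdh : ∀ r ∈ Set.Ioi R₀, HasDerivAt (deriv h) (deriv (deriv h) r) r := fun r hr =>
    ((hd1.differentiableOn one_ne_zero).differentiableAt (isOpen_Ioi.mem_nhds hr)).hasDerivAt
  have hgd : ∀ r ∈ Set.Ioi R₀, HasDerivAt g (deriv g r) r := fun r hr =>
    ((hg.contDiffAt (Ici_mem_nhds hr)).differentiableAt one_ne_zero).hasDerivAt
  have hφd : ∀ r ∈ Set.Ioi R₀, HasDerivAt φ (lam * (g r ^ n * h r)) r := by
    intro r hr
    have hgr : g r ≠ 0 := (hgpos r (Set.Ioi_subset_Ici_self hr)).ne'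
    have H := ((hgd r hr).pow n).mul (hdh r hr)
    refine H.congr_deriv ?_
    have hode' := hode r (Set.Ioi_subset_Ici_self hr)
    rw [hcast] at hode'
    obtain ⟨k, hk⟩ : ∃ k, n = k + 1 := ⟨n - 1, by omega⟩
    have hdd : deriv (deriv h) r = lam * h r - (n : ℝ) * (deriv g r / g r) * deriv h r := by
      linarith
    rw [hdd, hk]
    push_cast [Pi.pow_apply]
    field_simp
    ring
  have hφcont : ContinuousOn φ (Set.Ioi R₀) := fun r hr =>
    ((hφd r hr).continuousAt).continuousWithinAt
  have hφmono : StrictMonoOn φ (Set.Ioi R₀) := by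
    apply strictMonoOn_of_deriv_pos (convex_Ioi R₀) hφcont
    intro r hr
    rw [interior_Ioi] at hr
    rw [(hφd r hr).deriv]
    have h1 := hgpos r (Set.Ioi_subset_Ici_self hr)
    have h2 := hhpos r (Set.Ioi_subset_Ici_self hr)
    positivity
  have hinvcont : ContinuousOn (fun t => (g t ^ n)⁻¹) (Set.Ici R₀) :=
    (hg.continuousOn.pow n).inv₀ (fun t ht => (pow_pos (hgpos t ht) n).ne')
  have hItop : ∀ r₁, R₀ ≤ r₁ →
      Filter.Tendsto (fun x => ∫ t in r₁..x, (g t ^ n)⁻¹) Filter.atTop Filter.atTop :=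
    fun r₁ hr₁ => div_int R₀ _ hinvcont
      (fun r hr => le_of_lt (inv_pos.2 (pow_pos (hgpos r hr) n))) hgint r₁ hr₁
  have hFTC : ∀ r₁ ∈ Set.Ioi R₀, ∀ x, r₁ ≤ x →
      h x - h r₁ = ∫ t in r₁..x, deriv h t := by
    intro r₁ hr₁ x hx
    symm
    apply intervalIntegral.integral_deriv_eq_sub
    · intro t ht
      rw [Set.uIcc_of_le hx] at ht
      exact (hhd t (lt_of_lt_of_le hr₁ ht.1)).differentiableAt
    · apply ContinuousOn.intervalIntegrable
      apply hd1.continuousOn.mono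
      rw [Set.uIcc_of_le hx]
      exact fun t ht => lt_of_lt_of_le hr₁ ht.1
  have hdhII : ∀ r₁ ∈ Set.Ioi R₀, ∀ x, r₁ ≤ x →
      IntervalIntegrable (deriv h) MeasureTheory.volume r₁ x := by
    intro r₁ hr₁ x hx
    apply ContinuousOn.intervalIntegrable
    apply hd1.continuousOn.mono
    rw [Set.uIcc_of_le hx]
    exact fun t ht => lt_of_lt_of_le hr₁ ht.1
  have hinvII : ∀ r₁ x, R₀ ≤ r₁ → r₁ ≤ x →
      IntervalIntegrable (fun t => (g t ^ n)⁻¹) MeasureTheory.volume r₁ x := by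
    intro r₁ x hr₁ hx
    apply ContinuousOn.intervalIntegrable
    apply hinvcont.mono
    rw [Set.uIcc_of_le hx]
    exact fun t ht => le_trans hr₁ ht.1
  -- key comparison: for r₁ > R₀ and c with φ ≥ c on [r₁,∞) (resp ≤), integrate
  have hkey : ∀ r₁ ∈ Set.Ioi R₀, ∀ c : ℝ, (∀ t, r₁ ≤ t → c ≤ φ t) → ∀ x, r₁ ≤ x →
      h r₁ + c * ∫ t in r₁..x, (g t ^ n)⁻¹ ≤ h x := by
    intro r₁ hr₁ c hc x hx
    have h1 : (∫ t in r₁..x, c * (g t ^ n)⁻¹) ≤ ∫ t in r₁..x, deriv h t := by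
      apply intervalIntegral.integral_mono_on hx
        ((hinvII r₁ x (le_of_lt hr₁) hx).const_mul c) (hdhII r₁ hr₁ x hx)
      intro t ht
      have htR : R₀ < t := lt_of_lt_of_le hr₁ ht.1
      have hgtp : (0:ℝ) < g t ^ n := pow_pos (hgpos t (le_of_lt htR)) n
      have hφt : c ≤ φ t := hc t ht.1
      have : c * (g t ^ n)⁻¹ ≤ φ t * (g t ^ n)⁻¹ :=
        mul_le_mul_of_nonneg_right hφt (le_of_lt (inv_pos.2 hgtp))
      calc c * (g t ^ n)⁻¹ ≤ φ t * (g t ^ n)⁻¹ := this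
        _ = deriv h t := by rw [hφ]; field_simp
    rw [intervalIntegral.integral_const_mul] at h1
    have h2 := hFTC r₁ hr₁ x hx
    linarith
  have hkey' : ∀ r₁ ∈ Set.Ioi R₀, ∀ c : ℝ, (∀ t, r₁ ≤ t → φ t ≤ c) → ∀ x, r₁ ≤ x →
      h x ≤ h r₁ + c * ∫ t in r₁..x, (g t ^ n)⁻¹ := by
    intro r₁ hr₁ c hc x hx
    have h1 : (∫ t in r₁..x, deriv h t) ≤ ∫ t in r₁..x, c * (g t ^ n)⁻¹ := by
      apply intervalIntegral.integral_mono_on hx (hdhII r₁ hr₁ x hx)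
        ((hinvII r₁ x (le_of_lt hr₁) hx).const_mul c)
      intro t ht
      have htR : R₀ < t := lt_of_lt_of_le hr₁ ht.1
      have hgtp : (0:ℝ) < g t ^ n := pow_pos (hgpos t (le_of_lt htR)) n
      have hφt : φ t ≤ c := hc t ht.1
      calc deriv h t = φ t * (g t ^ n)⁻¹ := by rw [hφ]; field_simp
        _ ≤ c * (g t ^ n)⁻¹ :=
          mul_le_mul_of_nonneg_right hφt (le_of_lt (inv_pos.2 hgtp))
    rw [intervalIntegral.integral_const_mul] at h1
    have h2 := hFTC r₁ hr₁ x hx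
    linarith
  -- Step 1: φ ≤ 0 on Ioi R₀
  have hφle : ∀ r ∈ Set.Ioi R₀, φ r ≤ 0 := by
    intro r₁ hr₁
    by_contra hc
    push_neg at hc
    have hcφ : ∀ t, r₁ ≤ t → φ r₁ ≤ φ t := by
      intro t ht
      exact hφmono.monotoneOn hr₁ (lt_of_lt_of_le hr₁ ht) ht
    have htt : Filter.Tendsto (fun x => φ r₁ * ∫ t in r₁..x, (g t ^ n)⁻¹)
        Filter.atTop Filter.atTop :=
      (hItop r₁ (le_of_lt hr₁)).const_mul_atTop hc
    obtain ⟨x, hx1, hx2⟩ :=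
      ((htt.eventually (Filter.eventually_gt_atTop (C - h r₁))).and
        (Filter.eventually_ge_atTop r₁)).exists
    have h3 := hkey r₁ hr₁ (φ r₁) hcφ x hx2
    have h4 := hC x (le_trans (le_of_lt hr₁) hx2)
    linarith
  -- Step 2: the limit
  set R₁ := R₀ + 1 with hR₁def
  have hR₁ : R₀ < R₁ := by rw [hR₁def]; linarith
  set Φ : ℝ → ℝ := fun x => φ (max x R₁) with hΦ
  have hmax : ∀ x : ℝ, max x R₁ ∈ Set.Ioi R₀ := fun x =>
    lt_of_lt_of_le hR₁ (le_max_right _ _)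
  have hΦmono : Monotone Φ := fun x y hxy =>
    hφmono.monotoneOn (hmax x) (hmax y) (max_le_max hxy le_rfl)
  have hΦbdd : BddAbove (Set.range Φ) := by
    refine ⟨0, ?_⟩
    rintro _ ⟨x, rfl⟩
    exact hφle _ (hmax x)
  have hΦtend : Filter.Tendsto Φ Filter.atTop (nhds (⨆ x, Φ x)) :=
    tendsto_atTop_ciSup hΦmono hΦbdd
  set L := ⨆ x, Φ x with hLdef
  have hφeq : φ =ᶠ[Filter.atTop] Φ := by
    filter_upwards [Filter.eventually_ge_atTop R₁] with x hx
    rw [hΦ]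
    simp [max_eq_left hx]
  have hφtend : Filter.Tendsto φ Filter.atTop (nhds L) := hΦtend.congr' hφeq.symm
  have hL0 : L ≤ 0 := ciSup_le (fun x => hφle _ (hmax x))
  have hLge : 0 ≤ L := by
    by_contra hc
    push_neg at hc
    have hub : ∀ t, R₁ ≤ t → φ t ≤ L := by
      intro t ht
      have := le_ciSup hΦbdd t
      rw [hΦ] at this
      simpa [max_eq_left ht] using this
    have htt : Filter.Tendsto (fun x => L * ∫ t in R₁..x, (g t ^ n)⁻¹)
        Filter.atTop Filter.atBot :=
      Tendsto.const_mul_atTop_of_neg hc (hItop R₁ (le_of_lt hR₁))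
    obtain ⟨x, hx1, hx2⟩ :=
      ((htt.eventually (Filter.eventually_lt_atBot (-h R₁))).and
        (Filter.eventually_ge_atTop R₁)).exists
    have h3 := hkey' R₁ hR₁ L hub x hx2
    have h4 := hhpos x (le_trans (le_of_lt hR₁) hx2)
    linarith
  have hL : L = 0 := le_antisymm hL0 hLge
  rw [← hL]
  exact hφtend
end

section
/- Let m ≥ 2 be an integer, R₀ > 0 and λ > 0 real numbers, and g : [R₀, ∞) → ℝ a continuously differentiable function with g(r) > 0 for all r ≥ R₀, such that ∫_{R₀}^∞ g(t)^{1-m} dt = +∞. Let h : [R₀, ∞) → ℝ be a bounded, twice continuously differentiable function with h(r) > 0 for all r ≥ R₀ and h''(r) + (m-1)·(g'(r)/g(r))·h'(r) = λ·h(r) for all r ≥ R₀. Then for every r ≥ R₀ the function t ↦ g(t)^{m-1}·h(t) is Lebesgue integrable on [r, ∞) and −g(r)^{m-1}·h'(r) = λ·∫_r^∞ g(t)^{m-1}·h(t) dt. -/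
open Set MeasureTheory Filter Topology

/-- under the parabolicity hypothesis, for a bounded positive solution
of `h'' + (m-1)(g'/g)h' = λ h`, the function `g^{m-1} h` is integrable on each
`[r,∞)` and `-g(r)^{m-1} h'(r) = λ ∫_r^∞ g^{m-1} h`. -/
theorem stmt_4 (m : ℕ) (hm : 2 ≤ m) (R₀ lam : ℝ) (hR₀ : 0 < R₀) (hlam : 0 < lam)
    (g h : ℝ → ℝ)
    (hg : ContDiffOn ℝ 1 g (Set.Ici R₀))
    (hgpos : ∀ r ∈ Set.Ici R₀, 0 < g r)
    (hgint : ¬ MeasureTheory.IntegrableOn (fun t => (g t ^ (m - 1))⁻¹) (Set.Ici R₀))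
    (hbdd : ∃ C : ℝ, ∀ r ∈ Set.Ici R₀, h r ≤ C)
    (hh : ContDiffOn ℝ 2 h (Set.Ici R₀))
    (hhpos : ∀ r ∈ Set.Ici R₀, 0 < h r)
    (hode : ∀ r ∈ Set.Ici R₀,
      deriv (deriv h) r + ((m : ℝ) - 1) * (deriv g r / g r) * deriv h r = lam * h r) :
    ∀ r ∈ Set.Ici R₀,
      MeasureTheory.IntegrableOn (fun t => g t ^ (m - 1) * h t) (Set.Ici r) ∧
      -(g r ^ (m - 1) * deriv h r) = lam * ∫ t in Set.Ici r, g t ^ (m - 1) * h t := by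
  obtain ⟨k, rfl⟩ : ∃ k, m = k + 2 := ⟨m - 2, by omega⟩
  have e1 : k + 2 - 1 = k + 1 := by omega
  simp only [e1] at hgint ⊢
  -- basic continuity facts
  have hgc : ContinuousOn g (Ici R₀) := hg.continuousOn
  have hhc : ContinuousOn h (Ici R₀) := hh.continuousOn
  have hφc : ContinuousOn (fun t => g t ^ (k + 1) * h t) (Ici R₀) :=
    (hgc.pow (k + 1)).mul hhc
  have hφpos : ∀ t ∈ Ici R₀, 0 < g t ^ (k + 1) * h t := fun t ht =>
    mul_pos (pow_pos (hgpos t ht) _) (hhpos t ht)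
  have hψc : ContinuousOn (fun t => (g t ^ (k + 1))⁻¹) (Ici R₀) :=
    (hgc.pow (k + 1)).inv₀ (fun x hx => pow_ne_zero _ (ne_of_gt (hgpos x hx)))
  have hψpos : ∀ t ∈ Ici R₀, 0 < (g t ^ (k + 1))⁻¹ := fun t ht =>
    inv_pos.mpr (pow_pos (hgpos t ht) _)
  -- differentiability facts
  have hder_h : ∀ t ∈ Ioi R₀, HasDerivAt h (deriv h t) t := by
    intro t ht
    exact ((hh.contDiffAt (Ici_mem_nhds ht)).differentiableAt (by norm_num)).hasDerivAt
  have hcd2 : ContDiffOn ℝ 1 (deriv h) (Ioi R₀) :=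
    (hh.mono Ioi_subset_Ici_self).deriv_of_isOpen isOpen_Ioi (by norm_num)
  have hdhc : ContinuousOn (deriv h) (Ioi R₀) := hcd2.continuousOn
  -- derivative of F = g^{k+1} * h'
  have hFder : ∀ t ∈ Ioi R₀,
      HasDerivAt (fun x => g x ^ (k + 1) * deriv h x) (lam * (g t ^ (k + 1) * h t)) t := by
    intro t ht
    have htIci : t ∈ Ici R₀ := mem_Ici.mpr (le_of_lt ht)
    have hgt : 0 < g t := hgpos t htIci
    have hg' : HasDerivAt g (deriv g t) t :=
      ((hg.contDiffAt (Ici_mem_nhds ht)).differentiableAt (by norm_num)).hasDerivAt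
    have hh'' : HasDerivAt (deriv h) (deriv (deriv h) t) t :=
      ((hcd2.differentiableOn (by norm_num)).differentiableAt (isOpen_Ioi.mem_nhds ht)).hasDerivAt
    have hprod := (hg'.fun_pow (k + 1)).fun_mul hh''
    simp only [Nat.add_sub_cancel] at hprod
    have e := hode t htIci
    push_cast at e
    have hne : g t ≠ 0 := ne_of_gt hgt
    have eddh : deriv (deriv h) t
        = lam * h t - ((k : ℝ) + 2 - 1) * (deriv g t / g t) * deriv h t := by linarith
    refine hprod.congr_deriv ?_
    rw [eddh]
    push_cast
    field_simp
    ring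
  -- fundamental theorem of calculus for F
  have key : ∀ a b : ℝ, R₀ < a → a ≤ b →
      g b ^ (k + 1) * deriv h b - g a ^ (k + 1) * deriv h a
        = lam * ∫ t in a..b, g t ^ (k + 1) * h t := by
    intro a b ha hab
    have hsub : uIcc a b ⊆ Ioi R₀ := by
      rw [uIcc_of_le hab]
      intro x hx
      exact lt_of_lt_of_le ha hx.1
    have h1 : ∫ t in a..b, lam * (g t ^ (k + 1) * h t)
        = g b ^ (k + 1) * deriv h b - g a ^ (k + 1) * deriv h a := by
      apply intervalIntegral.integral_eq_sub_of_hasDerivAt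
      · intro x hx
        exact hFder x (hsub hx)
      · apply ContinuousOn.intervalIntegrable
        exact continuousOn_const.mul (hφc.mono (fun x hx => mem_Ici.mpr (le_of_lt (hsub hx))))
    rw [← h1, intervalIntegral.integral_const_mul]
  -- fundamental theorem of calculus for h
  have keyh : ∀ a b : ℝ, R₀ < a → a ≤ b → h b - h a = ∫ t in a..b, deriv h t := by
    intro a b ha hab
    have hsub : uIcc a b ⊆ Ioi R₀ := by
      rw [uIcc_of_le hab]
      intro x hx
      exact lt_of_lt_of_le ha hx.1
    rw [intervalIntegral.integral_eq_sub_of_hasDerivAt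
      (fun x hx => hder_h x (hsub hx)) ((hdhc.mono hsub).intervalIntegrable)]
  -- unboundedness of the integral of ψ
  have hψunb : ∀ a : ℝ, R₀ < a → ∀ M : ℝ, ∃ b, a ≤ b ∧ M < ∫ t in a..b, (g t ^ (k + 1))⁻¹ := by
    intro a ha M
    by_contra hcon
    push_neg at hcon
    apply hgint
    have hψa : IntegrableOn (fun t => (g t ^ (k + 1))⁻¹) (Ioi a) := by
      apply integrableOn_Ioi_of_intervalIntegral_norm_bounded M a (fun i => ?_) tendsto_id
      · filter_upwards [eventually_ge_atTop a] with i hi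
        simp only [id_eq]
        have : ∫ x in a..i, ‖(g x ^ (k + 1))⁻¹‖ = ∫ x in a..i, (g x ^ (k + 1))⁻¹ := by
          apply intervalIntegral.integral_congr
          intro x hx
          rw [uIcc_of_le hi] at hx
          exact Real.norm_of_nonneg (le_of_lt (hψpos x (le_trans ha.le hx.1)))
        rw [this]
        exact hcon i hi
      · simp only [id_eq]
        rcases le_or_gt a i with hia | hia
        · have : Icc a i ⊆ Ici R₀ := fun x hx => le_trans ha.le hx.1
          exact ((hψc.mono this).integrableOn_Icc).mono_set Ioc_subset_Icc_self
        · rw [Ioc_eq_empty (not_lt.2 hia.le)]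
          exact integrableOn_empty
    have hIcc : IntegrableOn (fun t => (g t ^ (k + 1))⁻¹) (Icc R₀ a) :=
      (hψc.mono Icc_subset_Ici_self).integrableOn_Icc
    refine (hIcc.union hψa).mono_set (fun x hx => ?_)
    rcases le_or_gt x a with h' | h'
    · exact Or.inl ⟨hx, h'⟩
    · exact Or.inr h'
  obtain ⟨C, hC⟩ := hbdd
  -- F is nonpositive on (R₀, ∞)
  have hFnonpos : ∀ a : ℝ, R₀ < a → g a ^ (k + 1) * deriv h a ≤ 0 := by
    intro a ha
    by_contra hpos0
    push_neg at hpos0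
    obtain ⟨b, hab, hb⟩ := hψunb a ha ((C - h a) / (g a ^ (k + 1) * deriv h a))
    have hmono : ∀ t ∈ Icc a b, g a ^ (k + 1) * deriv h a ≤ g t ^ (k + 1) * deriv h t := by
      intro t htt
      have hk := key a t ha htt.1
      have hnn : 0 ≤ ∫ x in a..t, g x ^ (k + 1) * h x :=
        intervalIntegral.integral_nonneg htt.1
          (fun x hx => le_of_lt (hφpos x (le_trans ha.le hx.1)))
      nlinarith
    have hcomp : ∀ t ∈ Icc a b,
        (g a ^ (k + 1) * deriv h a) * (g t ^ (k + 1))⁻¹ ≤ deriv h t := by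
      intro t htt
      have htIci : t ∈ Ici R₀ := le_trans ha.le htt.1
      have hgt : (0:ℝ) < g t ^ (k + 1) := pow_pos (hgpos t htIci) _
      calc (g a ^ (k + 1) * deriv h a) * (g t ^ (k + 1))⁻¹
          ≤ (g t ^ (k + 1) * deriv h t) * (g t ^ (k + 1))⁻¹ :=
            mul_le_mul_of_nonneg_right (hmono t htt) (inv_nonneg.2 hgt.le)
        _ = deriv h t := by field_simp
    have hsub : uIcc a b ⊆ Ioi R₀ := by
      rw [uIcc_of_le hab]; intro x hx; exact lt_of_lt_of_le ha hx.1
    have hint1 : IntervalIntegrable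
        (fun t => (g a ^ (k + 1) * deriv h a) * (g t ^ (k + 1))⁻¹) volume a b :=
      (continuousOn_const.mul (hψc.mono (fun x hx => mem_Ici.mpr (le_of_lt (hsub hx))))).intervalIntegrable
    have hint2 : IntervalIntegrable (deriv h) volume a b :=
      (hdhc.mono hsub).intervalIntegrable
    have hmle := intervalIntegral.integral_mono_on hab hint1 hint2 hcomp
    rw [intervalIntegral.integral_const_mul] at hmle
    have hfb := keyh a b ha hab
    have hCb : h b ≤ C := hC b (le_trans ha.le hab)
    have hfrac : (C - h a) / (g a ^ (k + 1) * deriv h a) * (g a ^ (k + 1) * deriv h a)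
        = C - h a := div_mul_cancel₀ _ (ne_of_gt hpos0)
    nlinarith [mul_lt_mul_of_pos_left hb hpos0]
  -- integrability of φ on [R₀, ∞)
  have hφint : IntegrableOn (fun t => g t ^ (k + 1) * h t) (Ici R₀) := by
    set a₀ : ℝ := R₀ + 1 with ha₀def
    have ha₀ : R₀ < a₀ := by rw [ha₀def]; linarith
    have hφa : IntegrableOn (fun t => g t ^ (k + 1) * h t) (Ioi a₀) := by
      apply integrableOn_Ioi_of_intervalIntegral_norm_bounded
        (-(g a₀ ^ (k + 1) * deriv h a₀) / lam) a₀ (fun i => ?_) tendsto_id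
      · filter_upwards [eventually_ge_atTop a₀] with i hi
        simp only [id_eq]
        have hnorm : ∫ x in a₀..i, ‖g x ^ (k + 1) * h x‖ = ∫ x in a₀..i, g x ^ (k + 1) * h x := by
          apply intervalIntegral.integral_congr
          intro x hx
          rw [uIcc_of_le hi] at hx
          exact Real.norm_of_nonneg (le_of_lt (hφpos x (le_trans ha₀.le hx.1)))
        rw [hnorm]
        have hk := key a₀ i ha₀ hi
        have hFi := hFnonpos i (lt_of_lt_of_le ha₀ hi)
        rw [le_div_iff₀ hlam]
        nlinarith
      · simp only [id_eq]
        rcases le_or_gt a₀ i with hia | hia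
        · have : Icc a₀ i ⊆ Ici R₀ := fun x hx => le_trans ha₀.le hx.1
          exact ((hφc.mono this).integrableOn_Icc).mono_set Ioc_subset_Icc_self
        · rw [Ioc_eq_empty (not_lt.2 hia.le)]
          exact integrableOn_empty
    have hIcc : IntegrableOn (fun t => g t ^ (k + 1) * h t) (Icc R₀ a₀) :=
      (hφc.mono Icc_subset_Ici_self).integrableOn_Icc
    refine (hIcc.union hφa).mono_set (fun x hx => ?_)
    rcases le_or_gt x a₀ with h' | h'
    · exact Or.inl ⟨hx, h'⟩
    · exact Or.inr h'
  -- F tends to F a + lam ∫_{Ioi a} φ  at +∞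
  have htF : ∀ a : ℝ, R₀ < a →
      Tendsto (fun b => g b ^ (k + 1) * deriv h b) atTop
        (𝓝 (g a ^ (k + 1) * deriv h a + lam * ∫ t in Ioi a, g t ^ (k + 1) * h t)) := by
    intro a ha
    have hIa : IntegrableOn (fun t => g t ^ (k + 1) * h t) (Ioi a) :=
      hφint.mono_set (fun x hx => le_trans ha.le (le_of_lt hx))
    have h1 := intervalIntegral_tendsto_integral_Ioi a hIa tendsto_id
    have h2 : Tendsto (fun b => g a ^ (k + 1) * deriv h a
        + lam * ∫ t in a..b, g t ^ (k + 1) * h t) atTop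
        (𝓝 (g a ^ (k + 1) * deriv h a + lam * ∫ t in Ioi a, g t ^ (k + 1) * h t)) :=
      (h1.const_mul lam).const_add _
    apply h2.congr'
    filter_upwards [eventually_ge_atTop a] with b hb
    have := key a b ha hb
    linarith
  have ha₀ : R₀ < R₀ + 1 := by linarith
  -- the limit L is 0
  have hL0 : g (R₀ + 1) ^ (k + 1) * deriv h (R₀ + 1)
      + lam * ∫ t in Ioi (R₀ + 1), g t ^ (k + 1) * h t = 0 := by
    set L := g (R₀ + 1) ^ (k + 1) * deriv h (R₀ + 1)
      + lam * ∫ t in Ioi (R₀ + 1), g t ^ (k + 1) * h t with hLdef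
    have hT := htF (R₀ + 1) ha₀
    have hLle : L ≤ 0 := by
      apply le_of_tendsto hT
      filter_upwards [eventually_gt_atTop R₀] with b hb
      exact hFnonpos b hb
    rcases eq_or_lt_of_le hLle with hL | hL
    · exact hL
    exfalso
    have hFleL : ∀ t : ℝ, R₀ < t → g t ^ (k + 1) * deriv h t ≤ L := by
      intro t ht
      apply ge_of_tendsto hT
      filter_upwards [eventually_ge_atTop t] with b hb
      have := key t b ht hb
      have hnn : 0 ≤ ∫ x in t..b, g x ^ (k + 1) * h x :=
        intervalIntegral.integral_nonneg hb
          (fun x hx => le_of_lt (hφpos x (le_trans ht.le hx.1)))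
      nlinarith
    obtain ⟨b, hab, hb⟩ := hψunb (R₀ + 1) ha₀ (h (R₀ + 1) / (-L))
    have hcomp : ∀ t ∈ Icc (R₀ + 1) b, deriv h t ≤ L * (g t ^ (k + 1))⁻¹ := by
      intro t htt
      have htIci : t ∈ Ici R₀ := le_trans ha₀.le htt.1
      have hgt : (0:ℝ) < g t ^ (k + 1) := pow_pos (hgpos t htIci) _
      have hF := hFleL t (lt_of_lt_of_le ha₀ htt.1)
      calc deriv h t = (g t ^ (k + 1) * deriv h t) * (g t ^ (k + 1))⁻¹ := by field_simp
        _ ≤ L * (g t ^ (k + 1))⁻¹ := mul_le_mul_of_nonneg_right hF (inv_nonneg.2 hgt.le)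
    have hsub : uIcc (R₀ + 1) b ⊆ Ioi R₀ := by
      rw [uIcc_of_le hab]; intro x hx; exact lt_of_lt_of_le ha₀ hx.1
    have hint1 : IntervalIntegrable (deriv h) volume (R₀ + 1) b :=
      (hdhc.mono hsub).intervalIntegrable
    have hint2 : IntervalIntegrable (fun t => L * (g t ^ (k + 1))⁻¹) volume (R₀ + 1) b :=
      (continuousOn_const.mul (hψc.mono (fun x hx => mem_Ici.mpr (le_of_lt (hsub hx))))).intervalIntegrable
    have hmle := intervalIntegral.integral_mono_on hab hint1 hint2 hcomp
    rw [intervalIntegral.integral_const_mul] at hmle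
    have hfb := keyh (R₀ + 1) b ha₀ hab
    have hbpos := hhpos b (le_trans ha₀.le (le_trans hab le_rfl))
    have ha1pos := hhpos (R₀ + 1) ha₀.le
    have hLneg : 0 < -L := by linarith
    have : h (R₀ + 1) / (-L) * (-L) = h (R₀ + 1) := div_mul_cancel₀ _ (ne_of_gt hLneg)
    nlinarith [mul_lt_mul_of_pos_right hb hLneg]
  -- the main identity for a > R₀
  have hmain : ∀ a : ℝ, R₀ < a →
      -(g a ^ (k + 1) * deriv h a) = lam * ∫ t in Ioi a, g t ^ (k + 1) * h t := by
    intro a ha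
    have h1 := htF a ha
    have h2 := htF (R₀ + 1) ha₀
    rw [hL0] at h2
    have := tendsto_nhds_unique h1 h2
    linarith
  -- continuity of derivWithin up to the boundary
  have hdlim : Tendsto (deriv h) (nhdsWithin R₀ (Ioi R₀)) (𝓝 (derivWithin h (Ici R₀) R₀)) := by
    have hcw : ContinuousOn (derivWithin h (Ici R₀)) (Ici R₀) :=
      hh.continuousOn_derivWithin (uniqueDiffOn_Ici R₀) (by norm_num)
    have h1 : Tendsto (derivWithin h (Ici R₀)) (nhdsWithin R₀ (Ici R₀))
        (𝓝 (derivWithin h (Ici R₀) R₀)) := hcw R₀ self_mem_Ici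
    have h2 := h1.mono_left (nhdsWithin_mono _ Ioi_subset_Ici_self)
    apply h2.congr'
    filter_upwards [self_mem_nhdsWithin] with t ht
    exact derivWithin_of_mem_nhds (Ici_mem_nhds ht)
  -- F tends to g R₀ ^ (k+1) * d' at R₀⁺
  have hFt : Tendsto (fun a => g a ^ (k + 1) * deriv h a) (nhdsWithin R₀ (Ioi R₀))
      (𝓝 (g R₀ ^ (k + 1) * derivWithin h (Ici R₀) R₀)) := by
    have hgt : Tendsto g (nhdsWithin R₀ (Ioi R₀)) (𝓝 (g R₀)) :=
      (hgc R₀ self_mem_Ici).mono_left (nhdsWithin_mono _ Ioi_subset_Ici_self)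
    exact (hgt.pow (k + 1)).mul hdlim
  -- the tail integral tends to the full integral at R₀⁺
  have hIoc0 : Tendsto (fun a => ∫ t in Ioc R₀ a, g t ^ (k + 1) * h t)
      (nhdsWithin R₀ (Ioi R₀)) (𝓝 0) := by
    obtain ⟨Mc, hMc⟩ := (isCompact_Icc (a := R₀) (b := R₀ + 1)).exists_bound_of_continuousOn
      (hφc.mono Icc_subset_Ici_self)
    have hbnd : Tendsto (fun a => Mc * (a - R₀)) (nhdsWithin R₀ (Ioi R₀)) (𝓝 0) := by
      have : Tendsto (fun a : ℝ => Mc * (a - R₀)) (𝓝 R₀) (𝓝 (Mc * (R₀ - R₀))) :=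
        ((tendsto_id.sub_const R₀).const_mul Mc)
      simpa using this.mono_left nhdsWithin_le_nhds
    apply squeeze_zero_norm' _ hbnd
    have hIocmem : Ioc R₀ (R₀ + 1) ∈ nhdsWithin R₀ (Ioi R₀) :=
      Ioc_mem_nhdsGT_of_mem ⟨le_refl R₀, ha₀⟩
    filter_upwards [hIocmem] with a ha
    have hle : ‖∫ t in Ioc R₀ a, g t ^ (k + 1) * h t‖ ≤ Mc * (volume (Ioc R₀ a)).toReal := by
      apply norm_setIntegral_le_of_norm_le_const (measure_Ioc_lt_top)
      intro x hx
      exact hMc x ⟨hx.1.le, hx.2.trans ha.2⟩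
    rw [Real.volume_Ioc, ENNReal.toReal_ofReal (by linarith [ha.1.le] : (0:ℝ) ≤ a - R₀)] at hle
    exact hle
  have hIci_lim : Tendsto (fun a => ∫ t in Ioi a, g t ^ (k + 1) * h t)
      (nhdsWithin R₀ (Ioi R₀)) (𝓝 (∫ t in Ioi R₀, g t ^ (k + 1) * h t)) := by
    have hsplit : ∀ a : ℝ, R₀ < a → ∫ t in Ioi a, g t ^ (k + 1) * h t
        = (∫ t in Ioi R₀, g t ^ (k + 1) * h t) - ∫ t in Ioc R₀ a, g t ^ (k + 1) * h t := by
      intro a ha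
      have hu : ∫ t in Ioc R₀ a ∪ Ioi a, g t ^ (k + 1) * h t
          = (∫ t in Ioc R₀ a, g t ^ (k + 1) * h t) + ∫ t in Ioi a, g t ^ (k + 1) * h t := by
        apply setIntegral_union (Ioc_disjoint_Ioi le_rfl) measurableSet_Ioi
        · exact hφint.mono_set (fun x hx => hx.1.le)
        · exact hφint.mono_set (fun x hx => le_trans ha.le (le_of_lt hx))
      rw [Ioc_union_Ioi_eq_Ioi ha.le] at hu
      linarith
    have h2 : Tendsto (fun a => (∫ t in Ioi R₀, g t ^ (k + 1) * h t)
        - ∫ t in Ioc R₀ a, g t ^ (k + 1) * h t) (nhdsWithin R₀ (Ioi R₀))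
        (𝓝 ((∫ t in Ioi R₀, g t ^ (k + 1) * h t) - 0)) := hIoc0.const_sub _
    rw [sub_zero] at h2
    apply h2.congr'
    filter_upwards [self_mem_nhdsWithin] with a ha
    exact (hsplit a ha).symm
  -- uniqueness of limits at R₀⁺
  have huniq : g R₀ ^ (k + 1) * derivWithin h (Ici R₀) R₀
      = -(lam * ∫ t in Ioi R₀, g t ^ (k + 1) * h t) := by
    have h2 : Tendsto (fun a => g a ^ (k + 1) * deriv h a) (nhdsWithin R₀ (Ioi R₀))
        (𝓝 (-(lam * ∫ t in Ioi R₀, g t ^ (k + 1) * h t))) := by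
      have h3 := (hIci_lim.const_mul lam).neg
      apply h3.congr'
      filter_upwards [self_mem_nhdsWithin] with a ha
      have := hmain a ha
      linarith
    exact tendsto_nhds_unique hFt h2
  -- positivity of the full integral
  have hIpos : 0 < ∫ t in Ioi R₀, g t ^ (k + 1) * h t := by
    have hsub1 : Icc R₀ (R₀ + 1) ⊆ Ici R₀ := Icc_subset_Ici_self
    have hii : IntervalIntegrable (fun t => g t ^ (k + 1) * h t) volume R₀ (R₀ + 1) := by
      apply ContinuousOn.intervalIntegrable
      rw [uIcc_of_le ha₀.le]
      exact hφc.mono hsub1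
    have h1 : 0 < ∫ t in R₀..(R₀ + 1), g t ^ (k + 1) * h t :=
      intervalIntegral.intervalIntegral_pos_of_pos_on hii
        (fun x hx => hφpos x hx.1.le) ha₀
    have h2 : ∫ t in R₀..(R₀ + 1), g t ^ (k + 1) * h t
        = ∫ t in Ioc R₀ (R₀ + 1), g t ^ (k + 1) * h t :=
      intervalIntegral.integral_of_le ha₀.le
    have hu : ∫ t in Ioc R₀ (R₀ + 1) ∪ Ioi (R₀ + 1), g t ^ (k + 1) * h t
        = (∫ t in Ioc R₀ (R₀ + 1), g t ^ (k + 1) * h t)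
          + ∫ t in Ioi (R₀ + 1), g t ^ (k + 1) * h t := by
      apply setIntegral_union (Ioc_disjoint_Ioi le_rfl) measurableSet_Ioi
      · exact hφint.mono_set (fun x hx => hx.1.le)
      · exact hφint.mono_set (fun x hx => le_trans ha₀.le (le_of_lt hx))
    rw [Ioc_union_Ioi_eq_Ioi ha₀.le] at hu
    have h4 : 0 ≤ ∫ t in Ioi (R₀ + 1), g t ^ (k + 1) * h t :=
      setIntegral_nonneg measurableSet_Ioi
        (fun x hx => le_of_lt (hφpos x (le_trans ha₀.le (le_of_lt hx))))
    linarith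
  -- value of deriv h at the boundary point
  have hbound : deriv h R₀ = derivWithin h (Ici R₀) R₀ := by
    by_cases hdiff : DifferentiableAt ℝ h R₀
    · exact (hdiff.derivWithin (uniqueDiffOn_Ici R₀ R₀ self_mem_Ici)).symm
    · exfalso
      have h1 : deriv h R₀ = 0 := deriv_zero_of_not_differentiableAt hdiff
      have h2 : DifferentiableAt ℝ (deriv h) R₀ := by
        by_contra h2
        have h3 : deriv (deriv h) R₀ = 0 := deriv_zero_of_not_differentiableAt h2
        have h4 := hode R₀ self_mem_Ici
        rw [h1, h3] at h4
        have := hhpos R₀ self_mem_Ici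
        nlinarith
      have h5 : Tendsto (deriv h) (nhdsWithin R₀ (Ioi R₀)) (𝓝 (deriv h R₀)) :=
        h2.continuousAt.tendsto.mono_left nhdsWithin_le_nhds
      have h6 : deriv h R₀ = derivWithin h (Ici R₀) R₀ := tendsto_nhds_unique h5 hdlim
      rw [h1] at h6
      rw [← h6, mul_zero] at huniq
      nlinarith
  -- conclusion
  intro r hr
  have hIr : IntegrableOn (fun t => g t ^ (k + 1) * h t) (Ici r) :=
    hφint.mono_set (Ici_subset_Ici.mpr hr)
  refine ⟨hIr, ?_⟩
  rw [integral_Ici_eq_integral_Ioi]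
  rcases eq_or_lt_of_le (mem_Ici.mp hr) with heq | hlt
  · subst heq
    rw [hbound]
    linarith
  · exact hmain r hlt
end

section
/- Let m ≥ 2 be an integer, R₀ > 0 and λ > 0 real numbers, and g : [R₀, ∞) → ℝ a continuously differentiable function with g(r) > 0 for all r ≥ R₀, such that ∫_{R₀}^∞ g(t)^{1-m} dt = +∞ and ∫_{R₀}^∞ g(t)^{m-1} dt = +∞ (i.e. neither 1/g^{m-1} nor g^{m-1} is integrable at infinity). Let h : [R₀, ∞) → ℝ be a bounded, twice continuously differentiable function with h(r) > 0 for all r ≥ R₀ and h''(r) + (m-1)·(g'(r)/g(r))·h'(r) = λ·h(r) for all r ≥ R₀. Then h(r) → 0 as r → +∞. -/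
open Set MeasureTheory Filter

lemma aux_integrableOn_Ici (R₀ r₁ B : ℝ) (hr : R₀ ≤ r₁) (f : ℝ → ℝ)
    (hc : ContinuousOn f (Set.Ici R₀)) (hf0 : ∀ t ∈ Set.Ici R₀, 0 ≤ f t)
    (hB : ∀ x, r₁ ≤ x → (∫ t in r₁..x, f t) ≤ B) :
    MeasureTheory.IntegrableOn f (Set.Ici R₀) := by
  have h1 : IntegrableOn f (Icc R₀ r₁) :=
    (hc.mono Icc_subset_Ici_self).integrableOn_Icc
  have h2 : IntegrableOn f (Ioi r₁) := by
    refine integrableOn_Ioi_of_intervalIntegral_norm_bounded (f := f) (μ := volume)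
      (l := atTop) (b := id) B r₁ (fun i => ?_) tendsto_id ?_
    · have hsub : Icc r₁ i ⊆ Ici R₀ := fun x hx => le_trans hr hx.1
      exact ((hc.mono hsub).integrableOn_Icc).mono_set Ioc_subset_Icc_self
    · filter_upwards [eventually_ge_atTop r₁] with i hi
      have heq : (∫ x in r₁..(id i), ‖f x‖) = ∫ x in r₁..i, f x := by
        apply intervalIntegral.integral_congr
        intro x hx
        simp only [id_eq, Set.uIcc_of_le hi] at hx
        exact Real.norm_of_nonneg (hf0 x (le_trans hr hx.1))
      rw [heq]
      exact hB i hi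
  have hsub : Set.Ici R₀ ⊆ Icc R₀ r₁ ∪ Ioi r₁ := by
    intro x hx
    rcases le_or_gt x r₁ with hxr | hxr
    · exact Or.inl ⟨hx, hxr⟩
    · exact Or.inr hxr
  exact (h1.union h2).mono_set hsub


/-- if neither `1/g^{m-1}` nor `g^{m-1}` is integrable at infinity,
then every bounded positive solution of `h'' + (m-1)(g'/g)h' = λ h` on `[R₀,∞)`
tends to `0` at infinity. -/
theorem stmt_5 (m : ℕ) (hm : 2 ≤ m) (R₀ lam : ℝ) (hR₀ : 0 < R₀) (hlam : 0 < lam)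
    (g h : ℝ → ℝ)
    (hg : ContDiffOn ℝ 1 g (Set.Ici R₀))
    (hgpos : ∀ r ∈ Set.Ici R₀, 0 < g r)
    (hgint : ¬ MeasureTheory.IntegrableOn (fun t => (g t ^ (m - 1))⁻¹) (Set.Ici R₀))
    (hgint' : ¬ MeasureTheory.IntegrableOn (fun t => g t ^ (m - 1)) (Set.Ici R₀))
    (hbdd : ∃ C : ℝ, ∀ r ∈ Set.Ici R₀, h r ≤ C)
    (hh : ContDiffOn ℝ 2 h (Set.Ici R₀))
    (hhpos : ∀ r ∈ Set.Ici R₀, 0 < h r)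
    (hode : ∀ r ∈ Set.Ici R₀,
      deriv (deriv h) r + ((m : ℝ) - 1) * (deriv g r / g r) * deriv h r = lam * h r) :
    Filter.Tendsto h Filter.atTop (nhds 0) := by
  obtain ⟨C, hC⟩ := hbdd
  set P : ℝ → ℝ := fun t => g t ^ (m - 1) with hP
  set F : ℝ → ℝ := fun t => P t * deriv h t with hFdef
  have hIoi : Set.Ioi R₀ ⊆ Set.Ici R₀ := Ioi_subset_Ici_self
  have hgO : ContDiffOn ℝ 1 g (Set.Ioi R₀) := hg.mono hIoi
  have hhO : ContDiffOn ℝ 2 h (Set.Ioi R₀) := hh.mono hIoi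
  have hh1 : ContDiffOn ℝ 1 (deriv h) (Set.Ioi R₀) :=
    hhO.deriv_of_isOpen isOpen_Ioi (by norm_num)
  have hdg : ∀ y ∈ Set.Ioi R₀, HasDerivAt g (deriv g y) y := fun y hy =>
    ((hgO.differentiableOn (by norm_num)).differentiableAt (isOpen_Ioi.mem_nhds hy)).hasDerivAt
  have hdh : ∀ y ∈ Set.Ioi R₀, HasDerivAt h (deriv h y) y := fun y hy =>
    ((hhO.differentiableOn (by norm_num)).differentiableAt (isOpen_Ioi.mem_nhds hy)).hasDerivAt
  have hdh2 : ∀ y ∈ Set.Ioi R₀, HasDerivAt (deriv h) (deriv (deriv h) y) y := fun y hy =>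
    ((hh1.differentiableOn (by norm_num)).differentiableAt (isOpen_Ioi.mem_nhds hy)).hasDerivAt
  have hch' : ContinuousOn (deriv h) (Set.Ioi R₀) := hh1.continuousOn
  have hcP : ContinuousOn P (Set.Ici R₀) := hg.continuousOn.pow (m - 1)
  have hPpos : ∀ t ∈ Set.Ici R₀, 0 < P t := fun t ht => pow_pos (hgpos t ht) (m - 1)
  have hcF : ContinuousOn F (Set.Ioi R₀) := ((hcP.mono hIoi).mul hch')
  -- derivative of F
  have hF : ∀ y ∈ Set.Ioi R₀, HasDerivAt F (lam * (P y * h y)) y := by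
    intro y hy
    have hy' : y ∈ Set.Ici R₀ := hIoi hy
    have d1 : HasDerivAt F
        ((↑(m - 1) * g y ^ (m - 1 - 1) * deriv g y) * deriv h y
          + P y * deriv (deriv h) y) y :=
      (((hdg y hy).pow (m - 1)).mul (hdh2 y hy))
    have hode' : deriv (deriv h) y
        = lam * h y - ((m : ℝ) - 1) * (deriv g y / g y) * deriv h y := by
      have := hode y hy'
      linarith
    have hgne : g y ≠ 0 := (hgpos y hy').ne'
    have hcast : ((m - 1 : ℕ) : ℝ) = (m : ℝ) - 1 := by
      have : (1 : ℕ) ≤ m := by omega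
      push_cast [Nat.cast_sub this]
      ring
    have hpow : g y ^ (m - 1) = g y ^ (m - 1 - 1) * g y := by
      rw [← pow_succ]
      congr 1
      omega
    convert d1 using 1
    rw [hode', hcast]
    simp only [hP, hpow]
    field_simp
    ring
  -- F is strictly monotone on Ioi R₀
  have hFmono : StrictMonoOn F (Set.Ioi R₀) := by
    apply strictMonoOn_of_deriv_pos (convex_Ioi R₀) hcF
    intro x hx
    rw [interior_Ioi] at hx
    rw [(hF x hx).deriv]
    exact mul_pos hlam (mul_pos (hPpos x (hIoi hx)) (hhpos x (hIoi hx)))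
  -- FTC helper: for R₀ < a ≤ b, with u having derivative u' on Ioi R₀ and u' continuous...
  -- Claim A : F ≤ 0 on Ioi R₀
  have hFneg : ∀ r ∈ Set.Ioi R₀, F r ≤ 0 := by
    by_contra hcon
    push_neg at hcon
    obtain ⟨r₁, hr₁, hFr₁⟩ := hcon
    have hr₁' : r₁ ∈ Set.Ici R₀ := hIoi hr₁
    -- bound on ∫ 1/P
    have key : ∀ x, r₁ ≤ x → (∫ t in r₁..x, (g t ^ (m - 1))⁻¹) ≤ (C - h r₁) / F r₁ := by
      intro x hx
      have hIcc : Set.Icc r₁ x ⊆ Set.Ioi R₀ := fun t ht => lt_of_lt_of_le hr₁ ht.1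
      have hIcc' : Set.Icc r₁ x ⊆ Set.Ici R₀ := hIcc.trans hIoi
      have huIcc : Set.uIcc r₁ x = Set.Icc r₁ x := Set.uIcc_of_le hx
      have hint1 : IntervalIntegrable (deriv h) volume r₁ x := by
        apply ContinuousOn.intervalIntegrable
        rw [huIcc]; exact hch'.mono hIcc
      have hint2 : IntervalIntegrable (fun t => F r₁ * (g t ^ (m - 1))⁻¹) volume r₁ x := by
        apply ContinuousOn.intervalIntegrable
        rw [huIcc]
        exact continuousOn_const.mul
          (((hcP.mono hIcc').inv₀ (fun t ht => (hPpos t (hIcc' ht)).ne')))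
      have hftc : (∫ t in r₁..x, deriv h t) = h x - h r₁ := by
        apply intervalIntegral.integral_eq_sub_of_hasDerivAt
        · intro t ht
          rw [huIcc] at ht
          exact hdh t (hIcc ht)
        · exact hint1
      have hcomp : (∫ t in r₁..x, F r₁ * (g t ^ (m - 1))⁻¹) ≤ ∫ t in r₁..x, deriv h t := by
        apply intervalIntegral.integral_mono_on hx hint2 hint1
        intro t ht
        have htO : t ∈ Set.Ioi R₀ := hIcc ht
        have hFt : F r₁ ≤ F t := by
          rcases eq_or_lt_of_le ht.1 with heq | hlt
          · rw [heq]
          · exact (hFmono hr₁ htO hlt).le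
        have hPt : 0 < P t := hPpos t (hIoi htO)
        have : F r₁ * (g t ^ (m - 1))⁻¹ ≤ F t * (g t ^ (m - 1))⁻¹ :=
          mul_le_mul_of_nonneg_right hFt (inv_nonneg.mpr hPt.le)
        calc F r₁ * (g t ^ (m - 1))⁻¹ ≤ F t * (g t ^ (m - 1))⁻¹ := this
          _ = deriv h t := by
            simp only [hFdef, hP]
            field_simp
            exact mul_div_cancel_left₀ _ hPt.ne'
      rw [intervalIntegral.integral_const_mul, hftc] at hcomp
      have hhx : h x ≤ C := hC x (le_trans hr₁' hx)
      rw [le_div_iff₀ hFr₁]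
      nlinarith [hcomp, hhx]
    exact hgint (aux_integrableOn_Ici R₀ r₁ ((C - h r₁) / F r₁) hr₁'
      (fun t => (g t ^ (m - 1))⁻¹)
      ((hg.continuousOn.pow (m - 1)).inv₀ (fun t ht => (hPpos t ht).ne'))
      (fun t ht => (inv_nonneg.mpr (hPpos t ht).le)) key)
  -- h is antitone on Ici R₀
  have hanti : AntitoneOn h (Set.Ici R₀) := by
    apply antitoneOn_of_deriv_nonpos (convex_Ici R₀) hh.continuousOn
    · intro x hx
      rw [interior_Ici] at hx
      exact ((hhO.differentiableOn (by norm_num)).differentiableAt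
        (isOpen_Ioi.mem_nhds hx)).differentiableWithinAt
    · intro x hx
      rw [interior_Ici] at hx
      have hFx : P x * deriv h x ≤ 0 := hFneg x hx
      have hPx := hPpos x (hIoi hx)
      by_contra hpos
      push_neg at hpos
      nlinarith [mul_pos hPx hpos]
  -- the limit
  set k : ℝ → ℝ := fun x => h (max x R₀) with hk
  have hk_anti : Antitone k := fun x y hxy =>
    hanti (le_max_right x R₀) (le_max_right y R₀) (max_le_max hxy le_rfl)
  have hk_bdd : BddBelow (Set.range k) := by
    refine ⟨0, ?_⟩
    rintro _ ⟨x, rfl⟩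
    exact (hhpos _ (le_max_right x R₀)).le
  have htendk : Tendsto k atTop (nhds (⨅ x, k x)) := tendsto_atTop_ciInf hk_anti hk_bdd
  have heq : h =ᶠ[atTop] k := by
    filter_upwards [eventually_ge_atTop R₀] with x hx
    simp [hk, max_eq_left hx]
  set L := ⨅ x, k x with hL
  have htendh : Tendsto h atTop (nhds L) := htendk.congr' heq.symm
  have hL0 : 0 ≤ L := le_ciInf (fun x => (hhpos _ (le_max_right x R₀)).le)
  rcases eq_or_lt_of_le hL0 with hL0' | hLpos
  · rwa [← hL0'] at htendh
  · -- get a contradiction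
    exfalso
    have hLle : ∀ x ∈ Set.Ici R₀, L ≤ h x := by
      intro x hx
      calc L ≤ k x := ciInf_le hk_bdd x
        _ = h x := congrArg h (max_eq_left hx)
    set r₁ := R₀ + 1 with hr₁def
    have hr₁ : r₁ ∈ Set.Ioi R₀ := by simp [hr₁def]
    have hr₁' : r₁ ∈ Set.Ici R₀ := hIoi hr₁
    have key : ∀ x, r₁ ≤ x → (∫ t in r₁..x, g t ^ (m - 1)) ≤ (-F r₁) / (lam * L) := by
      intro x hx
      have hIcc : Set.Icc r₁ x ⊆ Set.Ioi R₀ := fun t ht => lt_of_lt_of_le hr₁ ht.1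
      have hIcc' : Set.Icc r₁ x ⊆ Set.Ici R₀ := hIcc.trans hIoi
      have huIcc : Set.uIcc r₁ x = Set.Icc r₁ x := Set.uIcc_of_le hx
      have hint1 : IntervalIntegrable (fun t => lam * (P t * h t)) volume r₁ x := by
        apply ContinuousOn.intervalIntegrable
        rw [huIcc]
        exact continuousOn_const.mul
          ((hcP.mono hIcc').mul (hh.continuousOn.mono hIcc'))
      have hint2 : IntervalIntegrable (fun t => lam * L * g t ^ (m - 1)) volume r₁ x := by
        apply ContinuousOn.intervalIntegrable
        rw [huIcc]
        exact continuousOn_const.mul (hcP.mono hIcc')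
      have hftc : (∫ t in r₁..x, lam * (P t * h t)) = F x - F r₁ := by
        apply intervalIntegral.integral_eq_sub_of_hasDerivAt
        · intro t ht
          rw [huIcc] at ht
          exact hF t (hIcc ht)
        · exact hint1
      have hcomp : (∫ t in r₁..x, lam * L * g t ^ (m - 1))
          ≤ ∫ t in r₁..x, lam * (P t * h t) := by
        apply intervalIntegral.integral_mono_on hx hint2 hint1
        intro t ht
        have htI : t ∈ Set.Ici R₀ := hIcc' ht
        have h1 : lam * L * g t ^ (m - 1) = lam * (P t * L) := by ring
        rw [h1]
        exact mul_le_mul_of_nonneg_left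
          (mul_le_mul_of_nonneg_left (hLle t htI) (hPpos t htI).le) hlam.le
      rw [intervalIntegral.integral_const_mul, hftc] at hcomp
      have hFx : F x ≤ 0 := hFneg x (lt_of_lt_of_le hr₁ hx)
      rw [le_div_iff₀ (mul_pos hlam hLpos)]
      nlinarith [hcomp, hFx]
    exact hgint' (aux_integrableOn_Ici R₀ r₁ ((-F r₁) / (lam * L)) hr₁'
      (fun t => g t ^ (m - 1)) hcP
      (fun t ht => (hPpos t ht).le) key)
end

section
/- Let m ≥ 2 be an integer, R₀ > 0 and λ > 0 real numbers, and g : [R₀, ∞) → ℝ a continuously differentiable function with g(r) > 0 for all r ≥ R₀. Assume that ∫_{R₀}^∞ g(t)^{1-m} dt = +∞, that g^{m-1} is Lebesgue integrable on [R₀, ∞), and that ∫_{R₀}^∞ (∫_r^∞ g(t)^{m-1} dt) / g(r)^{m-1} dr = +∞. Let h : [R₀, ∞) → ℝ be a bounded, twice continuously differentiable function with h(r) > 0 for all r ≥ R₀ and h''(r) + (m-1)·(g'(r)/g(r))·h'(r) = λ·h(r) for all r ≥ R₀. Then h(r) → 0 as r → +∞. -/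
open Set MeasureTheory Filter

set_option maxHeartbeats 1000000 in
/-- if `1/g^{m-1}` is not integrable at infinity, `g^{m-1}` is
integrable, and `r ↦ (∫_r^∞ g^{m-1})/g(r)^{m-1}` is not integrable at infinity,
then every bounded positive solution of `h'' + (m-1)(g'/g)h' = λ h` tends to `0`. -/
theorem stmt_6 (m : ℕ) (hm : 2 ≤ m) (R₀ lam : ℝ) (hR₀ : 0 < R₀) (hlam : 0 < lam)
    (g h : ℝ → ℝ)
    (hg : ContDiffOn ℝ 1 g (Set.Ici R₀))
    (hgpos : ∀ r ∈ Set.Ici R₀, 0 < g r)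
    (hgint : ¬ MeasureTheory.IntegrableOn (fun t => (g t ^ (m - 1))⁻¹) (Set.Ici R₀))
    (hgint' : MeasureTheory.IntegrableOn (fun t => g t ^ (m - 1)) (Set.Ici R₀))
    (hratio : ¬ MeasureTheory.IntegrableOn
      (fun r => (∫ t in Set.Ici r, g t ^ (m - 1)) / g r ^ (m - 1)) (Set.Ici R₀))
    (hbdd : ∃ C : ℝ, ∀ r ∈ Set.Ici R₀, h r ≤ C)
    (hh : ContDiffOn ℝ 2 h (Set.Ici R₀))
    (hhpos : ∀ r ∈ Set.Ici R₀, 0 < h r)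
    (hode : ∀ r ∈ Set.Ici R₀,
      deriv (deriv h) r + ((m : ℝ) - 1) * (deriv g r / g r) * deriv h r = lam * h r) :
    Filter.Tendsto h Filter.atTop (nhds 0) := by
  obtain ⟨C, hC⟩ := hbdd
  set n := m - 1 with hn_def
  have hn1 : 1 ≤ n := by omega
  have hmn : (m : ℝ) - 1 = (n : ℝ) := by
    have : m = n + 1 := by omega
    rw [this]; push_cast; ring
  have hGpos : ∀ r ∈ Ici R₀, (0:ℝ) < g r ^ n := fun r hr => pow_pos (hgpos r hr) n
  have hgC : ContinuousOn g (Ici R₀) := hg.continuousOn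
  have hGC : ContinuousOn (fun t => g t ^ n) (Ici R₀) := hgC.pow n
  have huD : UniqueDiffOn ℝ (Ici R₀) := uniqueDiffOn_Ici R₀
  have hdh_eq : ∀ r ∈ Ioi R₀, derivWithin h (Ici R₀) r = deriv h r := fun r hr =>
    derivWithin_of_mem_nhds (Ici_mem_nhds hr)
  have hh1 : ContDiffOn ℝ 1 (derivWithin h (Ici R₀)) (Ici R₀) :=
    hh.derivWithin huD (by norm_num)
  have hdhC : ContinuousOn (deriv h) (Ioi R₀) :=
    (hh1.continuousOn.mono Ioi_subset_Ici_self).congr (fun r hr => (hdh_eq r hr).symm)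
  have hdiff_h : ∀ r ∈ Ioi R₀, HasDerivAt h (deriv h r) r := fun r hr =>
    (((hh.differentiableOn (by norm_num)) r (mem_Ici.mpr (mem_Ioi.mp hr).le)).differentiableAt
      (Ici_mem_nhds hr)).hasDerivAt
  have hdiff_dh : ∀ r ∈ Ioi R₀, HasDerivAt (deriv h) (deriv (deriv h) r) r := by
    intro r hr
    have d1 : DifferentiableAt ℝ (derivWithin h (Ici R₀)) r :=
      ((hh1.differentiableOn (by norm_num)) r (mem_Ici.mpr (mem_Ioi.mp hr).le)).differentiableAt (Ici_mem_nhds hr)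
    have heq : deriv h =ᶠ[nhds r] derivWithin h (Ici R₀) := by
      filter_upwards [Ioi_mem_nhds hr] with x hx using (hdh_eq x hx).symm
    have := d1.hasDerivAt.congr_of_eventuallyEq heq
    rwa [heq.deriv_eq]
  have hdiff_g : ∀ r ∈ Ioi R₀, HasDerivAt g (deriv g r) r := fun r hr =>
    (((hg.differentiableOn (by norm_num)) r (mem_Ici.mpr (mem_Ioi.mp hr).le)).differentiableAt
      (Ici_mem_nhds hr)).hasDerivAt
  -- derivative of u = g^n * h'
  have hu' : ∀ r ∈ Ioi R₀, HasDerivAt (fun x => g x ^ n * deriv h x)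
      (lam * (g r ^ n * h r)) r := by
    intro r hr
    have hGd : HasDerivAt (fun x => g x ^ n) ((n:ℝ) * g r ^ (n - 1) * deriv g r) r :=
      (hdiff_g r hr).pow n
    have H := hGd.mul (hdiff_dh r hr)
    have hode' := hode r (mem_Ici.mpr (mem_Ioi.mp hr).le)
    have hgne : g r ≠ 0 := (hgpos r (mem_Ici.mpr (mem_Ioi.mp hr).le)).ne'
    have hdd : deriv (deriv h) r = lam * h r - (n:ℝ) * (deriv g r / g r) * deriv h r := by
      rw [← hmn]; linarith [hode']
    refine H.congr_deriv ?_
    rw [hdd]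
    obtain ⟨k, hk⟩ : ∃ k, n = k + 1 := ⟨n - 1, by omega⟩
    rw [hk]
    simp only [Nat.add_sub_cancel]
    push_cast
    field_simp
    ring
  -- FTC helpers
  have hGinvC : ContinuousOn (fun x => (g x ^ n)⁻¹) (Ici R₀) :=
    hGC.inv₀ (fun x hx => (hGpos x hx).ne')
  have hcont_u' : ContinuousOn (fun x => lam * (g x ^ n * h x)) (Ici R₀) :=
    continuousOn_const.mul (hGC.mul hh.continuousOn)
  have hFTC_u : ∀ a b : ℝ, R₀ < a → a ≤ b →
      g b ^ n * deriv h b - g a ^ n * deriv h a = ∫ x in a..b, lam * (g x ^ n * h x) := by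
    intro a b ha hab
    refine (intervalIntegral.integral_eq_sub_of_hasDerivAt
      (f := fun x => g x ^ n * deriv h x) ?_ ?_).symm
    · intro x hx
      rw [uIcc_of_le hab] at hx
      exact hu' x (lt_of_lt_of_le ha hx.1)
    · apply ContinuousOn.intervalIntegrable
      apply hcont_u'.mono
      rw [uIcc_of_le hab]
      exact fun x hx => le_trans ha.le hx.1
  have hFTC_h : ∀ a b : ℝ, R₀ < a → a ≤ b → h b - h a = ∫ x in a..b, deriv h x := by
    intro a b ha hab
    refine (intervalIntegral.integral_eq_sub_of_hasDerivAt ?_ ?_).symm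
    · intro x hx; rw [uIcc_of_le hab] at hx; exact hdiff_h x (lt_of_lt_of_le ha hx.1)
    · apply ContinuousOn.intervalIntegrable
      apply hdhC.mono
      rw [uIcc_of_le hab]
      exact fun x hx => lt_of_lt_of_le ha hx.1
  have hu_mono : ∀ a b : ℝ, R₀ < a → a ≤ b →
      g a ^ n * deriv h a ≤ g b ^ n * deriv h b := by
    intro a b ha hab
    have hFT := hFTC_u a b ha hab
    have hpos : 0 ≤ ∫ x in a..b, lam * (g x ^ n * h x) := by
      apply intervalIntegral.integral_nonneg hab
      intro x hx
      have hx' : R₀ ≤ x := le_trans ha.le hx.1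
      exact mul_nonneg hlam.le (mul_nonneg (hGpos x hx').le (hhpos x hx').le)
    linarith
  -- Step A : u ≤ 0 everywhere
  have uNonpos : ∀ r ∈ Ioi R₀, g r ^ n * deriv h r ≤ 0 := by
    by_contra hcon
    push_neg at hcon
    obtain ⟨r₁, hr₁, hK⟩ := hcon
    have hr₁' : R₀ < r₁ := hr₁
    set K := g r₁ ^ n * deriv h r₁ with hKdef
    have hbound : ∀ b : ℝ, r₁ ≤ b → (∫ x in r₁..b, ‖(g x ^ n)⁻¹‖) ≤ (C - h r₁) / K := by
      intro b hb
      have h1 : (∫ x in r₁..b, ‖(g x ^ n)⁻¹‖) = ∫ x in r₁..b, (g x ^ n)⁻¹ := by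
        apply intervalIntegral.integral_congr
        intro x hx
        rw [uIcc_of_le hb] at hx
        have hxp : 0 < g x ^ n := hGpos x (le_trans hr₁'.le hx.1)
        simp only [Real.norm_eq_abs]
        rw [abs_of_pos (inv_pos.mpr hxp)]
      rw [h1]
      have h2 : (∫ x in r₁..b, (g x ^ n)⁻¹) ≤ ∫ x in r₁..b, deriv h x / K := by
        apply intervalIntegral.integral_mono_on hb
        · apply ContinuousOn.intervalIntegrable
          apply hGinvC.mono
          rw [uIcc_of_le hb]
          exact fun x hx => le_trans hr₁'.le hx.1
        · apply ContinuousOn.intervalIntegrable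
          have hcd : ContinuousOn (deriv h) (uIcc r₁ b) := by
            apply hdhC.mono
            rw [uIcc_of_le hb]
            exact fun x hx => lt_of_lt_of_le hr₁' hx.1
          exact hcd.div_const K
        · intro x hx
          have hxR : R₀ < x := lt_of_lt_of_le hr₁' hx.1
          have hux := hu_mono r₁ x hr₁' hx.1
          rw [inv_eq_one_div, div_le_div_iff₀ (hGpos x hxR.le) hK]
          nlinarith
      have h3 : (∫ x in r₁..b, deriv h x / K) = (h b - h r₁) / K := by
        rw [intervalIntegral.integral_div, ← hFTC_h r₁ b hr₁' hb]
      rw [h3] at h2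
      refine le_trans h2 ?_
      have : h b - h r₁ ≤ C - h r₁ := by
        have := hC b (le_trans hr₁'.le hb)
        linarith
      gcongr
    have hint : IntegrableOn (fun x => (g x ^ n)⁻¹) (Ioi r₁) := by
      apply integrableOn_Ioi_of_intervalIntegral_norm_bounded ((C - h r₁) / K) r₁
        (b := fun i : ℝ => i) (l := atTop) ?_ tendsto_id ?_
      · intro i
        apply IntegrableOn.mono_set (t := Icc r₁ (max r₁ i))
        · apply ContinuousOn.integrableOn_Icc
          apply hGinvC.mono
          exact fun x hx => le_trans hr₁'.le hx.1
        · exact fun x hx => ⟨hx.1.le, le_trans hx.2 (le_max_right _ _)⟩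
      · filter_upwards [eventually_ge_atTop r₁] with i hi using hbound i hi
    have hint2 : IntegrableOn (fun x => (g x ^ n)⁻¹) (Icc R₀ r₁) := by
      apply ContinuousOn.integrableOn_Icc
      exact hGinvC.mono Icc_subset_Ici_self
    apply hgint
    apply (hint2.union hint).mono_set
    intro x hx
    rcases le_or_gt x r₁ with hxr | hxr
    · exact Or.inl ⟨hx, hxr⟩
    · exact Or.inr hxr
  -- Step B : h is antitone
  have hderiv_nonpos : ∀ r ∈ Ioi R₀, deriv h r ≤ 0 := by
    intro r hr
    have h1 := uNonpos r hr
    have h2 := hGpos r (mem_Ici.mpr (mem_Ioi.mp hr).le)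
    by_contra hcon
    push_neg at hcon
    nlinarith
  have hAnti : AntitoneOn h (Ioi R₀) := by
    apply antitoneOn_of_deriv_nonpos (convex_Ioi R₀)
    · exact hh.continuousOn.mono Ioi_subset_Ici_self
    · rw [interior_Ioi]
      exact fun x hx => (hdiff_h x hx).differentiableAt.differentiableWithinAt
    · rw [interior_Ioi]; exact hderiv_nonpos
  -- Step C : values of h get arbitrarily small
  have hsmall : ∀ ε : ℝ, 0 < ε → ∃ r₂ ∈ Ioi R₀, h r₂ < ε := by
    intro ε hε
    by_contra hcon
    push_neg at hcon
    have hle : 0 < lam * ε := mul_pos hlam hε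
    set R₁ := R₀ + 1 with hR₁def
    have hR₁ : R₀ < R₁ := by linarith
    set Gi : ℝ → ℝ := fun r => ∫ t in Ioi (max r R₀), g t ^ n with hGidef
    have hGint_sub : ∀ r : ℝ, IntegrableOn (fun t => g t ^ n) (Ioi (max r R₀)) :=
      fun r => hgint'.mono_set (fun x hx => mem_Ici.mpr (le_trans (le_max_right _ _) (mem_Ioi.mp hx).le))
    have hGi_anti : Antitone Gi := by
      intro a b hab
      apply setIntegral_mono_set (hGint_sub a)
      · filter_upwards [ae_restrict_mem measurableSet_Ioi] with t ht
        exact pow_nonneg (hgpos t (mem_Ici.mpr (le_trans (le_max_right _ _) (mem_Ioi.mp ht).le))).le n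
      · exact (Ioi_subset_Ioi (max_le_max hab le_rfl)).eventuallyLE
    have hGi_meas : Measurable Gi := hGi_anti.measurable
    have hGi_eq : ∀ r, R₀ ≤ r → Gi r = ∫ t in Ici r, g t ^ n := by
      intro r hr
      rw [integral_Ici_eq_integral_Ioi, hGidef]
      simp only [max_eq_left hr]
    have hGi_nonneg : ∀ r, 0 ≤ Gi r := by
      intro r
      apply setIntegral_nonneg measurableSet_Ioi
      exact fun t ht => pow_nonneg (hgpos t (mem_Ici.mpr (le_trans (le_max_right _ _) (mem_Ioi.mp ht).le))).le n
    have hkey : ∀ r ∈ Ioi R₀, g r ^ n * deriv h r ≤ -(lam * ε) * Gi r := by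
      intro r (hr : R₀ < r)
      have hstep : ∀ s : ℝ, r ≤ s →
          (∫ x in r..s, g x ^ n) ≤ (-(g r ^ n * deriv h r)) / (lam * ε) := by
        intro s hs
        have hFT := hFTC_u r s hr hs
        have hmono : lam * ε * ∫ x in r..s, g x ^ n ≤ ∫ x in r..s, lam * (g x ^ n * h x) := by
          rw [← intervalIntegral.integral_const_mul]
          apply intervalIntegral.integral_mono_on hs
          · apply ContinuousOn.intervalIntegrable
            apply continuousOn_const.mul (hGC.mono ?_)
            rw [uIcc_of_le hs]
            exact fun x hx => le_trans (le_of_lt hr) hx.1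
          · apply ContinuousOn.intervalIntegrable
            apply hcont_u'.mono
            rw [uIcc_of_le hs]
            exact fun x hx => le_trans (le_of_lt hr) hx.1
          · intro x hx
            have hx' : R₀ ≤ x := le_trans (le_of_lt hr) hx.1
            have hhx := hcon x (lt_of_lt_of_le hr hx.1)
            have hGx := (hGpos x hx').le
            nlinarith [mul_nonneg (mul_nonneg hlam.le hGx) (sub_nonneg.mpr hhx)]
        have hus : g s ^ n * deriv h s ≤ 0 := uNonpos s (lt_of_lt_of_le hr hs)
        rw [le_div_iff₀ hle]
        nlinarith
      have hlim := intervalIntegral_tendsto_integral_Ioi r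
        (hgint'.mono_set (fun x (hx : r < x) => mem_Ici.mpr (le_trans (le_of_lt hr) hx.le))) tendsto_id
      have hle2 : (∫ t in Ioi r, g t ^ n) ≤ (-(g r ^ n * deriv h r)) / (lam * ε) :=
        le_of_tendsto hlim (by filter_upwards [eventually_ge_atTop r] with s hs using hstep s hs)
      have hGir : Gi r = ∫ t in Ioi r, g t ^ n := by
        rw [hGidef]; simp only [max_eq_left (le_of_lt hr)]
      rw [← hGir, le_div_iff₀ hle] at hle2
      nlinarith
    -- the ratio function
    obtain ⟨F, hFdef⟩ : ∃ F : ℝ → ℝ, F = fun r => (∫ t in Ici r, g t ^ n) / g r ^ n :=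
      ⟨_, rfl⟩
    have hFeq : ∀ r, R₀ ≤ r → F r = Gi r / g r ^ n := by
      intro r hr
      simp only [hFdef]
      rw [hGi_eq r hr]
    have hFicc : ∀ a b : ℝ, R₀ ≤ a → IntegrableOn F (Icc a b) := by
      intro a b ha
      rcases le_or_gt a b with hab | hab
      swap
      · rw [Icc_eq_empty (not_le.mpr hab)]; exact integrableOn_empty
      have hIcc_sub : Icc a b ⊆ Ici R₀ := fun x hx => le_trans ha hx.1
      obtain ⟨Mx, hMx⟩ := isCompact_Icc.exists_bound_of_continuousOn
        (hGinvC.mono hIcc_sub)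
      have hmeas : AEStronglyMeasurable F (volume.restrict (Icc a b)) := by
        have h1 : AEMeasurable (fun r => Gi r / g r ^ n) (volume.restrict (Icc a b)) :=
          hGi_meas.aemeasurable.div
            (((hgC.mono hIcc_sub).aemeasurable measurableSet_Icc).pow_const n)
        refine (h1.congr ?_).aestronglyMeasurable
        filter_upwards [ae_restrict_mem measurableSet_Icc] with x hx
        exact (hFeq x (le_trans ha hx.1)).symm
      have hconst : Integrable (fun _ : ℝ => Gi R₀ * Mx) (volume.restrict (Icc a b)) :=
        integrable_const _
      apply Integrable.mono' hconst hmeas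
      filter_upwards [ae_restrict_mem measurableSet_Icc] with x hx
      have hx' : R₀ ≤ x := le_trans ha hx.1
      have h0 : 0 ≤ F x := by
        rw [hFeq x hx']
        exact div_nonneg (hGi_nonneg x) (hGpos x hx').le
      rw [Real.norm_eq_abs, abs_of_nonneg h0, hFeq x hx', div_eq_mul_inv]
      have hM1 : (g x ^ n)⁻¹ ≤ Mx := le_trans (le_abs_self _) (hMx x hx)
      have hM0 : (0:ℝ) ≤ (g x ^ n)⁻¹ := (inv_pos.mpr (hGpos x hx')).le
      have hG1 : Gi x ≤ Gi R₀ := hGi_anti hx'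
      nlinarith [hGi_nonneg x]
    have hFbound : ∀ i : ℝ, R₁ ≤ i → (∫ x in R₁..i, ‖F x‖) ≤ h R₁ / (lam * ε) := by
      intro i hi
      have h1 : (∫ x in R₁..i, ‖F x‖) = ∫ x in R₁..i, F x := by
        apply intervalIntegral.integral_congr
        intro x hx
        rw [uIcc_of_le hi] at hx
        have hx' : R₀ ≤ x := le_trans hR₁.le hx.1
        have h0 : 0 ≤ F x := by
          rw [hFeq x hx']
          exact div_nonneg (hGi_nonneg x) (hGpos x hx').le
        simp only [Real.norm_eq_abs]
        rw [abs_of_nonneg h0]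
      rw [h1]
      have h2 : (∫ x in R₁..i, F x) ≤ ∫ x in R₁..i, (-(deriv h x)) / (lam * ε) := by
        apply intervalIntegral.integral_mono_on hi
        · exact ((uIcc_of_le hi).symm ▸ hFicc R₁ i hR₁.le).intervalIntegrable
        · apply ContinuousOn.intervalIntegrable
          have hcd : ContinuousOn (deriv h) (uIcc R₁ i) := by
            apply hdhC.mono
            rw [uIcc_of_le hi]
            exact fun x hx => lt_of_lt_of_le hR₁ hx.1
          exact hcd.neg.div_const _
        · intro x hx
          have hx' : R₀ < x := lt_of_lt_of_le hR₁ hx.1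
          have hk := hkey x hx'
          rw [hFeq x hx'.le, div_le_div_iff₀ (hGpos x hx'.le) hle]
          nlinarith
      have h3 : (∫ x in R₁..i, (-(deriv h x)) / (lam * ε)) = (h R₁ - h i) / (lam * ε) := by
        rw [intervalIntegral.integral_div, intervalIntegral.integral_neg, ← hFTC_h R₁ i hR₁ hi]
        ring
      rw [h3] at h2
      refine le_trans h2 ?_
      have hhi : 0 < h i := hhpos i (le_trans hR₁.le hi)
      gcongr
      linarith
    have hint : IntegrableOn F (Ioi R₁) := by
      apply integrableOn_Ioi_of_intervalIntegral_norm_bounded (h R₁ / (lam * ε)) R₁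
        (b := fun i : ℝ => i) (l := atTop) ?_ tendsto_id ?_
      · intro i
        exact (hFicc R₁ (max R₁ i) hR₁.le).mono_set
          (fun x hx => ⟨hx.1.le, le_trans hx.2 (le_max_right _ _)⟩)
      · filter_upwards [eventually_ge_atTop R₁] with i hi using hFbound i hi
    apply hratio
    rw [← hFdef]
    apply ((hFicc R₀ R₁ le_rfl).union hint).mono_set
    intro x hx
    rcases le_or_gt x R₁ with hxr | hxr
    · exact Or.inl ⟨hx, hxr⟩
    · exact Or.inr hxr
  rw [Metric.tendsto_atTop]
  intro ε hε
  obtain ⟨r₂, hr₂, hhr₂⟩ := hsmall ε hε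
  refine ⟨r₂, fun r hr => ?_⟩
  have hrR : r ∈ Ioi R₀ := lt_of_lt_of_le hr₂ hr
  have h1 : h r ≤ h r₂ := hAnti hr₂ hrR hr
  have h2 : 0 < h r := hhpos r (mem_Ici.mpr (mem_Ioi.mp hrR).le)
  rw [Real.dist_eq, sub_zero, abs_of_pos h2]
  linarith
end

section
/- Let m ≥ 2 be an integer, R₀ > 0 and λ > 0 real numbers, and g : [R₀, ∞) → ℝ a continuously differentiable function with g(r) > 0 for all r ≥ R₀. Assume that ∫_{R₀}^∞ g(t)^{1-m} dt = +∞ and that g^{m-1} is Lebesgue integrable on [R₀, ∞). Let h : [R₀, ∞) → ℝ be a bounded, twice continuously differentiable function with h(r) > 0 for all r ≥ R₀, h''(r) + (m-1)·(g'(r)/g(r))·h'(r) = λ·h(r) for all r ≥ R₀, and h(r) → 0 as r → +∞. Then ∫_{R₀}^∞ (∫_r^∞ g(t)^{m-1} dt) / g(r)^{m-1} dr = +∞. -/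
open Set MeasureTheory Filter

/-- converse direction: if `1/g^{m-1}` is not integrable, `g^{m-1}`
is integrable, and some bounded positive solution of `h'' + (m-1)(g'/g)h' = λ h`
tends to `0` at infinity, then `r ↦ (∫_r^∞ g^{m-1})/g(r)^{m-1}` is not integrable. -/
theorem stmt_7 (m : ℕ) (hm : 2 ≤ m) (R₀ lam : ℝ) (hR₀ : 0 < R₀) (hlam : 0 < lam)
    (g h : ℝ → ℝ)
    (hg : ContDiffOn ℝ 1 g (Set.Ici R₀))
    (hgpos : ∀ r ∈ Set.Ici R₀, 0 < g r)
    (hgint : ¬ MeasureTheory.IntegrableOn (fun t => (g t ^ (m - 1))⁻¹) (Set.Ici R₀))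
    (hgint' : MeasureTheory.IntegrableOn (fun t => g t ^ (m - 1)) (Set.Ici R₀))
    (hbdd : ∃ C : ℝ, ∀ r ∈ Set.Ici R₀, h r ≤ C)
    (hh : ContDiffOn ℝ 2 h (Set.Ici R₀))
    (hhpos : ∀ r ∈ Set.Ici R₀, 0 < h r)
    (hode : ∀ r ∈ Set.Ici R₀,
      deriv (deriv h) r + ((m : ℝ) - 1) * (deriv g r / g r) * deriv h r = lam * h r)
    (hlim : Filter.Tendsto h Filter.atTop (nhds 0)) :
    ¬ MeasureTheory.IntegrableOn
      (fun r => (∫ t in Set.Ici r, g t ^ (m - 1)) / g r ^ (m - 1)) (Set.Ici R₀) := by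
  intro hPhi
  obtain ⟨C, hC⟩ := hbdd
  set f : ℝ → ℝ := fun t => g t ^ (m - 1) with hfdef
  have hfpos : ∀ r ∈ Ici R₀, 0 < f r := fun r hr => pow_pos (hgpos r hr) _
  have hfcont : ContinuousOn f (Ici R₀) := (hg.continuousOn).pow _
  have hhcont : ContinuousOn h (Ici R₀) := hh.continuousOn
  -- continuity of deriv h on Ioi R₀
  have hh2 : ContDiffOn ℝ 2 h (Ioi R₀) := hh.mono Ioi_subset_Ici_self
  have hder1 : ContDiffOn ℝ 1 (deriv h) (Ioi R₀) := by
    have := hh2.deriv_of_isOpen isOpen_Ioi (m := 1) (by norm_num)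
    exact this
  have hdercont : ContinuousOn (deriv h) (Ioi R₀) := hder1.continuousOn
  -- basic derivative facts
  have hhd : ∀ r ∈ Ioi R₀, HasDerivAt h (deriv h r) r := by
    intro r hr
    have hmem : Ici R₀ ∈ nhds r := Ici_mem_nhds hr
    exact ((hh.contDiffAt hmem).differentiableAt two_ne_zero).hasDerivAt
  have hFd : ∀ r ∈ Ioi R₀,
      HasDerivAt (fun x => f x * deriv h x) (lam * (f r * h r)) r := by
    intro r hr
    have hr' : R₀ < r := hr
    have hmem : Ici R₀ ∈ nhds r := Ici_mem_nhds hr'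
    have hgd : HasDerivAt g (deriv g r) r :=
      ((hg.contDiffAt hmem).differentiableAt one_ne_zero).hasDerivAt
    have hfd : HasDerivAt f (↑(m - 1) * g r ^ (m - 1 - 1) * deriv g r) r := hgd.pow (m - 1)
    have hh'd : HasDerivAt (deriv h) (deriv (deriv h) r) r := by
      have hmem' : Ioi R₀ ∈ nhds r := Ioi_mem_nhds hr'
      exact ((hder1.contDiffAt hmem').differentiableAt one_ne_zero).hasDerivAt
    have hmul : HasDerivAt (fun x => f x * deriv h x)
        (↑(m - 1) * g r ^ (m - 1 - 1) * deriv g r * deriv h r + f r * deriv (deriv h) r) r :=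
      hfd.mul hh'd
    convert hmul using 1
    have hODE := hode r (le_of_lt hr')
    have hgne : g r ≠ 0 := ne_of_gt (hgpos r (le_of_lt hr'))
    have hcast : ((m - 1 : ℕ) : ℝ) = (m : ℝ) - 1 := by
      have h1 : (1 : ℕ) ≤ m := by omega
      push_cast [h1]; ring
    have hpow : f r = g r ^ (m - 1 - 1) * g r := by
      show g r ^ (m - 1) = _
      rw [← pow_succ]; congr 1; omega
    rw [hcast, hpow,
      show deriv (deriv h) r = lam * h r - ((m : ℝ) - 1) * (deriv g r / g r) * deriv h r by
        linarith [hODE]]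
    field_simp
    ring
  -- integrability of f*h on tails
  have hfh_int : ∀ a, R₀ ≤ a → IntegrableOn (fun t => f t * h t) (Ioi a) := by
    intro a ha
    have hsub : Ioi a ⊆ Ici R₀ := fun x hx => le_of_lt (lt_of_le_of_lt ha hx)
    have hfint : IntegrableOn f (Ioi a) := hgint'.mono_set hsub
    have hmeas : AEStronglyMeasurable (fun t => f t * h t) (volume.restrict (Ioi a)) :=
      (((hfcont.mono hsub).mul (hhcont.mono hsub)).aestronglyMeasurable measurableSet_Ioi)
    refine Integrable.mono (hfint.const_mul C) hmeas ?_
    filter_upwards [ae_restrict_mem measurableSet_Ioi] with x hx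
    have hx' : x ∈ Ici R₀ := hsub hx
    have h1 : 0 < h x := hhpos x hx'
    have h2 : h x ≤ C := hC x hx'
    have hf1 : 0 < f x := hfpos x hx'
    rw [Real.norm_eq_abs, Real.norm_eq_abs, abs_of_pos (mul_pos hf1 h1),
      abs_of_pos (by nlinarith : (0:ℝ) < C * f x)]
    nlinarith
  have hf_int : ∀ a, R₀ ≤ a → IntegrableOn f (Ioi a) := fun a ha =>
    hgint'.mono_set (Ioi_subset_Ici_self.trans (Ici_subset_Ici.2 ha))
  set F : ℝ → ℝ := fun r => f r * deriv h r with hFdef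
  set T : ℝ → ℝ := fun a => ∫ t in Ioi a, f t * h t with hTdef
  -- FTC for F
  have hFTC : ∀ a b : ℝ, R₀ < a → a ≤ b →
      F b - F a = lam * ∫ x in a..b, f x * h x := by
    intro a b ha hab
    have hsub : Set.uIcc a b ⊆ Ioi R₀ := by
      rw [uIcc_of_le hab]; exact fun x hx => lt_of_lt_of_le ha hx.1
    have hsub' : Set.uIcc a b ⊆ Ici R₀ := hsub.trans Ioi_subset_Ici_self
    have hint : IntervalIntegrable (fun x => lam * (f x * h x)) volume a b :=
      (continuousOn_const.mul ((hfcont.mono hsub').mul (hhcont.mono hsub'))).intervalIntegrable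
    have := intervalIntegral.integral_eq_sub_of_hasDerivAt
      (f := F) (fun x hx => hFd x (hsub hx)) hint
    rw [← intervalIntegral.integral_const_mul]
    exact this.symm
  -- F tends to a limit L at infinity
  set L : ℝ := F (R₀ + 1) + lam * T (R₀ + 1) with hLdef
  have hkey : ∀ a, R₀ < a → Tendsto F atTop (nhds (F a + lam * T a)) := by
    intro a ha
    have h1 : Tendsto (fun b => ∫ x in a..b, f x * h x) atTop (nhds (T a)) :=
      intervalIntegral_tendsto_integral_Ioi a (hfh_int a ha.le) tendsto_id
    have h2 : Tendsto (fun b => F a + lam * ∫ x in a..b, f x * h x) atTop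
        (nhds (F a + lam * T a)) := tendsto_const_nhds.add (h1.const_mul lam)
    refine h2.congr' ?_
    filter_upwards [eventually_ge_atTop a] with b hb
    have := hFTC a b ha hb; linarith
  have hFtend : Tendsto F atTop (nhds L) := hkey (R₀ + 1) (by linarith)
  have hFeq : ∀ a, R₀ < a → F a = L - lam * T a := by
    intro a ha
    have := tendsto_nhds_unique (hkey a ha) hFtend
    linarith
  -- F is monotone on Ioi R₀ and bounded by L
  have hFmono : ∀ a b : ℝ, R₀ < a → a ≤ b → F a ≤ F b := by
    intro a b ha hab
    have hftc := hFTC a b ha hab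
    have hnn : 0 ≤ ∫ x in a..b, f x * h x := by
      apply intervalIntegral.integral_nonneg hab
      intro x hx
      have hx' : x ∈ Ici R₀ := le_of_lt (lt_of_lt_of_le ha hx.1)
      exact le_of_lt (mul_pos (hfpos x hx') (hhpos x hx'))
    nlinarith
  have hFle : ∀ a, R₀ < a → F a ≤ L := by
    intro a ha
    refine ge_of_tendsto hFtend ?_
    filter_upwards [eventually_ge_atTop a] with b hb
    exact hFmono a b ha hb
  -- FTC for h
  have hhFTC : ∀ a b : ℝ, R₀ < a → a ≤ b →
      h b - h a = ∫ x in a..b, deriv h x := by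
    intro a b ha hab
    have hsub : Set.uIcc a b ⊆ Ioi R₀ := by
      rw [uIcc_of_le hab]; exact fun x hx => lt_of_lt_of_le ha hx.1
    exact (intervalIntegral.integral_eq_sub_of_hasDerivAt
      (fun x hx => hhd x (hsub hx)) ((hdercont.mono hsub).intervalIntegrable)).symm
  -- key: bounded interval integrals of 1/f give a contradiction with hgint
  have hcontra : ∀ a : ℝ, R₀ < a → ∀ I : ℝ,
      (∀ b, a ≤ b → (∫ x in a..b, (f x)⁻¹) ≤ I) → False := by
    intro a ha I hI
    have hinv_cont : ∀ s : Set ℝ, s ⊆ Ici R₀ → ContinuousOn (fun x => (f x)⁻¹) s := by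
      intro s hs
      exact ((hfcont.mono hs).inv₀ fun x hx => ne_of_gt (hfpos x (hs hx)))
    have h1 : IntegrableOn (fun x => (f x)⁻¹) (Ioi a) := by
      refine integrableOn_Ioi_of_intervalIntegral_norm_bounded (b := fun i : ℝ => i)
        (l := atTop) I a (fun i => ?_) tendsto_id ?_
      · rcases le_or_gt i a with hia | hai
        · rw [Set.Ioc_eq_empty (by exact not_lt.2 hia)]
          exact integrableOn_empty
        · have hsub : Icc a i ⊆ Ici R₀ := fun x hx => le_trans ha.le hx.1
          exact ((hinv_cont _ hsub).integrableOn_compact isCompact_Icc).mono_set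
            Ioc_subset_Icc_self
      · filter_upwards [eventually_ge_atTop a] with i hi
        have heq : (∫ x in a..i, ‖(f x)⁻¹‖) = ∫ x in a..i, (f x)⁻¹ := by
          apply intervalIntegral.integral_congr
          intro x hx
          rw [uIcc_of_le hi] at hx
          have hfx : 0 < f x := hfpos x (le_trans ha.le hx.1)
          show ‖(f x)⁻¹‖ = (f x)⁻¹
          rw [Real.norm_eq_abs, abs_of_pos (inv_pos.2 hfx)]
        rw [heq]; exact hI i hi
    have h2 : IntegrableOn (fun x => (f x)⁻¹) (Icc R₀ a) :=
      (hinv_cont _ Icc_subset_Ici_self).integrableOn_compact isCompact_Icc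
    exact hgint ((h2.union h1).mono_set fun x hx => by
      rcases le_or_gt x a with hxa | hxa
      · exact Or.inl ⟨hx, hxa⟩
      · exact Or.inr hxa)
  -- L = 0
  have hL0 : L = 0 := by
    rcases lt_trichotomy L 0 with hL | hL | hL
    · exfalso
      set a := R₀ + 1 with hadef
      have ha : R₀ < a := by rw [hadef]; linarith
      refine hcontra a ha (h a / (-L)) fun b hb => ?_
      have hFTCh := hhFTC a b ha hb
      have hint1 : IntervalIntegrable (deriv h) volume a b := by
        refine (hdercont.mono ?_).intervalIntegrable
        rw [uIcc_of_le hb]; exact fun x hx => lt_of_lt_of_le ha hx.1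
      have hsubI : Set.uIcc a b ⊆ Ici R₀ := by
        rw [uIcc_of_le hb]; exact fun x hx => le_trans ha.le hx.1
      have hint2 : IntervalIntegrable (fun x => L * (f x)⁻¹) volume a b :=
        (continuousOn_const.mul ((hfcont.mono hsubI).inv₀ fun x hx =>
          ne_of_gt (hfpos x (hsubI hx)))).intervalIntegrable
      have hle : (∫ x in a..b, deriv h x) ≤ ∫ x in a..b, L * (f x)⁻¹ := by
        refine intervalIntegral.integral_mono_on hb hint1 hint2 fun x hx => ?_
        have hx' : R₀ < x := lt_of_lt_of_le ha hx.1
        have hfx := hfpos x hx'.le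
        have hFb : F x ≤ L := hFle x hx'
        have hFx : F x = f x * deriv h x := rfl
        rw [show L * (f x)⁻¹ = L / f x by ring, le_div_iff₀ hfx]
        nlinarith
      rw [intervalIntegral.integral_const_mul] at hle
      have hhb : 0 < h b := hhpos b (le_trans (le_trans ha.le hb) le_rfl)
      rw [le_div_iff₀ (neg_pos.2 hL)]
      nlinarith
    · exact hL
    · exfalso
      obtain ⟨a₀, ha₀⟩ := eventually_atTop.1
        (hFtend.eventually (eventually_ge_nhds (show L / 2 < L by linarith)))
      set a := max a₀ (R₀ + 1) with hadef
      have ha : R₀ < a := lt_of_lt_of_le (by linarith) (le_max_right _ _)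
      refine hcontra a ha ((C - h a) * (2 / L)) fun b hb => ?_
      have hFTCh := hhFTC a b ha hb
      have hint1 : IntervalIntegrable (deriv h) volume a b := by
        refine (hdercont.mono ?_).intervalIntegrable
        rw [uIcc_of_le hb]; exact fun x hx => lt_of_lt_of_le ha hx.1
      have hsubI : Set.uIcc a b ⊆ Ici R₀ := by
        rw [uIcc_of_le hb]; exact fun x hx => le_trans ha.le hx.1
      have hint2 : IntervalIntegrable (fun x => L / 2 * (f x)⁻¹) volume a b :=
        (continuousOn_const.mul ((hfcont.mono hsubI).inv₀ fun x hx =>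
          ne_of_gt (hfpos x (hsubI hx)))).intervalIntegrable
      have hle : (∫ x in a..b, L / 2 * (f x)⁻¹) ≤ ∫ x in a..b, deriv h x := by
        refine intervalIntegral.integral_mono_on hb hint2 hint1 fun x hx => ?_
        have hx' : R₀ < x := lt_of_lt_of_le ha hx.1
        have hfx := hfpos x hx'.le
        have hFb : L / 2 ≤ F x := ha₀ x (le_trans (le_max_left _ _) hx.1)
        have hFx : F x = f x * deriv h x := rfl
        rw [show L / 2 * (f x)⁻¹ = L / 2 / f x by ring, div_le_iff₀ hfx]
        nlinarith
      rw [intervalIntegral.integral_const_mul] at hle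
      have hhb : h b ≤ C := hC b (le_trans ha.le hb)
      rw [show (C - h a) * (2 / L) = (C - h a) / (L / 2) by rw [div_div_eq_mul_div]; ring,
        le_div_iff₀ (by linarith : (0:ℝ) < L / 2)]
      nlinarith
  -- consequences
  have hTnonneg : ∀ a, R₀ < a → 0 ≤ T a := by
    intro a ha
    refine setIntegral_nonneg measurableSet_Ioi fun x hx => ?_
    have hx' : x ∈ Ici R₀ := le_of_lt (ha.trans hx)
    exact le_of_lt (mul_pos (hfpos x hx') (hhpos x hx'))
  have hFneg : ∀ a, R₀ < a → F a = -(lam * T a) := by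
    intro a ha; rw [hFeq a ha, hL0]; ring
  have hdneg : ∀ a, R₀ < a → deriv h a ≤ 0 := by
    intro a ha
    have hfa := hfpos a (le_of_lt ha)
    have : F a ≤ 0 := by
      rw [hFneg a ha]
      have := hTnonneg a ha
      nlinarith
    by_contra hd
    push_neg at hd
    have hFa : F a = f a * deriv h a := rfl
    nlinarith [mul_pos hfa hd]
  -- antitone
  have hanti : AntitoneOn h (Ici R₀) := by
    refine antitoneOn_of_deriv_nonpos (convex_Ici R₀) hhcont ?_ ?_
    · rw [interior_Ici]
      exact fun x hx => (hhd x hx).differentiableAt.differentiableWithinAt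
    · rw [interior_Ici]
      exact fun x hx => hdneg x hx
  -- final contradiction
  set Phi : ℝ → ℝ := fun r => (∫ t in Ici r, f t) / f r with hPhidef
  have hPhi' : IntegrableOn Phi (Ici R₀) := hPhi
  have hPhinonneg : ∀ x, R₀ ≤ x → 0 ≤ Phi x := by
    intro x hx
    refine div_nonneg (setIntegral_nonneg measurableSet_Ici fun t ht => ?_)
      (hfpos x hx).le
    exact (hfpos t (le_trans hx ht)).le
  set Psi : ℝ → ℝ := fun t => ∫ x in Ioi t, Phi x with hPsidef
  have hPsitend : Tendsto Psi atTop (nhds 0) := by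
    have h1 : Tendsto (fun t => ∫ x in R₀..t, Phi x) atTop
        (nhds (∫ x in Ioi R₀, Phi x)) :=
      intervalIntegral_tendsto_integral_Ioi R₀
        (hPhi'.mono_set Ioi_subset_Ici_self) tendsto_id
    have h2 : ∀ᶠ t in atTop, (∫ x in Ioi R₀, Phi x) - (∫ x in R₀..t, Phi x) = Psi t := by
      filter_upwards [eventually_ge_atTop R₀] with t ht
      have hunion : Ioc R₀ t ∪ Ioi t = Ioi R₀ := Ioc_union_Ioi_eq_Ioi ht
      have hdisj : Disjoint (Ioc R₀ t) (Ioi t) := Ioc_disjoint_Ioi le_rfl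
      have hadd : (∫ x in Ioc R₀ t ∪ Ioi t, Phi x)
          = (∫ x in Ioc R₀ t, Phi x) + ∫ x in Ioi t, Phi x :=
        setIntegral_union hdisj measurableSet_Ioi
          (hPhi'.mono_set fun x hx => le_of_lt hx.1)
          (hPhi'.mono_set fun x hx => le_trans ht (le_of_lt hx))
      rw [hunion] at hadd
      rw [intervalIntegral.integral_of_le ht]
      show (∫ x in Ioi R₀, Phi x) - (∫ x in Ioc R₀ t, Phi x) = Psi t
      rw [hadd]; ring
    have h3 : Tendsto (fun t => (∫ x in Ioi R₀, Phi x) - ∫ x in R₀..t, Phi x) atTop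
        (nhds ((∫ x in Ioi R₀, Phi x) - ∫ x in Ioi R₀, Phi x)) := tendsto_const_nhds.sub h1
    rw [sub_self] at h3
    exact h3.congr' h2
  have hev : ∀ᶠ t in atTop, lam * Psi t < 1 := by
    have h4 := hPsitend.const_mul lam
    rw [mul_zero] at h4
    exact h4.eventually (eventually_lt_nhds one_pos)
  obtain ⟨t₀, ht₀⟩ := ((eventually_gt_atTop R₀).and hev).exists
  obtain ⟨ht₀R, ht₀P⟩ := ht₀
  set c : ℝ := lam * h t₀ with hcdef
  have hht₀ : 0 < h t₀ := hhpos t₀ ht₀R.le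
  have hcpos : 0 < c := mul_pos hlam hht₀
  have hmain : ∀ b, t₀ ≤ b → h t₀ - h b ≤ c * Psi t₀ := by
    intro b hb
    have hFTCh := hhFTC t₀ b ht₀R hb
    have hsubI : Set.uIcc t₀ b ⊆ Ioi R₀ := by
      rw [uIcc_of_le hb]; exact fun x hx => lt_of_lt_of_le ht₀R hx.1
    have hpt : ∀ x ∈ Icc t₀ b, -deriv h x ≤ c * Phi x := by
      intro x hx
      have hx' : R₀ < x := lt_of_lt_of_le ht₀R hx.1
      have hfx := hfpos x hx'.le
      have hF := hFneg x hx'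
      have hd : deriv h x = -(lam * T x) / f x := by
        rw [eq_div_iff (ne_of_gt hfx), mul_comm]
        exact hF
      have hT : T x ≤ h t₀ * ∫ t in Ioi x, f t := by
        have hTle : T x ≤ ∫ t in Ioi x, h t₀ * f t := by
          refine setIntegral_mono_on (hfh_int x hx'.le)
            ((hf_int x hx'.le).const_mul _) measurableSet_Ioi fun s hs => ?_
          have hs' : R₀ ≤ s := le_of_lt (hx'.trans hs)
          have hhs : h s ≤ h t₀ := hanti ht₀R.le hs' (le_trans hx.1 (le_of_lt hs))
          have hfs := hfpos s hs'
          nlinarith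
        rwa [integral_const_mul] at hTle
      have hPhix : Phi x = (∫ t in Ioi x, f t) / f x := by
        show (∫ t in Ici x, f t) / f x = _
        rw [integral_Ici_eq_integral_Ioi]
      rw [hd, hPhix, neg_div, neg_neg, hcdef, div_le_iff₀ hfx,
        show lam * h t₀ * ((∫ t in Ioi x, f t) / f x) * f x
          = lam * (h t₀ * ∫ t in Ioi x, f t) by field_simp]
      exact mul_le_mul_of_nonneg_left hT hlam.le
    have hint1 : IntervalIntegrable (fun x => -deriv h x) volume t₀ b :=
      ((hdercont.mono hsubI).neg).intervalIntegrable
    have hint2 : IntervalIntegrable (fun x => c * Phi x) volume t₀ b := by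
      rw [intervalIntegrable_iff, uIoc_of_le hb]
      exact (hPhi'.mono_set fun x hx => le_of_lt (lt_of_lt_of_le ht₀R hx.1.le)).const_mul c
    have hle : (∫ x in t₀..b, -deriv h x) ≤ ∫ x in t₀..b, c * Phi x :=
      intervalIntegral.integral_mono_on hb hint1 hint2 hpt
    rw [intervalIntegral.integral_neg, intervalIntegral.integral_const_mul] at hle
    have htail : (∫ x in t₀..b, Phi x) ≤ Psi t₀ := by
      rw [intervalIntegral.integral_of_le hb]
      refine setIntegral_mono_set
        (hPhi'.mono_set fun x hx => le_of_lt (lt_of_lt_of_le ht₀R (le_of_lt hx))) ?_ ?_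
      · filter_upwards [ae_restrict_mem measurableSet_Ioi] with x hx
        exact hPhinonneg x (le_of_lt (lt_of_lt_of_le ht₀R (le_of_lt hx)))
      · exact HasSubset.Subset.eventuallyLE Ioc_subset_Ioi_self
    nlinarith
  have hlimb : Tendsto (fun b => h t₀ - h b) atTop (nhds (h t₀ - 0)) :=
    tendsto_const_nhds.sub hlim
  have hfin : h t₀ - 0 ≤ c * Psi t₀ := by
    refine le_of_tendsto hlimb ?_
    filter_upwards [eventually_ge_atTop t₀] with b hb
    exact hmain b hb
  rw [sub_zero] at hfin
  rw [hcdef] at hfin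
  nlinarith
end

section
/- Let m ≥ 2 be an integer, λ > 0, a < b real numbers, and g : [a, b] → ℝ a continuously differentiable function with g(r) > 0 for all r ∈ [a, b]. Suppose h : [a, b] → ℝ is twice continuously differentiable with h(r) ≥ 0 on [a, b], h(a) = 1, h(b) = 0, and h''(r) + (m-1)·(g'(r)/g(r))·h'(r) = λ·h(r) for all r ∈ [a, b]. Then for every r ∈ [a, b], h(r) ≤ (∫_r^b g(t)^{1-m} dt) / (∫_a^b g(t)^{1-m} dt). -/
open Set MeasureTheory Filter

/-- comparison with the harmonic solution: a nonnegative solution of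
`h'' + (m-1)(g'/g)h' = λ h` on `[a,b]` with `h(a)=1`, `h(b)=0` satisfies
`h(r) ≤ (∫_r^b g^{1-m})/(∫_a^b g^{1-m})`. -/
theorem stmt_8 (m : ℕ) (hm : 2 ≤ m) (lam a b : ℝ) (hlam : 0 < lam) (hab : a < b)
    (g h : ℝ → ℝ)
    (hg : ContDiffOn ℝ 1 g (Set.Icc a b))
    (hgpos : ∀ r ∈ Set.Icc a b, 0 < g r)
    (hh : ContDiffOn ℝ 2 h (Set.Icc a b))
    (hhnn : ∀ r ∈ Set.Icc a b, 0 ≤ h r)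
    (hva : h a = 1) (hvb : h b = 0)
    (hode : ∀ r ∈ Set.Icc a b,
      deriv (deriv h) r + ((m : ℝ) - 1) * (deriv g r / g r) * deriv h r = lam * h r) :
    ∀ r ∈ Set.Icc a b,
      h r ≤ (∫ t in r..b, (g t ^ (m - 1))⁻¹) / (∫ t in a..b, (g t ^ (m - 1))⁻¹) := by
  obtain ⟨k, rfl⟩ : ∃ k, m = k + 2 := ⟨m - 2, by omega⟩
  set f : ℝ → ℝ := fun t => (g t ^ (k + 2 - 1))⁻¹ with hfdef
  have hgc : ContinuousOn g (Icc a b) := hg.continuousOn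
  have hfc : ContinuousOn f (Icc a b) := by
    exact ContinuousOn.inv₀ (hgc.pow _) fun t ht => (pow_pos (hgpos t ht) _).ne'
  have hfpos : ∀ t ∈ Icc a b, 0 < f t := fun t ht => inv_pos.2 (pow_pos (hgpos t ht) _)
  have hint : ∀ x ∈ Icc a b, ∀ y ∈ Icc a b, IntervalIntegrable f volume x y := by
    intro x hx y hy
    exact (hfc.mono ((uIcc_subset_Icc hx hy))).intervalIntegrable
  have habIcc : a ∈ Icc a b := left_mem_Icc.2 hab.le
  have hbIcc : b ∈ Icc a b := right_mem_Icc.2 hab.le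
  set Ia : ℝ := ∫ t in a..b, f t with hIadef
  have hIa : 0 < Ia := by
    apply intervalIntegral.intervalIntegral_pos_of_pos_on (hint a habIcc b hbIcc)
      (fun x hx => hfpos x (Ioo_subset_Icc_self hx)) hab
  set I : ℝ → ℝ := fun x => ∫ t in x..b, f t with hIdef
  -- continuity of I on Icc
  have hIcont : ContinuousOn I (Icc a b) := by
    have := intervalIntegral.continuousOn_primitive_interval_left
      (f := f) (μ := volume) (a := a) (b := b)
      (by rw [uIcc_of_le hab.le]; exact hfc.integrableOn_Icc)
    rwa [uIcc_of_le hab.le] at this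
  -- derivative of I at interior points
  have hIderiv : ∀ r ∈ Ioo a b, HasDerivAt I (-(f r)) r := by
    intro r hr
    have hrmem : Icc a b ∈ nhds r := Icc_mem_nhds hr.1 hr.2
    exact intervalIntegral.integral_hasDerivAt_left
      (hint r (Ioo_subset_Icc_self hr) b hbIcc)
      (ContinuousOn.stronglyMeasurableAtFilter isOpen_Ioo (hfc.mono Ioo_subset_Icc_self) r hr)
      (hfc.continuousAt hrmem)
  -- second derivative facts for h at interior points
  have hhIoo : ContDiffOn ℝ 2 h (Ioo a b) := hh.mono Ioo_subset_Icc_self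
  have hh'diff : DifferentiableOn ℝ (deriv h) (Ioo a b) := by
    have : ContDiffOn ℝ 1 (deriv h) (Ioo a b) :=
      hhIoo.deriv_of_isOpen isOpen_Ioo (by norm_num)
    exact this.differentiableOn one_ne_zero
  have hderivs : ∀ r ∈ Ioo a b,
      HasDerivAt g (deriv g r) r ∧ HasDerivAt h (deriv h r) r ∧
      HasDerivAt (deriv h) (deriv (deriv h) r) r := by
    intro r hr
    have hrmem : Icc a b ∈ nhds r := Icc_mem_nhds hr.1 hr.2
    refine ⟨((hg.contDiffAt hrmem).differentiableAt one_ne_zero).hasDerivAt,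
      ((hh.contDiffAt hrmem).differentiableAt (by norm_num)).hasDerivAt, ?_⟩
    exact ((hh'diff r hr).differentiableAt (isOpen_Ioo.mem_nhds hr)).hasDerivAt
  -- the auxiliary function Φ = g^(m-1) * h' * Ia + 1
  set Φ : ℝ → ℝ := fun x => g x ^ (k + 2 - 1) * deriv h x * Ia + 1 with hΦdef
  have hΦderiv : ∀ r ∈ Ioo a b, HasDerivAt Φ (g r ^ (k + 2 - 1) * (lam * h r) * Ia) r := by
    intro r hr
    obtain ⟨hg', hh', hh''⟩ := hderivs r hr
    have hrI : r ∈ Icc a b := Ioo_subset_Icc_self hr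
    have hgne : g r ≠ 0 := (hgpos r hrI).ne'
    have hpow : HasDerivAt (fun x => g x ^ (k + 2 - 1))
        (↑(k + 2 - 1) * g r ^ (k + 2 - 1 - 1) * deriv g r) r := hg'.pow _
    have := ((hpow.mul hh'').mul_const Ia).add_const 1
    refine this.congr_deriv ?_
    have hodeq := hode r hrI
    have h2 : deriv (deriv h) r = lam * h r - ((k:ℝ) + 2 - 1) * (deriv g r / g r) * deriv h r := by
      push_cast at hodeq ⊢; linarith
    have hps : g r ^ (k + 2 - 1) = g r ^ k * g r := by
      have : k + 2 - 1 = k + 1 := by omega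
      rw [this, pow_succ]
    have hps2 : g r ^ (k + 2 - 1 - 1) = g r ^ k := by norm_num
    rw [h2, hps, hps2]
    push_cast
    field_simp
    ring
  -- monotonicity of Φ on (a,b)
  have hΦmono : ∀ x ∈ Ioo a b, ∀ y ∈ Ioo a b, x ≤ y → Φ x ≤ Φ y := by
    intro x hx y hy hxy
    have hsub : Icc x y ⊆ Ioo a b := Icc_subset_Ioo hx.1 hy.2
    have hmono := monotoneOn_of_deriv_nonneg (convex_Icc x y)
        (fun z hz => ((hΦderiv z (hsub hz)).differentiableAt.continuousAt).continuousWithinAt)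
        (fun z hz => by
          rw [interior_Icc] at hz
          exact ((hΦderiv z (hsub (Ioo_subset_Icc_self hz))).differentiableAt).differentiableWithinAt)
        (fun z hz => by
          rw [interior_Icc] at hz
          have hzI := hsub (Ioo_subset_Icc_self hz)
          rw [(hΦderiv z hzI).deriv]
          have hzIcc : z ∈ Icc a b := Ioo_subset_Icc_self hzI
          have := pow_pos (hgpos z hzIcc) (k + 2 - 1)
          have := hhnn z hzIcc
          positivity)
    exact hmono (left_mem_Icc.2 hxy) (right_mem_Icc.2 hxy) hxy
  -- the comparison function W
  set W : ℝ → ℝ := fun x => h x * Ia - I x with hWdef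
  have hWcont : ContinuousOn W (Icc a b) :=
    ((hh.continuousOn).mul continuousOn_const).sub hIcont
  have hWderiv : ∀ r ∈ Ioo a b, HasDerivAt W (deriv h r * Ia + f r) r := by
    intro r hr
    have := (((hderivs r hr).2.1).mul_const Ia).sub (hIderiv r hr)
    refine this.congr_deriv ?_; ring
  have hWa : W a = 0 := by simp [hWdef, hva, hIdef, hIadef]
  have hWb : W b = 0 := by simp [hWdef, hvb, hIdef, intervalIntegral.integral_same]
  -- main claim: W ≤ 0 on Icc
  have key : ∀ x ∈ Icc a b, W x ≤ 0 := by
    by_contra hcon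
    push_neg at hcon
    obtain ⟨c, hc, hWc⟩ := hcon
    obtain ⟨c0, hc0, hmax⟩ := isCompact_Icc.exists_isMaxOn (nonempty_Icc.2 hab.le) hWcont
    have hWc0 : 0 < W c0 := lt_of_lt_of_le hWc (hmax hc)
    have hc0i : c0 ∈ Ioo a b := by
      constructor
      · rcases eq_or_lt_of_le hc0.1 with heq | hlt
        · exfalso; rw [heq] at hWa; linarith
        · exact hlt
      · rcases eq_or_lt_of_le hc0.2 with heq | hlt
        · exfalso; rw [heq] at hWc0; linarith [hWb]
        · exact hlt
    have hloc : IsLocalMax W c0 := hmax.isLocalMax (Icc_mem_nhds hc0i.1 hc0i.2)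
    have hd0 : deriv W c0 = 0 := hloc.deriv_eq_zero
    have hWd : deriv W c0 = deriv h c0 * Ia + f c0 := (hWderiv c0 hc0i).deriv
    have hgc0 : 0 < g c0 ^ (k + 2 - 1) := pow_pos (hgpos c0 (Ioo_subset_Icc_self hc0i)) _
    have hΦc0 : Φ c0 = 0 := by
      have : g c0 ^ (k + 2 - 1) * f c0 = 1 := mul_inv_cancel₀ hgc0.ne'
      have h1 : deriv h c0 * Ia + f c0 = 0 := by rw [← hWd, hd0]
      have h2 : g c0 ^ (k + 2 - 1) * (deriv h c0 * Ia + f c0) = 0 := by rw [h1]; ring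
      simp only [hΦdef]
      nlinarith [h2, this]
    -- W is antitone on [a, c0]
    have hant : AntitoneOn W (Icc a c0) := by
      apply antitoneOn_of_deriv_nonpos (convex_Icc a c0)
        (hWcont.mono (Icc_subset_Icc le_rfl hc0i.2.le))
      · intro x hx
        rw [interior_Icc] at hx
        have hxI : x ∈ Ioo a b := ⟨hx.1, hx.2.trans hc0i.2⟩
        exact (hWderiv x hxI).differentiableAt.differentiableWithinAt
      · intro x hx
        rw [interior_Icc] at hx
        have hxI : x ∈ Ioo a b := ⟨hx.1, hx.2.trans hc0i.2⟩
        have hΦx : Φ x ≤ Φ c0 := hΦmono x hxI c0 hc0i hx.2.le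
        rw [(hWderiv x hxI).deriv]
        have hgx : 0 < g x ^ (k + 2 - 1) := pow_pos (hgpos x (Ioo_subset_Icc_self hxI)) _
        have hfx : g x ^ (k + 2 - 1) * f x = 1 := mul_inv_cancel₀ hgx.ne'
        have hΦx0 : Φ x ≤ 0 := by rw [hΦc0] at hΦx; exact hΦx
        have hΦexp : Φ x = g x ^ (k + 2 - 1) * (deriv h x * Ia + f x) := by
          simp only [hΦdef]; nlinarith [hfx]
        nlinarith [hΦexp, hΦx0, hgx]
    have := hant (left_mem_Icc.2 hc0i.1.le) (right_mem_Icc.2 hc0i.1.le) hc0i.1.le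
    rw [hWa] at this
    linarith
  -- conclude
  intro r hr
  rw [le_div_iff₀ hIa]
  have := key r hr
  simp only [hWdef] at this
  linarith
end

section
/- Let m ≥ 2 be an integer, R₀ > 0 and λ > 0 real numbers, and g : [R₀, ∞) → ℝ a continuously differentiable function with g(r) > 0 for all r ≥ R₀. Let (R_n) be a strictly increasing sequence of reals with R_1 > R₀ and R_n → +∞, and for each n let h_n : [R₀, R_n] → ℝ be twice continuously differentiable with h_n(r) ≥ 0 on [R₀, R_n], h_n(R₀) = 1, h_n(R_n) = 0, and h_n''(r) + (m-1)·(g'(r)/g(r))·h_n'(r) = λ·h_n(r) on [R₀, R_n]. Suppose h : [R₀, ∞) → ℝ is twice continuously differentiable, satisfies h(r) > 0 for all r ≥ R₀, h(R₀) = 1, h''(r) + (m-1)·(g'(r)/g(r))·h'(r) = λ·h(r) on [R₀, ∞), and h(r) = lim_{n→∞} h_n(r) for every r ≥ R₀. Then h(r) → 0 as r → +∞ if and only if at least one of the following holds: (1) ∫_{R₀}^∞ g(t)^{1-m} dt < +∞; (2) g^{m-1} is not Lebesgue integrable on [R₀, ∞); (3) ∫_{R₀}^∞ (∫_r^∞ g(t)^{m-1}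 dt) / g(r)^{m-1} dr = +∞. -/
open Set MeasureTheory Filter Topology

/-- If `x > 0` then `2 ≤ x + x⁻¹`; hence `v` and `v⁻¹` can't both be integrable on `Ici R₀`. -/
lemma stmt9_not_both {R₀ : ℝ} {v : ℝ → ℝ} (hvpos : ∀ r ∈ Ici R₀, 0 < v r)
    (h1 : IntegrableOn (fun t => (v t)⁻¹) (Ici R₀)) (h2 : IntegrableOn v (Ici R₀)) : False := by
  have hint : IntegrableOn (fun _ => (2:ℝ)) (Ici R₀) := by
    refine Integrable.mono' (h2.add h1) aestronglyMeasurable_const ?_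
    refine ae_restrict_of_forall_mem measurableSet_Ici fun t ht => ?_
    have hv := hvpos t ht
    have key : v t + (v t)⁻¹ - 2 = (v t - 1)^2 / v t := by field_simp; ring
    have : 0 ≤ v t + (v t)⁻¹ - 2 := by rw [key]; positivity
    rw [Real.norm_eq_abs, abs_two]
    simp only [Pi.add_apply]
    linarith
  rw [IntegrableOn, integrable_const_iff] at hint
  rcases hint with hc | hc
  · norm_num at hc
  · rw [isFiniteMeasure_restrict, Real.volume_Ici] at hc
    exact absurd hc (by simp)

/-- integrable on `Icc a b` plus integrable on `Ioi b` gives integrable on `Ici a`. -/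
lemma stmt9_integrableOn_Ici {f : ℝ → ℝ} {a b : ℝ} (hab : a ≤ b)
    (hc : IntegrableOn f (Icc a b)) (hi : IntegrableOn f (Ioi b)) :
    IntegrableOn f (Ici a) := by
  rw [← Icc_union_Ioi_eq_Ici hab]
  exact hc.union hi

/-- divergence form of the ODE. -/
lemma stmt9_hasDerivAt_w {R₀ lam : ℝ} {k : ℕ} (hk : 1 ≤ k) {g f : ℝ → ℝ}
    (hg : ContDiffOn ℝ 1 g (Ici R₀)) (hgpos : ∀ r ∈ Ici R₀, 0 < g r)
    {s : Set ℝ} (hso : IsOpen s) (hss : s ⊆ Ioi R₀)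
    (hf : ContDiffOn ℝ 2 f s)
    (hodef : ∀ r ∈ s, deriv (deriv f) r + (k : ℝ) * (deriv g r / g r) * deriv f r = lam * f r)
    {r : ℝ} (hr : r ∈ s) :
    HasDerivAt (fun x => g x ^ k * deriv f x) (lam * (g r ^ k * f r)) r := by
  have hrI : r ∈ Ici R₀ := Ioi_subset_Ici_self (hss hr)
  have hgne : g r ≠ 0 := (hgpos r hrI).ne'
  have hmem : s ∈ 𝓝 r := hso.mem_nhds hr
  have hIci : Ici R₀ ∈ 𝓝 r :=
    Filter.mem_of_superset (isOpen_Ioi.mem_nhds (hss hr)) Ioi_subset_Ici_self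
  have hgd : HasDerivAt g (deriv g r) r :=
    (((hg.differentiableOn (by norm_num)).differentiableAt hIci)).hasDerivAt
  have hfd2 : HasDerivAt (deriv f) (deriv (deriv f) r) r := by
    have h1 : ContDiffOn ℝ 1 (deriv f) s := hf.deriv_of_isOpen hso (by norm_num)
    exact ((h1.differentiableOn (by norm_num)).differentiableAt hmem).hasDerivAt
  have hvd : HasDerivAt (fun x => g x ^ k) ((k : ℝ) * g r ^ (k - 1) * deriv g r) r := hgd.pow k
  have := hvd.mul hfd2
  refine this.congr_deriv ?_
  have hodeq := hodef r hr
  have hpow : g r ^ k = g r ^ (k - 1) * g r := by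
    conv_lhs => rw [show k = (k - 1) + 1 from (Nat.succ_pred_eq_of_pos hk).symm]
    rw [pow_succ]
  have hdd : deriv (deriv f) r = lam * f r - (k : ℝ) * (deriv g r / g r) * deriv f r := by
    linarith
  rw [hdd, hpow]
  field_simp
  ring

/-- Dirichlet solutions are antitone. -/
lemma stmt9_antitone {R₀ b lam : ℝ} {k : ℕ} (hk : 1 ≤ k) (hb : R₀ < b) (hlam : 0 < lam)
    {g f : ℝ → ℝ} (hg : ContDiffOn ℝ 1 g (Ici R₀)) (hgpos : ∀ r ∈ Ici R₀, 0 < g r)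
    (hf : ContDiffOn ℝ 2 f (Icc R₀ b))
    (hfnn : ∀ r ∈ Icc R₀ b, 0 ≤ f r) (hfb : f b = 0)
    (hodef : ∀ r ∈ Icc R₀ b,
      deriv (deriv f) r + (k : ℝ) * (deriv g r / g r) * deriv f r = lam * f r) :
    AntitoneOn f (Icc R₀ b) := by
  have hso : IsOpen (Ioo R₀ b) := isOpen_Ioo
  have hss : Ioo R₀ b ⊆ Ioi R₀ := fun x hx => hx.1
  have hfs : ContDiffOn ℝ 2 f (Ioo R₀ b) := hf.mono Ioo_subset_Icc_self
  have hwd : ∀ r ∈ Ioo R₀ b,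
      HasDerivAt (fun x => g x ^ k * deriv f x) (lam * (g r ^ k * f r)) r :=
    fun r hr => stmt9_hasDerivAt_w hk hg hgpos hso hss hfs
      (fun x hx => hodef x (Ioo_subset_Icc_self hx)) hr
  have key : ∀ r ∈ Ioo R₀ b, deriv f r ≤ 0 := by
    by_contra hcon
    push_neg at hcon
    obtain ⟨r₁, hr₁, hd₁⟩ := hcon
    set w : ℝ → ℝ := fun x => g x ^ k * deriv f x with hw_def
    have hwmono : MonotoneOn w (Ico r₁ b) := by
      refine monotoneOn_of_deriv_nonneg (convex_Ico _ _) ?_ ?_ ?_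
      · intro x hx
        exact ((hwd x ⟨lt_of_lt_of_le hr₁.1 hx.1, hx.2⟩).differentiableAt.continuousAt).continuousWithinAt
      · intro x hx
        rw [interior_Ico] at hx
        exact ((hwd x ⟨hr₁.1.trans hx.1, hx.2⟩).differentiableAt).differentiableWithinAt
      · intro x hx
        rw [interior_Ico] at hx
        have hx' : x ∈ Ioo R₀ b := ⟨hr₁.1.trans hx.1, hx.2⟩
        rw [(hwd x hx').deriv]
        have := hfnn x (Ioo_subset_Icc_self hx')
        have := (hgpos x (le_of_lt hx'.1)).le
        positivity
    have hw₁ : 0 < w r₁ := mul_pos (pow_pos (hgpos r₁ (le_of_lt hr₁.1)) k) hd₁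
    have hderivpos : ∀ x ∈ Ioo r₁ b, 0 < deriv f x := by
      intro x hx
      have : w r₁ ≤ w x := hwmono ⟨le_rfl, hr₁.2⟩ ⟨hx.1.le, hx.2⟩ hx.1.le
      have hwx : 0 < g x ^ k * deriv f x := lt_of_lt_of_le hw₁ this
      have hgk : 0 < g x ^ k := pow_pos (hgpos x (le_of_lt (hr₁.1.trans hx.1))) k
      exact (mul_pos_iff_of_pos_left hgk).mp hwx
    have hsm : StrictMonoOn f (Icc r₁ b) := by
      refine strictMonoOn_of_deriv_pos (convex_Icc _ _) ?_ ?_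
      · exact hf.continuousOn.mono (Icc_subset_Icc hr₁.1.le le_rfl)
      · intro x hx
        rw [interior_Icc] at hx
        exact hderivpos x hx
    have hlt : f r₁ < f b := hsm ⟨le_rfl, hr₁.2.le⟩ ⟨hr₁.2.le, le_rfl⟩ hr₁.2
    have hge := hfnn r₁ (Ioo_subset_Icc_self hr₁)
    rw [hfb] at hlt; linarith
  refine antitoneOn_of_deriv_nonpos (convex_Icc _ _) hf.continuousOn ?_ ?_
  · intro x hx
    rw [interior_Icc] at hx
    exact ((hfs.differentiableOn (by norm_num)).differentiableAt
      (hso.mem_nhds hx)).differentiableWithinAt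
  · intro x hx
    rw [interior_Icc] at hx
    exact key x hx

set_option maxHeartbeats 2000000 in
/-- radial characterization of the Feller property on model manifolds
(Theorem `th_model`): the minimal positive solution `h` of the exterior problem,
obtained as limit of the Dirichlet solutions `hseq n`, tends to `0` at infinity
iff `∫ g^{1-m} < ∞`, or `g^{m-1}` is not integrable, or
`∫ (∫_r^∞ g^{m-1})/g^{m-1} = ∞`. -/
theorem stmt_9 (m : ℕ) (hm : 2 ≤ m) (R₀ lam : ℝ) (hR₀ : 0 < R₀) (hlam : 0 < lam)
    (g : ℝ → ℝ)
    (hg : ContDiffOn ℝ 1 g (Set.Ici R₀))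
    (hgpos : ∀ r ∈ Set.Ici R₀, 0 < g r)
    (R : ℕ → ℝ) (hRmono : StrictMono R) (hR1 : R₀ < R 1)
    (hRtop : Filter.Tendsto R Filter.atTop Filter.atTop)
    (hseq : ℕ → ℝ → ℝ)
    (hseqC2 : ∀ n, ContDiffOn ℝ 2 (hseq n) (Set.Icc R₀ (R n)))
    (hseqnn : ∀ n, ∀ r ∈ Set.Icc R₀ (R n), 0 ≤ hseq n r)
    (hseqa : ∀ n, hseq n R₀ = 1)
    (hseqb : ∀ n, hseq n (R n) = 0)
    (hseqode : ∀ n, ∀ r ∈ Set.Icc R₀ (R n),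
      deriv (deriv (hseq n)) r + ((m : ℝ) - 1) * (deriv g r / g r) * deriv (hseq n) r
        = lam * hseq n r)
    (h : ℝ → ℝ)
    (hh : ContDiffOn ℝ 2 h (Set.Ici R₀))
    (hhpos : ∀ r ∈ Set.Ici R₀, 0 < h r)
    (hval : h R₀ = 1)
    (hode : ∀ r ∈ Set.Ici R₀,
      deriv (deriv h) r + ((m : ℝ) - 1) * (deriv g r / g r) * deriv h r = lam * h r)
    (hlim : ∀ r ∈ Set.Ici R₀,
      Filter.Tendsto (fun n => hseq n r) Filter.atTop (nhds (h r))) :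
    Filter.Tendsto h Filter.atTop (nhds 0) ↔
      (MeasureTheory.IntegrableOn (fun t => (g t ^ (m - 1))⁻¹) (Set.Ici R₀) ∨
       ¬ MeasureTheory.IntegrableOn (fun t => g t ^ (m - 1)) (Set.Ici R₀) ∨
       ¬ MeasureTheory.IntegrableOn
          (fun r => (∫ t in Set.Ici r, g t ^ (m - 1)) / g r ^ (m - 1)) (Set.Ici R₀)) := by
  set k := m - 1 with hk_def
  have hk1 : 1 ≤ k := by omega
  have hkcast : ((k : ℕ) : ℝ) = (m : ℝ) - 1 := by
    rw [hk_def, Nat.cast_sub (by omega : 1 ≤ m)]; norm_num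
  set v : ℝ → ℝ := fun t => g t ^ k with hv_def
  have hvpos : ∀ r ∈ Ici R₀, 0 < v r := fun r hr => pow_pos (hgpos r hr) k
  have hvcont : ContinuousOn v (Ici R₀) := (hg.continuousOn).pow k
  have hhcont : ContinuousOn h (Ici R₀) := hh.continuousOn
  have hode' : ∀ r ∈ Ici R₀,
      deriv (deriv h) r + (k : ℝ) * (deriv g r / g r) * deriv h r = lam * h r := by
    intro r hr; rw [hkcast]; exact hode r hr
  -- h is antitone on [R₀, ∞)
  have hanti : AntitoneOn h (Ici R₀) := by
    intro r₁ h₁ r₂ h₂ h12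
    have hev : ∀ᶠ n in atTop, hseq n r₂ ≤ hseq n r₁ := by
      filter_upwards [hRtop.eventually (eventually_gt_atTop r₂)] with n hn
      have hRn : R₀ < R n := lt_of_le_of_lt (h₁.trans h12) hn
      have hA := stmt9_antitone hk1 hRn hlam hg hgpos (hseqC2 n) (hseqnn n) (hseqb n)
        (fun r hr => by rw [hkcast]; exact hseqode n r hr)
      exact hA ⟨h₁, h12.trans hn.le⟩ ⟨h₁.trans h12, hn.le⟩ h12
    exact le_of_tendsto_of_tendsto (hlim r₂ h₂) (hlim r₁ h₁) hev
  have hle1 : ∀ r ∈ Ici R₀, h r ≤ 1 := fun r hr => by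
    have := hanti self_mem_Ici hr hr; rwa [hval] at this
  -- the limit L of h at infinity
  have hHanti : Antitone (fun r : ℝ => h (max r R₀)) := fun a b hab =>
    hanti (le_max_right a R₀) (le_max_right b R₀) (max_le_max hab le_rfl)
  have hbddH : BddBelow (range fun r : ℝ => h (max r R₀)) := by
    refine ⟨0, ?_⟩; rintro y ⟨r, rfl⟩; exact (hhpos _ (le_max_right r R₀)).le
  have hHL := tendsto_atTop_ciInf hHanti hbddH
  set L : ℝ := ⨅ r : ℝ, h (max r R₀) with hL_def
  have hLtends : Tendsto h atTop (nhds L) := by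
    refine hHL.congr' ?_
    filter_upwards [eventually_ge_atTop R₀] with r hr
    rw [max_eq_left hr]
  have hLnn : 0 ≤ L := ge_of_tendsto hLtends
    (by filter_upwards [eventually_ge_atTop R₀] with r hr; exact (hhpos r hr).le)
  have hLle : ∀ r ∈ Ici R₀, L ≤ h r := by
    intro r hr
    refine le_of_tendsto hLtends ?_
    filter_upwards [eventually_ge_atTop r] with x hx
    exact hanti hr (hr.trans hx) hx
  -- derivative machinery on (R₀, ∞)
  have hIciN : ∀ {r : ℝ}, r ∈ Ioi R₀ → Ici R₀ ∈ nhds r := fun {r} hr =>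
    Filter.mem_of_superset (isOpen_Ioi.mem_nhds hr) Ioi_subset_Ici_self
  have hd1 : ∀ r ∈ Ioi R₀, HasDerivAt h (deriv h r) r := fun r hr =>
    ((hh.differentiableOn (by norm_num)).differentiableAt (hIciN hr)).hasDerivAt
  have hdcont : ContinuousOn (deriv h) (Ioi R₀) :=
    (hh.mono Ioi_subset_Ici_self).continuousOn_deriv_of_isOpen isOpen_Ioi (by norm_num)
  set w : ℝ → ℝ := fun r => v r * deriv h r with hw_def
  have hwd : ∀ r ∈ Ioi R₀, HasDerivAt w (lam * (v r * h r)) r := fun r hr =>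
    stmt9_hasDerivAt_w hk1 hg hgpos isOpen_Ioi subset_rfl (hh.mono Ioi_subset_Ici_self)
      (fun x hx => hode' x (Ioi_subset_Ici_self hx)) hr
  have hwcont : ContinuousOn w (Ioi R₀) := fun r hr =>
    ((hwd r hr).differentiableAt.continuousAt).continuousWithinAt
  have hwmono : MonotoneOn w (Ioi R₀) := by
    refine monotoneOn_of_deriv_nonneg (convex_Ioi _) hwcont ?_ ?_
    · rw [interior_Ioi]; exact fun x hx => ((hwd x hx).differentiableAt).differentiableWithinAt
    · rw [interior_Ioi]; intro x hx
      rw [(hwd x hx).deriv]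
      have h1 := (hvpos x (Ioi_subset_Ici_self hx)).le
      have h2 := (hhpos x (Ioi_subset_Ici_self hx)).le
      positivity
  have hdnp : ∀ r ∈ Ioi R₀, deriv h r ≤ 0 := by
    intro r hr
    have hslope : Tendsto (slope h r) (nhdsWithin r (Ioi r)) (nhds (deriv h r)) :=
      (hasDerivAt_iff_tendsto_slope.mp (hd1 r hr)).mono_left
        (nhdsWithin_mono r (fun y hy => ne_of_gt hy))
    refine le_of_tendsto hslope ?_
    filter_upwards [self_mem_nhdsWithin] with y hy
    have hyr : r < y := hy
    rw [slope_def_field]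
    apply div_nonpos_of_nonpos_of_nonneg
    · have : h y ≤ h r := hanti (Ioi_subset_Ici_self hr) (mem_Ici.mpr (hr.le.trans hyr.le)) hyr.le
      linarith
    · linarith
  have hwle0 : ∀ r ∈ Ioi R₀, w r ≤ 0 := fun r hr =>
    mul_nonpos_of_nonneg_of_nonpos (hvpos r (Ioi_subset_Ici_self hr)).le (hdnp r hr)
  -- FTC identities
  have FTCw : ∀ a r, R₀ < a → a ≤ r → w r - w a = ∫ t in a..r, lam * (v t * h t) := by
    intro a r ha har
    refine (intervalIntegral.integral_eq_sub_of_hasDerivAt ?_ ?_).symm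
    · intro x hx
      rw [uIcc_of_le har] at hx
      exact hwd x (lt_of_lt_of_le ha hx.1)
    · apply ContinuousOn.intervalIntegrable
      apply continuousOn_const.mul
      apply (hvcont.mul hhcont).mono
      rw [uIcc_of_le har]
      exact fun x hx => ha.le.trans hx.1
  have FTCh : ∀ a r, R₀ < a → a ≤ r → h r - h a = ∫ t in a..r, deriv h t := by
    intro a r ha har
    refine (intervalIntegral.integral_eq_sub_of_hasDerivAt ?_ ?_).symm
    · intro x hx
      rw [uIcc_of_le har] at hx
      exact hd1 x (lt_of_lt_of_le ha hx.1)
    · apply ContinuousOn.intervalIntegrable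
      apply hdcont.mono
      rw [uIcc_of_le har]
      exact fun x hx => lt_of_lt_of_le ha hx.1
  -- Case: v not integrable implies L = 0
  have Civ : ¬ IntegrableOn v (Ici R₀) → L = 0 := by
    intro hniv
    by_contra hL0
    have hLpos : 0 < L := lt_of_le_of_ne hLnn (Ne.symm hL0)
    have ha : R₀ < R₀ + 1 := by linarith
    set a := R₀ + 1 with ha_def
    have hbound : ∀ r, a ≤ r → ∫ t in a..r, v t ≤ (0 - w a) / (lam * L) := by
      intro r har
      have hft := FTCw a r ha har
      have hvint : IntervalIntegrable v volume a r := by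
        apply ContinuousOn.intervalIntegrable
        apply hvcont.mono
        rw [uIcc_of_le har]
        exact fun x hx => ha.le.trans hx.1
      have hmono' : (∫ t in a..r, L * v t) ≤ ∫ t in a..r, v t * h t := by
        refine intervalIntegral.integral_mono_on har (hvint.const_mul L) ?_ ?_
        · apply ContinuousOn.intervalIntegrable
          apply (hvcont.mul hhcont).mono
          rw [uIcc_of_le har]
          exact fun x hx => ha.le.trans hx.1
        · intro x hx
          have hxI : x ∈ Ici R₀ := ha.le.trans hx.1
          rw [mul_comm]
          exact mul_le_mul_of_nonneg_left (hLle x hxI) (hvpos x hxI).le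
      rw [intervalIntegral.integral_const_mul] at hft hmono'
      have h3 := hwle0 r (lt_of_lt_of_le ha har)
      rw [le_div_iff₀ (by positivity)]
      nlinarith [mul_le_mul_of_nonneg_left hmono' hlam.le]
    have hIoi : IntegrableOn v (Ioi a) := by
      refine integrableOn_Ioi_of_intervalIntegral_norm_bounded
        ((0 - w a) / (lam * L)) a (fun i : ℝ => ?_) tendsto_id ?_
      · simp only [id_eq]
        rcases le_or_gt i a with hia | hia
        · rw [Ioc_eq_empty (not_lt.mpr hia)]; exact integrableOn_empty
        · exact (((hvcont.mono (fun x hx => ha.le.trans hx.1)).integrableOn_compact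
            isCompact_Icc).mono_set Ioc_subset_Icc_self)
      · filter_upwards [eventually_ge_atTop a] with i hi
        have hnorm : ∫ x in a..i, ‖v x‖ = ∫ x in a..i, v x := by
          refine intervalIntegral.integral_congr ?_
          intro x hx
          rw [uIcc_of_le hi] at hx
          exact Real.norm_of_nonneg (hvpos x (ha.le.trans hx.1)).le
        simp only [id_eq]
        rw [hnorm]
        exact hbound i hi
    exact hniv (stmt9_integrableOn_Ici ha.le
      ((hvcont.mono Icc_subset_Ici_self).integrableOn_compact isCompact_Icc) hIoi)
  -- under integrability of v : the identity w a = -(lam * ∫_{Ioi a} v h)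
  have hIdent : IntegrableOn v (Ici R₀) →
      ∀ a, R₀ < a → w a = -(lam * ∫ t in Ioi a, v t * h t) := by
    intro hiv
    have hvhm : IntegrableOn (fun t => v t * h t) (Ici R₀) := by
      refine Integrable.mono' hiv ((hvcont.mul hhcont).aestronglyMeasurable measurableSet_Ici) ?_
      refine ae_restrict_of_forall_mem measurableSet_Ici fun t ht => ?_
      have h1 := (hvpos t ht).le
      have h2 := (hhpos t ht).le
      rw [Real.norm_eq_abs, abs_of_nonneg (by positivity)]
      calc v t * h t ≤ v t * 1 := mul_le_mul_of_nonneg_left (hle1 t ht) h1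
        _ = v t := mul_one _
    have hvhI : ∀ a, R₀ ≤ a → IntegrableOn (fun t => v t * h t) (Ioi a) := fun a ha =>
      hvhm.mono_set (fun x hx => ha.trans (le_of_lt hx))
    have hwtends : ∀ a, R₀ < a →
        Tendsto w atTop (nhds (w a + lam * ∫ t in Ioi a, v t * h t)) := by
      intro a ha
      have h1 : Tendsto (fun r => ∫ t in a..r, v t * h t) atTop
          (nhds (∫ t in Ioi a, v t * h t)) :=
        intervalIntegral_tendsto_integral_Ioi a (hvhI a ha.le) tendsto_id
      have h2 : Tendsto (fun r => w a + lam * ∫ t in a..r, v t * h t) atTop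
          (nhds (w a + lam * ∫ t in Ioi a, v t * h t)) :=
        tendsto_const_nhds.add (h1.const_mul lam)
      refine Tendsto.congr' ?_ h2
      filter_upwards [eventually_ge_atTop a] with r hr
      have hft := FTCw a r ha hr
      rw [intervalIntegral.integral_const_mul] at hft
      linarith
    have ha₀ : R₀ < R₀ + 1 := by linarith
    set a₀ : ℝ := R₀ + 1 with ha₀_def
    set B : ℝ := w a₀ + lam * ∫ t in Ioi a₀, v t * h t with hB_def
    have hB : Tendsto w atTop (nhds B) := hwtends a₀ ha₀
    have hwleB : ∀ r, R₀ < r → w r ≤ B := by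
      intro r hr
      refine ge_of_tendsto hB ?_
      filter_upwards [eventually_ge_atTop r] with x hx
      exact hwmono hr (lt_of_lt_of_le hr hx) hx
    have hBle : B ≤ 0 := le_of_tendsto hB
      (by filter_upwards [eventually_gt_atTop R₀] with x hx; exact hwle0 x hx)
    have hB0 : B = 0 := by
      rcases eq_or_lt_of_le hBle with he | hBneg
      · exact he
      · exfalso
        have hinv : ∀ r, a₀ ≤ r → ∫ t in a₀..r, (v t)⁻¹ ≤ 1 / (-B) := by
          intro r hr
          have hFT := FTCh a₀ r ha₀ hr
          have hmono' : (∫ t in a₀..r, deriv h t) ≤ ∫ t in a₀..r, B * (v t)⁻¹ := by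
            refine intervalIntegral.integral_mono_on hr ?_ ?_ ?_
            · apply ContinuousOn.intervalIntegrable
              apply hdcont.mono
              rw [uIcc_of_le hr]
              exact fun x hx => lt_of_lt_of_le ha₀ hx.1
            · apply ContinuousOn.intervalIntegrable
              apply continuousOn_const.mul
              apply ContinuousOn.inv₀ (hvcont.mono ?_) ?_
              · rw [uIcc_of_le hr]
                exact fun x hx => ha₀.le.trans hx.1
              · intro x hx
                rw [uIcc_of_le hr] at hx
                exact (hvpos x (ha₀.le.trans hx.1)).ne'
            · intro x hx
              have hx0 : R₀ < x := lt_of_lt_of_le ha₀ hx.1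
              have hwx := hwleB x hx0
              have hvx := hvpos x hx0.le
              rw [← div_eq_mul_inv, le_div_iff₀ hvx]
              have hrfl : w x = v x * deriv h x := rfl
              nlinarith
          rw [intervalIntegral.integral_const_mul] at hmono'
          have h0r : 0 < h r := hhpos r (ha₀.le.trans hr)
          have h1a : h a₀ ≤ 1 := hle1 a₀ ha₀.le
          rw [le_div_iff₀ (by linarith : (0:ℝ) < -B)]
          nlinarith
        have hIoiInv : IntegrableOn (fun t => (v t)⁻¹) (Ioi a₀) := by
          refine integrableOn_Ioi_of_intervalIntegral_norm_bounded
            (1 / (-B)) a₀ (fun i : ℝ => ?_) tendsto_id ?_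
          · simp only [id_eq]
            rcases le_or_gt i a₀ with hia | hia
            · rw [Ioc_eq_empty (not_lt.mpr hia)]; exact integrableOn_empty
            · refine (((ContinuousOn.inv₀ (hvcont.mono (fun x hx => ha₀.le.trans hx.1))
                (fun x hx => (hvpos x (ha₀.le.trans hx.1)).ne')).integrableOn_compact
                (isCompact_Icc (a := a₀) (b := i))).mono_set Ioc_subset_Icc_self)
          · filter_upwards [eventually_ge_atTop a₀] with i hi
            simp only [id_eq]
            have hnorm : ∫ x in a₀..i, ‖(v x)⁻¹‖ = ∫ x in a₀..i, (v x)⁻¹ := by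
              refine intervalIntegral.integral_congr ?_
              intro x hx
              rw [uIcc_of_le hi] at hx
              exact Real.norm_of_nonneg (inv_nonneg.mpr (hvpos x (ha₀.le.trans hx.1)).le)
            rw [hnorm]
            exact hinv i hi
        have hIciInv : IntegrableOn (fun t => (v t)⁻¹) (Ici R₀) := by
          refine stmt9_integrableOn_Ici ha₀.le ?_ hIoiInv
          exact ((ContinuousOn.inv₀ (hvcont.mono Icc_subset_Ici_self)
            (fun x hx => (hvpos x hx.1).ne')).integrableOn_compact isCompact_Icc)
        exact stmt9_not_both hvpos hIciInv hiv
    intro a ha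
    have huniq := tendsto_nhds_unique (hwtends a ha) hB
    rw [hB0] at huniq
    linarith
  -- continuity of the tail integral of v and of F
  have hJsplit : IntegrableOn v (Ici R₀) → ∀ r, R₀ ≤ r →
      (∫ t in Ioi r, v t) = (∫ t in Ioi R₀, v t) - ∫ t in Ioc R₀ r, v t := by
    intro hiv r hr
    have hu : Ioc R₀ r ∪ Ioi r = Ioi R₀ := Ioc_union_Ioi_eq_Ioi hr
    have hdisj : Disjoint (Ioc R₀ r) (Ioi r) :=
      Set.disjoint_left.mpr (fun x hx hx2 => absurd hx.2 (not_le.mpr hx2))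
    have hivI : IntegrableOn v (Ioi R₀) := hiv.mono_set Ioi_subset_Ici_self
    have := setIntegral_union hdisj measurableSet_Ioi
      (hivI.mono_set (fun x hx => hx.1)) (hivI.mono_set (fun x hx => lt_of_le_of_lt hr hx))
    rw [hu] at this
    linarith
  have hFcont : IntegrableOn v (Ici R₀) → ∀ X : ℝ,
      ContinuousOn (fun r => (∫ t in Ioi r, v t) / v r) (Icc R₀ X) := by
    intro hiv X
    refine ContinuousOn.div ?_ (hvcont.mono Icc_subset_Ici_self)
      (fun x hx => (hvpos x hx.1).ne')
    have hP : ContinuousOn (fun r => ∫ t in Ioc R₀ r, v t) (Icc R₀ X) :=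
      intervalIntegral.continuousOn_primitive
        ((hvcont.mono Icc_subset_Ici_self).integrableOn_compact isCompact_Icc)
    have hC : ContinuousOn (fun _ : ℝ => (∫ t in Ioi R₀, v t)) (Icc R₀ X) := continuousOn_const
    refine (hC.sub hP).congr ?_
    intro r hr
    exact hJsplit hiv r hr.1
  have hJnn : ∀ r, R₀ ≤ r → 0 ≤ ∫ t in Ioi r, v t := fun r hr =>
    setIntegral_nonneg measurableSet_Ioi (fun x hx => (hvpos x (hr.trans hx.le)).le)
  have hFnn : ∀ r, R₀ ≤ r → 0 ≤ (∫ t in Ioi r, v t) / v r := fun r hr =>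
    div_nonneg (hJnn r hr) (hvpos r hr).le
  -- Case 3 : F not integrable (with v integrable) implies L = 0
  have hC3 : IntegrableOn v (Ici R₀) →
      ¬ IntegrableOn (fun r => (∫ t in Ioi r, v t) / v r) (Ici R₀) → L = 0 := by
    intro hiv hnF
    by_contra hL0
    have hLpos : 0 < L := lt_of_le_of_ne hLnn (Ne.symm hL0)
    have hident := hIdent hiv
    have hvhm : IntegrableOn (fun t => v t * h t) (Ici R₀) := by
      refine Integrable.mono' hiv ((hvcont.mul hhcont).aestronglyMeasurable measurableSet_Ici) ?_
      refine ae_restrict_of_forall_mem measurableSet_Ici fun t ht => ?_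
      have h1 := (hvpos t ht).le
      have h2 := (hhpos t ht).le
      rw [Real.norm_eq_abs, abs_of_nonneg (by positivity)]
      calc v t * h t ≤ v t * 1 := mul_le_mul_of_nonneg_left (hle1 t ht) h1
        _ = v t := mul_one _
    have hkey : ∀ x, R₀ < x → lam * L * ((∫ t in Ioi x, v t) / v x) ≤ - deriv h x := by
      intro x hx
      have hwx := hident x hx
      have hmono2 : L * (∫ t in Ioi x, v t) ≤ ∫ t in Ioi x, v t * h t := by
        have hm := setIntegral_mono_on
          ((hiv.mono_set (fun y hy => hx.le.trans hy.le)).const_mul L)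
          (hvhm.mono_set (fun y hy => hx.le.trans hy.le)) measurableSet_Ioi
          (fun y hy => ?_)
        · rwa [integral_const_mul] at hm
        · have hyI : y ∈ Ici R₀ := hx.le.trans hy.le
          calc L * v y = v y * L := mul_comm _ _
            _ ≤ v y * h y := mul_le_mul_of_nonneg_left (hLle y hyI) (hvpos y hyI).le
      have hvx := hvpos x hx.le
      have hrfl : w x = v x * deriv h x := rfl
      rw [← mul_div_assoc, div_le_iff₀ hvx]
      nlinarith [mul_le_mul_of_nonneg_left hmono2 hlam.le]
    have ha : R₀ < R₀ + 1 := by linarith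
    set a : ℝ := R₀ + 1 with ha_def
    have hbound : ∀ r, a ≤ r → ∫ t in a..r, (∫ s in Ioi t, v s) / v t ≤ 1 / (lam * L) := by
      intro r hr
      have hFT := FTCh a r ha hr
      have hFintIcc : IntervalIntegrable (fun t => (∫ s in Ioi t, v s) / v t) volume a r := by
        apply ContinuousOn.intervalIntegrable
        apply (hFcont hiv r).mono
        rw [uIcc_of_le hr]
        exact fun x hx => ⟨ha.le.trans hx.1, hx.2⟩
      have hm : (∫ t in a..r, lam * L * ((∫ s in Ioi t, v s) / v t)) ≤
          ∫ t in a..r, - deriv h t := by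
        refine intervalIntegral.integral_mono_on hr (hFintIcc.const_mul _) ?_ ?_
        · apply ContinuousOn.intervalIntegrable
          apply ContinuousOn.neg
          apply hdcont.mono
          rw [uIcc_of_le hr]
          exact fun x hx => lt_of_lt_of_le ha hx.1
        · exact fun x hx => hkey x (lt_of_lt_of_le ha hx.1)
      rw [intervalIntegral.integral_const_mul, intervalIntegral.integral_neg] at hm
      have h1a : h a ≤ 1 := hle1 a ha.le
      have hLr : L ≤ h r := hLle r (ha.le.trans hr)
      rw [le_div_iff₀ (by positivity)]
      nlinarith
    have hIoiF : IntegrableOn (fun t => (∫ s in Ioi t, v s) / v t) (Ioi a) := by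
      refine integrableOn_Ioi_of_intervalIntegral_norm_bounded
        (1 / (lam * L)) a (fun i : ℝ => ?_) tendsto_id ?_
      · simp only [id_eq]
        rcases le_or_gt i a with hia | hia
        · rw [Ioc_eq_empty (not_lt.mpr hia)]; exact integrableOn_empty
        · exact ((((hFcont hiv i).mono
            (fun x hx => ⟨ha.le.trans hx.1, hx.2⟩)).integrableOn_compact
            (isCompact_Icc (a := a) (b := i))).mono_set Ioc_subset_Icc_self)
      · filter_upwards [eventually_ge_atTop a] with i hi
        simp only [id_eq]
        have hnorm : ∫ x in a..i, ‖(∫ s in Ioi x, v s) / v x‖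
            = ∫ x in a..i, (∫ s in Ioi x, v s) / v x := by
          refine intervalIntegral.integral_congr ?_
          intro x hx
          rw [uIcc_of_le hi] at hx
          exact Real.norm_of_nonneg (hFnn x (ha.le.trans hx.1))
        rw [hnorm]
        exact hbound i hi
    exact hnF (stmt9_integrableOn_Ici ha.le
      (((hFcont hiv a).integrableOn_compact isCompact_Icc)) hIoiF)
  -- forward direction: if h → 0 but v and F are integrable, contradiction
  have hFwd : Tendsto h atTop (nhds 0) → IntegrableOn v (Ici R₀) →
      IntegrableOn (fun r => (∫ t in Ioi r, v t) / v r) (Ici R₀) → False := by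
    intro h0 hiv hiF
    have hident := hIdent hiv
    have hvhm : IntegrableOn (fun t => v t * h t) (Ici R₀) := by
      refine Integrable.mono' hiv ((hvcont.mul hhcont).aestronglyMeasurable measurableSet_Ici) ?_
      refine ae_restrict_of_forall_mem measurableSet_Ici fun t ht => ?_
      have h1 := (hvpos t ht).le
      have h2 := (hhpos t ht).le
      rw [Real.norm_eq_abs, abs_of_nonneg (by positivity)]
      calc v t * h t ≤ v t * 1 := mul_le_mul_of_nonneg_left (hle1 t ht) h1
        _ = v t := mul_one _
    have hFsplit : ∀ a, R₀ ≤ a → (∫ t in Ioi a, (∫ s in Ioi t, v s) / v t)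
        = (∫ t in Ioi R₀, (∫ s in Ioi t, v s) / v t)
          - ∫ t in Ioc R₀ a, (∫ s in Ioi t, v s) / v t := by
      intro a ha
      have hu : Ioc R₀ a ∪ Ioi a = Ioi R₀ := Ioc_union_Ioi_eq_Ioi ha
      have hdisj : Disjoint (Ioc R₀ a) (Ioi a) :=
        Set.disjoint_left.mpr (fun x hx hx2 => absurd hx.2 (not_le.mpr hx2))
      have hiFI : IntegrableOn (fun t => (∫ s in Ioi t, v s) / v t) (Ioi R₀) :=
        hiF.mono_set Ioi_subset_Ici_self
      have := setIntegral_union hdisj measurableSet_Ioi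
        (hiFI.mono_set (fun x hx => hx.1)) (hiFI.mono_set (fun x hx => lt_of_le_of_lt ha hx))
      rw [hu] at this
      linarith
    have hTtends : Tendsto (fun a => ∫ t in Ioi a, (∫ s in Ioi t, v s) / v t) atTop
        (nhds 0) := by
      have h1 : Tendsto (fun r => ∫ t in R₀..r, (∫ s in Ioi t, v s) / v t) atTop
          (nhds (∫ t in Ioi R₀, (∫ s in Ioi t, v s) / v t)) :=
        intervalIntegral_tendsto_integral_Ioi R₀ (hiF.mono_set Ioi_subset_Ici_self) tendsto_id
      have h2 : Tendsto (fun a => (∫ t in Ioi R₀, (∫ s in Ioi t, v s) / v t)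
          - ∫ t in R₀..a, (∫ s in Ioi t, v s) / v t) atTop
          (nhds ((∫ t in Ioi R₀, (∫ s in Ioi t, v s) / v t)
            - ∫ t in Ioi R₀, (∫ s in Ioi t, v s) / v t)) :=
        tendsto_const_nhds.sub h1
      rw [sub_self] at h2
      refine Tendsto.congr' ?_ h2
      filter_upwards [eventually_ge_atTop R₀] with a ha'
      rw [intervalIntegral.integral_of_le ha']
      exact (hFsplit a ha').symm
    obtain ⟨a, haR, hta⟩ : ∃ a, R₀ < a ∧
        lam * (∫ t in Ioi a, (∫ s in Ioi t, v s) / v t) ≤ 1/2 := by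
      have hev1 : ∀ᶠ a in atTop,
          (∫ t in Ioi a, (∫ s in Ioi t, v s) / v t) < 1/(2*lam) :=
        hTtends.eventually_lt_const (by positivity)
      obtain ⟨a, h1, h2⟩ := (hev1.and (eventually_gt_atTop R₀)).exists
      refine ⟨a, h2, ?_⟩
      have hl : 0 < 2 * lam := by linarith
      rw [lt_div_iff₀ hl] at h1
      linarith
    have hkey2 : ∀ x, a ≤ x → - deriv h x ≤ lam * h a * ((∫ s in Ioi x, v s) / v x) := by
      intro x hxa
      have hx : R₀ < x := lt_of_lt_of_le haR hxa
      have hwx := hident x hx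
      have hmono2 : (∫ t in Ioi x, v t * h t) ≤ h a * ∫ t in Ioi x, v t := by
        have hm := setIntegral_mono_on
          (hvhm.mono_set (fun y hy => hx.le.trans hy.le))
          ((hiv.mono_set (fun y hy => hx.le.trans hy.le)).const_mul (h a))
          measurableSet_Ioi (fun y hy => ?_)
        · rwa [integral_const_mul] at hm
        · have hyI : y ∈ Ici R₀ := hx.le.trans hy.le
          have hya : h y ≤ h a := hanti haR.le hyI (hxa.trans hy.le)
          calc v y * h y ≤ v y * h a := mul_le_mul_of_nonneg_left hya (hvpos y hyI).le
            _ = h a * v y := mul_comm _ _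
      have hvx := hvpos x hx.le
      have hrfl : w x = v x * deriv h x := rfl
      rw [← mul_div_assoc, le_div_iff₀ hvx]
      nlinarith [mul_le_mul_of_nonneg_left hmono2 hlam.le]
    have hlow : ∀ r, a ≤ r → h a / 2 ≤ h r := by
      intro r hr
      have hFT := FTCh a r haR hr
      have hFintIcc : IntervalIntegrable (fun t => (∫ s in Ioi t, v s) / v t) volume a r := by
        apply ContinuousOn.intervalIntegrable
        apply (hFcont hiv r).mono
        rw [uIcc_of_le hr]
        exact fun x hx => ⟨haR.le.trans hx.1, hx.2⟩
      have hm : (∫ t in a..r, - deriv h t) ≤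
          ∫ t in a..r, lam * h a * ((∫ s in Ioi t, v s) / v t) := by
        refine intervalIntegral.integral_mono_on hr ?_ (hFintIcc.const_mul _) ?_
        · apply ContinuousOn.intervalIntegrable
          apply ContinuousOn.neg
          apply hdcont.mono
          rw [uIcc_of_le hr]
          exact fun x hx => lt_of_lt_of_le haR hx.1
        · exact fun x hx => hkey2 x hx.1
      rw [intervalIntegral.integral_neg, intervalIntegral.integral_const_mul] at hm
      have hIocIoi : (∫ t in a..r, (∫ s in Ioi t, v s) / v t)
          ≤ ∫ t in Ioi a, (∫ s in Ioi t, v s) / v t := by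
        rw [intervalIntegral.integral_of_le hr]
        refine setIntegral_mono_set (hiF.mono_set (fun y hy => haR.le.trans hy.le)) ?_ ?_
        · exact ae_restrict_of_forall_mem measurableSet_Ioi
            (fun t ht => hFnn t (haR.le.trans ht.le))
        · exact HasSubset.Subset.eventuallyLE Ioc_subset_Ioi_self
      have hha := hhpos a haR.le
      nlinarith [mul_le_mul_of_nonneg_left hIocIoi (mul_nonneg hlam.le hha.le),
        mul_le_mul_of_nonneg_left hta hha.le]
    have hcon : h a / 2 ≤ 0 := by
      refine ge_of_tendsto h0 ?_
      filter_upwards [eventually_ge_atTop a] with r hr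
      exact hlow r hr
    linarith [hhpos a haR.le]
  -- final assembly
  have hFic : (fun r => (∫ t in Ici r, v t) / g r ^ k)
      = fun r => (∫ t in Ioi r, v t) / v r := by
    funext r
    rw [integral_Ici_eq_integral_Ioi]
  constructor
  · intro h0
    by_contra hcon
    push_neg at hcon
    obtain ⟨hn1, hn2, hn3⟩ := hcon
    rw [hFic] at hn3
    exact hFwd h0 hn2 hn3
  · intro hdis
    have hL0 : L = 0 := by
      rcases hdis with c1 | c2 | c3
      · exact Civ (fun hiv => stmt9_not_both hvpos c1 hiv)
      · exact Civ c2
      · by_cases hiv : IntegrableOn v (Ici R₀)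
        · rw [hFic] at c3
          exact hC3 hiv c3
        · exact Civ hiv
    rwa [hL0] at hLtends
end

section
/- Let λ > 0 and a < b₁ ≤ b₂ be real numbers, and let c : [a, b₂] → ℝ be continuous. Suppose h₁ : [a, b₁] → ℝ and h₂ : [a, b₂] → ℝ are twice continuously differentiable and satisfy h_i''(r) + c(r)·h_i'(r) = λ·h_i(r) on their domains, with h₁(a) = h₂(a) = 1, h₁(b₁) = 0, and h₂(b₂) = 0. Then h₁(r) ≤ h₂(r) for all r ∈ [a, b₁]. -/
open Set MeasureTheory Filter Topology

/-- At an interior minimum of a function on `[x, y]`, the second derivative is nonnegative. -/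
lemma aux_secondDeriv_nonneg {f : ℝ → ℝ} {x y r₀ : ℝ} (hr : r₀ ∈ Set.Ioo x y)
    (hcont : ContinuousOn f (Set.Icc x y))
    (hdiff : ∀ r ∈ Set.Ioo x y, DifferentiableAt ℝ f r)
    (hdiff2 : DifferentiableAt ℝ (deriv f) r₀)
    (hmin : ∀ r ∈ Set.Icc x y, f r₀ ≤ f r) :
    0 ≤ deriv (deriv f) r₀ := by
  have hnhds : Set.Icc x y ∈ 𝓝 r₀ :=
    mem_nhds_iff.2 ⟨Set.Ioo x y, Set.Ioo_subset_Icc_self, isOpen_Ioo, hr⟩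
  have hloc : IsLocalMin f r₀ := Filter.eventually_iff_exists_mem.2 ⟨_, hnhds, hmin⟩
  have hd0 : deriv f r₀ = 0 := hloc.deriv_eq_zero
  by_contra hneg
  push_neg at hneg
  have hslope : Filter.Tendsto (slope (deriv f) r₀) (𝓝[≠] r₀) (𝓝 (deriv (deriv f) r₀)) :=
    hasDerivAt_iff_tendsto_slope.1 hdiff2.hasDerivAt
  have hev : ∀ᶠ z in 𝓝[≠] r₀, slope (deriv f) r₀ z < 0 :=
    hslope.eventually (Filter.Tendsto.eventually_lt_const hneg Filter.tendsto_id)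
  have hev' : ∀ᶠ z in 𝓝[>] r₀, deriv f z < 0 := by
    filter_upwards [nhdsWithin_mono r₀ (fun z hz => ne_of_gt hz : Set.Ioi r₀ ⊆ {r₀}ᶜ) hev,
      self_mem_nhdsWithin] with z hz hz'
    have heq : slope (deriv f) r₀ z = deriv f z / (z - r₀) := by
      simp [slope_def_field, hd0, div_eq_inv_mul]
    rw [heq] at hz
    have hzpos : 0 < z - r₀ := sub_pos.2 hz'
    rcases div_neg_iff.1 hz with ⟨_, h⟩ | ⟨h, _⟩
    · linarith
    · exact h
  obtain ⟨u, hu, hsub⟩ := mem_nhdsGT_iff_exists_Ioo_subset.1 hev'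
  set t := min u y with ht
  have hrt : r₀ < t := lt_min hu hr.2
  have hanti : StrictAntiOn f (Set.Icc r₀ t) := by
    apply strictAntiOn_of_deriv_neg (convex_Icc _ _)
    · exact hcont.mono (Set.Icc_subset_Icc hr.1.le (min_le_right _ _))
    · intro z hz
      rw [interior_Icc] at hz
      exact hsub ⟨hz.1, hz.2.trans_le (min_le_left _ _)⟩
  have := hanti (Set.left_mem_Icc.2 hrt.le) (Set.right_mem_Icc.2 hrt.le) hrt
  have := hmin t ⟨hr.1.le.trans hrt.le, min_le_right _ _⟩
  linarith

/-- Minimum principle: a solution of `f'' + c f' = λ f` with nonnegative boundary values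
is nonnegative. -/
lemma aux_maxprinc (lam x y : ℝ) (hlam : 0 < lam) (c f : ℝ → ℝ)
    (hcont : ContinuousOn f (Set.Icc x y))
    (hdiff : ∀ r ∈ Set.Ioo x y, DifferentiableAt ℝ f r)
    (hdiff2 : ∀ r ∈ Set.Ioo x y, DifferentiableAt ℝ (deriv f) r)
    (hode : ∀ r ∈ Set.Ioo x y, deriv (deriv f) r + c r * deriv f r = lam * f r)
    (hx : 0 ≤ f x) (hy : 0 ≤ f y) : ∀ r ∈ Set.Icc x y, 0 ≤ f r := by
  intro r hr
  have hxy : x ≤ y := hr.1.trans hr.2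
  obtain ⟨r₀, hr₀, hmin⟩ := isCompact_Icc.exists_isMinOn (Set.nonempty_Icc.2 hxy) hcont
  have hmin' : ∀ z ∈ Set.Icc x y, f r₀ ≤ f z := hmin
  by_contra hltc
  push_neg at hltc
  have hfr₀ : f r₀ < 0 := lt_of_le_of_lt (hmin' r hr) hltc
  have hio : r₀ ∈ Set.Ioo x y := by
    rcases eq_or_lt_of_le hr₀.1 with h | h
    · exact absurd (h ▸ hx) (not_le.2 hfr₀)
    rcases eq_or_lt_of_le hr₀.2 with h2 | h2
    · exact absurd (h2 ▸ hy) (not_le.2 hfr₀)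
    exact ⟨h, h2⟩
  have hnhds : Set.Icc x y ∈ 𝓝 r₀ :=
    mem_nhds_iff.2 ⟨Set.Ioo x y, Set.Ioo_subset_Icc_self, isOpen_Ioo, hio⟩
  have hloc : IsLocalMin f r₀ := Filter.eventually_iff_exists_mem.2 ⟨_, hnhds, hmin'⟩
  have hd0 : deriv f r₀ = 0 := hloc.deriv_eq_zero
  have hsec : 0 ≤ deriv (deriv f) r₀ :=
    aux_secondDeriv_nonneg hio hcont hdiff (hdiff2 _ hio) hmin'
  have := hode r₀ hio
  rw [hd0] at this
  nlinarith

/-- monotonicity in the domain of Dirichlet solutions of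
`h'' + c h' = λ h` with boundary values `1` at `a` and `0` at the outer endpoint:
if `b₁ ≤ b₂` then `h₁ ≤ h₂` on `[a, b₁]`. -/
theorem stmt_11 (lam a b₁ b₂ : ℝ) (hlam : 0 < lam) (hab : a < b₁) (hbb : b₁ ≤ b₂)
    (c h₁ h₂ : ℝ → ℝ)
    (hc : ContinuousOn c (Set.Icc a b₂))
    (hh₁ : ContDiffOn ℝ 2 h₁ (Set.Icc a b₁))
    (hh₂ : ContDiffOn ℝ 2 h₂ (Set.Icc a b₂))
    (hode₁ : ∀ r ∈ Set.Icc a b₁,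
      deriv (deriv h₁) r + c r * deriv h₁ r = lam * h₁ r)
    (hode₂ : ∀ r ∈ Set.Icc a b₂,
      deriv (deriv h₂) r + c r * deriv h₂ r = lam * h₂ r)
    (hva₁ : h₁ a = 1) (hva₂ : h₂ a = 1)
    (hvb₁ : h₁ b₁ = 0) (hvb₂ : h₂ b₂ = 0) :
    ∀ r ∈ Set.Icc a b₁, h₁ r ≤ h₂ r := by
    -- differentiability facts on the open intervals
  have key : ∀ (b : ℝ) (h : ℝ → ℝ), ContDiffOn ℝ 2 h (Set.Icc a b) →
      (∀ r ∈ Set.Ioo a b, DifferentiableAt ℝ h r ∧ DifferentiableAt ℝ (deriv h) r) := by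
    intro b h hh r hr
    have hopen : ContDiffOn ℝ 2 h (Set.Ioo a b) := hh.mono Set.Ioo_subset_Icc_self
    have hmem : Set.Ioo a b ∈ 𝓝 r := isOpen_Ioo.mem_nhds hr
    constructor
    · exact ((hopen.differentiableOn (by norm_num)) r hr).differentiableAt hmem
    · have : ContDiffOn ℝ 1 (deriv h) (Set.Ioo a b) :=
        hopen.deriv_of_isOpen isOpen_Ioo (by norm_num)
      exact ((this.differentiableOn one_ne_zero) r hr).differentiableAt hmem
  -- step 1 : h₂ ≥ 0 on [a, b₂]
  have hab₂ : a < b₂ := hab.trans_le hbb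
  have h₂nonneg : ∀ r ∈ Set.Icc a b₂, 0 ≤ h₂ r := by
    apply aux_maxprinc lam a b₂ hlam c h₂ (hh₂.continuousOn)
      (fun r hr => (key b₂ h₂ hh₂ r hr).1) (fun r hr => (key b₂ h₂ hh₂ r hr).2)
      (fun r hr => hode₂ r (Set.Ioo_subset_Icc_self hr))
    · rw [hva₂]; norm_num
    · rw [hvb₂]
  -- step 2 : g = h₂ - h₁ ≥ 0 on [a, b₁]
  set g : ℝ → ℝ := fun r => h₂ r - h₁ r with hg
  have hsub : Set.Icc a b₁ ⊆ Set.Icc a b₂ := Set.Icc_subset_Icc_right hbb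
  have hsub' : Set.Ioo a b₁ ⊆ Set.Ioo a b₂ := Set.Ioo_subset_Ioo_right hbb
  have hderiv_g : ∀ r ∈ Set.Ioo a b₁, deriv g r = deriv h₂ r - deriv h₁ r := by
    intro r hr
    exact deriv_sub (key b₂ h₂ hh₂ r (hsub' hr)).1 (key b₁ h₁ hh₁ r hr).1
  have hevg : ∀ r ∈ Set.Ioo a b₁, deriv g =ᶠ[𝓝 r] fun z => deriv h₂ z - deriv h₁ z := by
    intro r hr
    filter_upwards [isOpen_Ioo.mem_nhds hr] with z hz using hderiv_g z hz
  have hg_nonneg : ∀ r ∈ Set.Icc a b₁, 0 ≤ g r := by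
    apply aux_maxprinc lam a b₁ hlam c g
      ((hh₂.continuousOn.mono hsub).sub hh₁.continuousOn)
    · intro r hr
      exact ((key b₂ h₂ hh₂ r (hsub' hr)).1).sub (key b₁ h₁ hh₁ r hr).1
    · intro r hr
      have : DifferentiableAt ℝ (fun z => deriv h₂ z - deriv h₁ z) r :=
        ((key b₂ h₂ hh₂ r (hsub' hr)).2).sub (key b₁ h₁ hh₁ r hr).2
      exact this.congr_of_eventuallyEq (hevg r hr)
    · intro r hr
      have hdd : deriv (deriv g) r = deriv (deriv h₂) r - deriv (deriv h₁) r := by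
        rw [(hevg r hr).deriv_eq]
        exact deriv_sub (key b₂ h₂ hh₂ r (hsub' hr)).2 (key b₁ h₁ hh₁ r hr).2
      rw [hdd, hderiv_g r hr]
      have e₁ := hode₁ r (Set.Ioo_subset_Icc_self hr)
      have e₂ := hode₂ r (hsub (Set.Ioo_subset_Icc_self hr))
      simp only [hg]
      ring_nf
      ring_nf at e₁ e₂
      linarith
    · simp [hg, hva₁, hva₂]
    · simp only [hg, hvb₁, sub_zero]
      exact h₂nonneg b₁ ⟨hab.le, hbb⟩
  intro r hr
  have := hg_nonneg r hr
  simp only [hg] at this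
  linarith
end

section
/- Let α > 0, β > 2, and λ > 0 be real numbers, and define g : [10, ∞) → ℝ by g(r) = exp(−α·r^β). Suppose h : [10, ∞) → ℝ is a bounded, twice continuously differentiable function with h(r) > 0 for all r ≥ 10, h(10) = 1, and h''(r) + (g'(r)/g(r))·h'(r) = λ·h(r) for all r ≥ 10. Then h is strictly decreasing and converges, as r → +∞, to a strictly positive limit; in particular h(r) does not tend to 0. -/
open Set MeasureTheory Filter Real

private lemma aux_linear (f : ℝ → ℝ) (a δ : ℝ)
    (hcont : ContinuousOn f (Set.Ici a))
    (hder : ∀ x ∈ Set.Ioi a, HasDerivAt f (deriv f x) x)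
    (hδ : ∀ x ∈ Set.Ioi a, δ ≤ deriv f x) :
    ∀ r ∈ Set.Ici a, f a + δ * (r - a) ≤ f r := by
  intro r hr
  have hkd : ∀ x ∈ Set.Ioi a, HasDerivAt (fun t => f t - δ * t) (deriv f x - δ) x := by
    intro x hx
    simpa using (hder x hx).fun_sub ((hasDerivAt_id x).const_mul δ)
  have hmono : MonotoneOn (fun t => f t - δ * t) (Set.Ici a) := by
    apply monotoneOn_of_deriv_nonneg (convex_Ici a)
    · exact hcont.sub (continuous_const.mul continuous_id).continuousOn
    · intro x hx
      rw [interior_Ici] at hx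
      exact (hkd x hx).differentiableAt.differentiableWithinAt
    · intro x hx
      rw [interior_Ici] at hx
      rw [(hkd x hx).deriv]
      linarith [hδ x hx]
  have hle := hmono self_mem_Ici hr hr
  simp only at hle
  nlinarith [hle]

private lemma bern (β : ℝ) (hβ : 1 ≤ β) {r t : ℝ} (hr : 0 < r) (hrt : r ≤ t) :
    r ^ β + β * r ^ (β - 1) * (t - r) ≤ t ^ β := by
  have hs : (0:ℝ) ≤ (t - r) / r := div_nonneg (by linarith) hr.le
  have key : 1 + β * ((t - r) / r) ≤ (1 + (t - r) / r) ^ β :=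
    one_add_mul_self_le_rpow_one_add (by linarith) hβ
  have h1 : (1 + (t - r) / r) = t / r := by field_simp; ring
  rw [h1, Real.div_rpow (by linarith : (0:ℝ) ≤ t) hr.le] at key
  have hrβ : (0:ℝ) < r ^ β := Real.rpow_pos_of_pos hr β
  have hrb : r ^ (β - 1) = r ^ β / r := by
    rw [Real.rpow_sub hr, Real.rpow_one]
  have hmul := mul_le_mul_of_nonneg_right key hrβ.le
  have hcan : t ^ β / r ^ β * r ^ β = t ^ β := div_mul_cancel₀ _ hrβ.ne'
  rw [hcan] at hmul
  calc r ^ β + β * r ^ (β - 1) * (t - r)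
      = (1 + β * ((t - r) / r)) * r ^ β := by rw [hrb]; field_simp
    _ ≤ t ^ β := hmul

/-- with `g(r) = exp(-α r^β)` (`α > 0`, `β > 2`), a bounded positive
solution of `h'' + (g'/g) h' = λ h` on `[10,∞)` with `h(10) = 1` is strictly
decreasing and converges to a strictly positive limit; in particular `h` does
not tend to `0` (the 2-dimensional model is not Feller). -/
theorem stmt_13 (α β lam : ℝ) (hα : 0 < α) (hβ : 2 < β) (hlam : 0 < lam)
    (g h : ℝ → ℝ)
    (hgdef : ∀ r : ℝ, g r = Real.exp (-(α * r ^ β)))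
    (hbdd : ∃ C : ℝ, ∀ r ∈ Set.Ici (10 : ℝ), h r ≤ C)
    (hh : ContDiffOn ℝ 2 h (Set.Ici (10 : ℝ)))
    (hhpos : ∀ r ∈ Set.Ici (10 : ℝ), 0 < h r)
    (hval : h 10 = 1)
    (hode : ∀ r ∈ Set.Ici (10 : ℝ),
      deriv (deriv h) r + (deriv g r / g r) * deriv h r = lam * h r) :
    StrictAntiOn h (Set.Ici (10 : ℝ)) ∧
    (∃ L : ℝ, 0 < L ∧ Filter.Tendsto h Filter.atTop (nhds L)) ∧
    ¬ Filter.Tendsto h Filter.atTop (nhds 0) := by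
  obtain ⟨C, hC⟩ := hbdd
  have hgeq : g = fun r : ℝ => Real.exp (-(α * r ^ β)) := funext hgdef
  subst hgeq
  have hαβ : 0 < α * β := by positivity
  -- basic facts about g
  have hgpos : ∀ r : ℝ, 0 < Real.exp (-(α * r ^ β)) := fun r => Real.exp_pos _
  have hgle1 : ∀ r : ℝ, 0 < r → Real.exp (-(α * r ^ β)) ≤ 1 := by
    intro r hr
    rw [Real.exp_le_one_iff]
    have : (0:ℝ) < r ^ β := Real.rpow_pos_of_pos hr β
    nlinarith
  have hgd : ∀ x : ℝ, 0 < x →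
      HasDerivAt (fun r : ℝ => Real.exp (-(α * r ^ β)))
        (-(α * β * x ^ (β - 1)) * Real.exp (-(α * x ^ β))) x := by
    intro x hx
    have h1 : HasDerivAt (fun r : ℝ => r ^ β) (β * x ^ (β - 1)) x :=
      Real.hasDerivAt_rpow_const (Or.inl hx.ne')
    have h3 := ((h1.const_mul α).fun_neg).exp
    convert h3 using 1
    ring
  -- differentiability of h and deriv h at interior points
  have hkey : ∀ x ∈ Set.Ioi (10:ℝ), HasDerivAt h (deriv h x) x ∧
      HasDerivAt (deriv h) (deriv (deriv h) x) x := by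
    intro x hx
    have hnb : Set.Ici (10:ℝ) ∈ nhds x := Ici_mem_nhds hx
    have h2 : ContDiffAt ℝ 2 h x := hh.contDiffAt hnb
    have hd : DifferentiableAt ℝ h x := h2.differentiableAt (by norm_num)
    have h1 : ContDiffAt ℝ 1 (fderiv ℝ h) x := h2.fderiv_right (by norm_num)
    have h2d : DifferentiableAt ℝ (fun y => fderiv ℝ h y 1) x :=
      (h1.differentiableAt one_ne_zero).clm_apply (differentiableAt_const 1)
    have heq : deriv h = fun y => fderiv ℝ h y 1 := funext fun y => (fderiv_apply_one_eq_deriv).symm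
    have hd2 : DifferentiableAt ℝ (deriv h) x := by rw [heq]; exact h2d
    exact ⟨hd.hasDerivAt, hd2.hasDerivAt⟩
  -- ODE rewritten
  have hode' : ∀ x ∈ Set.Ioi (10:ℝ), deriv (deriv h) x
      = α * β * x ^ (β - 1) * deriv h x + lam * h x := by
    intro x hx
    have hx10 : (10:ℝ) < x := hx
    have hx0 : (0:ℝ) < x := by linarith
    have h0 := hode x (le_of_lt hx10)
    rw [(hgd x hx0).deriv] at h0
    have hgx := (hgpos x).ne'
    have hdivg : -(α * β * x ^ (β - 1)) * Real.exp (-(α * x ^ β)) / Real.exp (-(α * x ^ β))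
        = -(α * β * x ^ (β - 1)) := by field_simp
    rw [hdivg] at h0
    linarith
  -- B := g * h' has positive derivative
  set Bf : ℝ → ℝ := fun t => Real.exp (-(α * t ^ β)) * deriv h t with hBf
  have hB : ∀ x ∈ Set.Ioi (10:ℝ), HasDerivAt Bf (lam * (Real.exp (-(α * x ^ β)) * h x)) x := by
    intro x hx
    have hx0 : (0:ℝ) < x := by have : (10:ℝ) < x := hx; linarith
    have h1 : HasDerivAt (fun y => Real.exp (-(α * y ^ β)) * deriv h y) _ x :=
      (hgd x hx0).fun_mul (hkey x hx).2
    rw [hode' x hx] at h1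
    convert h1 using 1
    ring
  have hBcont : ContinuousOn Bf (Set.Ioi (10:ℝ)) := fun x hx =>
    ((hB x hx).continuousAt).continuousWithinAt
  have hBmono : StrictMonoOn Bf (Set.Ioi (10:ℝ)) := by
    apply strictMonoOn_of_deriv_pos (convex_Ioi 10) hBcont
    intro x hx
    rw [interior_Ioi] at hx
    rw [(hB x hx).deriv]
    have hx10 : (10:ℝ) < x := hx
    have := hhpos x (Set.mem_Ici.mpr (by linarith))
    have := hgpos x
    positivity
  -- Step E: deriv h < 0 on Ioi 10
  have hd_neg : ∀ x ∈ Set.Ioi (10:ℝ), deriv h x < 0 := by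
    by_contra hcon
    push_neg at hcon
    obtain ⟨r0, hr0, hd0⟩ := hcon
    have hr0' : (10:ℝ) < r0 := hr0
    obtain ⟨r1, hr1def⟩ : ∃ r1 : ℝ, r1 = r0 + 1 := ⟨_, rfl⟩
    have hr1 : r1 ∈ Set.Ioi (10:ℝ) := by simp only [Set.mem_Ioi]; linarith
    have hB1 : 0 < Bf r1 := by
      have h1 : Bf r0 < Bf r1 := hBmono hr0 hr1 (by linarith)
      have h2 : 0 ≤ Bf r0 := mul_nonneg (hgpos r0).le hd0
      linarith
    have hdge : ∀ x ∈ Set.Ioi r1, Bf r1 ≤ deriv h x := by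
      intro x hx
      have hx1 : r1 < x := hx
      have hx10 : (10:ℝ) < x := by linarith
      have h1 : Bf r1 ≤ Bf x := (hBmono.monotoneOn) hr1 (by exact hx10) (by linarith)
      have h2 : Real.exp (-(α * x ^ β)) ≤ 1 := hgle1 x (by linarith)
      have h3 : 0 < Real.exp (-(α * x ^ β)) := hgpos x
      have h4 : 0 < deriv h x := by
        rcases lt_or_ge 0 (deriv h x) with hc | hc
        · exact hc
        · exfalso
          have : Bf x ≤ 0 := mul_nonpos_of_nonneg_of_nonpos h3.le hc
          linarith
      have h5 : Real.exp (-(α * x ^ β)) * deriv h x ≤ deriv h x := by nlinarith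
      have : Bf x = Real.exp (-(α * x ^ β)) * deriv h x := rfl
      linarith
    have hlin := aux_linear h r1 (Bf r1)
      (hh.continuousOn.mono (Set.Ici_subset_Ici.mpr (by linarith)))
      (fun x hx => (hkey x (by simp only [Set.mem_Ioi] at hx ⊢; linarith)).1)
      hdge
    obtain ⟨R, hRdef⟩ : ∃ R : ℝ, R = r1 + (C - h r1 + 1) / Bf r1 := ⟨_, rfl⟩
    have hCr1 : h r1 ≤ C := hC r1 (by simp only [Set.mem_Ici]; linarith)
    have hRge : r1 ≤ R := by
      have h0 : 0 ≤ (C - h r1 + 1) / Bf r1 := div_nonneg (by linarith) hB1.le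
      rw [hRdef]; linarith
    have hbound := hlin R (by simp only [Set.mem_Ici]; linarith)
    have hcan : Bf r1 * ((C - h r1 + 1) / Bf r1) = C - h r1 + 1 :=
      mul_div_cancel₀ _ hB1.ne'
    have hRsub : R - r1 = (C - h r1 + 1) / Bf r1 := by rw [hRdef]; ring
    rw [hRsub, hcan] at hbound
    have := hC R (by simp only [Set.mem_Ici]; linarith)
    linarith
  -- StrictAntiOn
  have hSA : StrictAntiOn h (Set.Ici (10:ℝ)) := by
    apply strictAntiOn_of_deriv_neg (convex_Ici 10) hh.continuousOn
    intro x hx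
    rw [interior_Ici] at hx
    exact hd_neg x hx
  have hanti : AntitoneOn h (Set.Ici (10:ℝ)) := hSA.antitoneOn
  -- Claim 1: B gets close to 0
  have hBsmall : ∀ ε : ℝ, 0 < ε → ∃ s ∈ Set.Ioi (10:ℝ), -ε ≤ Bf s := by
    intro ε hε
    by_contra hcon
    push_neg at hcon
    have hdle : ∀ x ∈ Set.Ioi (11:ℝ), ε ≤ deriv (fun t => -h t) x := by
      intro x hx
      have hx11 : (11:ℝ) < x := hx
      have hx10 : x ∈ Set.Ioi (10:ℝ) := by simp only [Set.mem_Ioi]; linarith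
      have h1 : Bf x < -ε := hcon x hx10
      have h2 : Real.exp (-(α * x ^ β)) ≤ 1 := hgle1 x (by linarith)
      have h3 : 0 < Real.exp (-(α * x ^ β)) := hgpos x
      have h4 : deriv h x < 0 := hd_neg x hx10
      have h5 : deriv h x ≤ Real.exp (-(α * x ^ β)) * deriv h x := by nlinarith
      have h6 : Bf x = Real.exp (-(α * x ^ β)) * deriv h x := rfl
      have h7 : deriv h x ≤ -ε := by linarith
      have h8 : deriv (fun t => -h t) x = -deriv h x := by
        exact ((hkey x hx10).1.neg).deriv
      linarith [h8 ▸ (by linarith : ε ≤ -deriv h x)]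
    have hlin := aux_linear (fun t => -h t) 11 ε
      ((hh.continuousOn.mono (Set.Ici_subset_Ici.mpr (by norm_num))).neg)
      (fun x hx => by
        have hx10 : x ∈ Set.Ioi (10:ℝ) := by
          simp only [Set.mem_Ioi] at hx ⊢; linarith
        have := (hkey x hx10).1.fun_neg
        rwa [this.deriv] )
      hdle
    have h11pos : 0 < h 11 := hhpos 11 (by norm_num)
    obtain ⟨R, hRdef⟩ : ∃ R : ℝ, R = 12 + h 11 / ε := ⟨_, rfl⟩
    have hR11 : (11:ℝ) ≤ R := by
      have h0 : 0 ≤ h 11 / ε := div_nonneg h11pos.le hε.le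
      rw [hRdef]; linarith
    have hbound := hlin R (by simp only [Set.mem_Ici]; linarith)
    have hcan : ε * (h 11 / ε) = h 11 := mul_div_cancel₀ _ hε.ne'
    have hRsub : ε * (R - 11) = h 11 + ε := by
      rw [hRdef]
      field_simp
      ring
    have hpos := hhpos R (by simp only [Set.mem_Ici]; linarith)
    nlinarith
  -- Claim 2: comparison estimate
  have hcomp : ∀ r ∈ Set.Ioi (10:ℝ), ∀ s : ℝ, r ≤ s →
      Bf s - lam * h r * Real.exp (-(α * r ^ β)) / (α * β * r ^ (β - 1)) ≤ Bf r := by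
    intro r hr s hrs
    have hr10 : (10:ℝ) < r := hr
    have hr0 : (0:ℝ) < r := by linarith
    set cr := α * β * r ^ (β - 1) with hcrdef
    have hcrpos : 0 < cr := by
      have := Real.rpow_pos_of_pos hr0 (β - 1)
      positivity
    have hhr : 0 < h r := hhpos r (by simp only [Set.mem_Ici]; linarith)
    set K := lam * h r * Real.exp (-(α * r ^ β)) / cr with hKdef
    have hK0 : 0 < K := by
      have := hgpos r
      positivity
    set F : ℝ → ℝ := fun t => -(K * Real.exp (-(cr * (t - r)))) with hFdef
    have hFd : ∀ t : ℝ, HasDerivAt F (K * cr * Real.exp (-(cr * (t - r)))) t := by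
      intro t
      have h1 : HasDerivAt (fun u : ℝ => -(cr * (u - r))) (-cr) t := by
        simpa using (((hasDerivAt_id t).sub_const r).const_mul cr).fun_neg
      have h3 : HasDerivAt (fun y => -(K * Real.exp (-(cr * (y - r))))) _ t :=
        (h1.exp.const_mul K).fun_neg
      convert h3 using 1
      ring
    have hDd : ∀ t ∈ Set.Ioi (10:ℝ), HasDerivAt (fun u => Bf u - F u)
        (lam * (Real.exp (-(α * t ^ β)) * h t) - K * cr * Real.exp (-(cr * (t - r)))) t :=
      fun t ht => (hB t ht).sub (hFd t)
    have hanti2 : AntitoneOn (fun u => Bf u - F u) (Set.Icc r s) := by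
      apply antitoneOn_of_deriv_nonpos (convex_Icc r s)
      · intro t ht
        have ht10 : t ∈ Set.Ioi (10:ℝ) := by
          simp only [Set.mem_Icc] at ht
          simp only [Set.mem_Ioi]; linarith [ht.1]
        exact ((hDd t ht10).continuousAt).continuousWithinAt
      · intro t ht
        rw [interior_Icc] at ht
        have ht10 : t ∈ Set.Ioi (10:ℝ) := by
          simp only [Set.mem_Ioo] at ht
          simp only [Set.mem_Ioi]; linarith [ht.1]
        exact (hDd t ht10).differentiableAt.differentiableWithinAt
      · intro t ht
        rw [interior_Icc] at ht
        simp only [Set.mem_Ioo] at ht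
        have ht10 : t ∈ Set.Ioi (10:ℝ) := by simp only [Set.mem_Ioi]; linarith [ht.1]
        rw [(hDd t ht10).deriv]
        -- show lam * (g t * h t) ≤ K * cr * exp(-(cr (t-r)))
        have hKcr : K * cr = lam * h r * Real.exp (-(α * r ^ β)) := by
          rw [hKdef]; field_simp
        have hht : h t ≤ h r := hanti (by simp only [Set.mem_Ici]; linarith)
          (by simp only [Set.mem_Ici]; linarith [ht.1]) ht.1.le
        have hbern := bern β (by linarith) hr0 ht.1.le
        have hgt : Real.exp (-(α * t ^ β)) ≤ Real.exp (-(α * r ^ β)) * Real.exp (-(cr * (t - r))) := by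
          rw [← Real.exp_add]
          apply Real.exp_le_exp.mpr
          have : α * (r ^ β + β * r ^ (β - 1) * (t - r)) ≤ α * t ^ β :=
            mul_le_mul_of_nonneg_left hbern hα.le
          rw [hcrdef]
          nlinarith
        have hhtpos : 0 < h t := hhpos t (by simp only [Set.mem_Ici]; linarith [ht.1])
        have hmul : Real.exp (-(α * t ^ β)) * h t
            ≤ (Real.exp (-(α * r ^ β)) * Real.exp (-(cr * (t - r)))) * h r :=
          mul_le_mul hgt hht hhtpos.le (by positivity)
        rw [hKcr]
        nlinarith
    have hds := hanti2 (Set.mem_Icc.mpr ⟨le_rfl, hrs⟩) (Set.mem_Icc.mpr ⟨hrs, le_rfl⟩) hrs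
    simp only at hds
    have hFr : F r = -K := by simp [hFdef]
    have hFs : F s ≤ 0 := by
      have : 0 < K * Real.exp (-(cr * (s - r))) := by positivity
      simp only [hFdef]; linarith
    rw [hFr] at hds
    -- hds : Bf s - F s ≤ Bf r + K
    linarith
  -- combine: lower bound on Bf
  have hBlow : ∀ r ∈ Set.Ioi (10:ℝ),
      -(lam * h r * Real.exp (-(α * r ^ β)) / (α * β * r ^ (β - 1))) ≤ Bf r := by
    intro r hr
    have hr10 : (10:ℝ) < r := hr
    have hr0 : (0:ℝ) < r := by linarith
    have hKpos : 0 ≤ lam * h r * Real.exp (-(α * r ^ β)) / (α * β * r ^ (β - 1)) := by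
      have h1 := hhpos r (by simp only [Set.mem_Ici]; linarith)
      have h2 := hgpos r
      have h3 := Real.rpow_pos_of_pos hr0 (β - 1)
      positivity
    rw [neg_le]
    apply le_of_forall_pos_le_add
    intro ε hε
    obtain ⟨s, hs, hsB⟩ := hBsmall ε hε
    rcases le_total r s with hle | hle
    · have := hcomp r hr s hle
      linarith
    · have := (hBmono.monotoneOn) hs hr hle
      linarith
  -- log-derivative bound
  have hlog : ∀ r ∈ Set.Ioi (10:ℝ),
      -(lam / (α * β)) * r ^ (1 - β) * h r ≤ deriv h r := by
    intro r hr
    have hr10 : (10:ℝ) < r := hr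
    have hr0 : (0:ℝ) < r := by linarith
    have hgr := hgpos r
    have hrb : (0:ℝ) < r ^ (β - 1) := Real.rpow_pos_of_pos hr0 (β - 1)
    have hrinv : r ^ (1 - β) = (r ^ (β - 1))⁻¹ := by
      have he : (1 - β) = -(β - 1) := by ring
      rw [he, Real.rpow_neg hr0.le]
    have hident : lam / (α * β) * r ^ (1 - β) * h r * Real.exp (-(α * r ^ β))
        = lam * h r * Real.exp (-(α * r ^ β)) / (α * β * r ^ (β - 1)) := by
      rw [hrinv]
      field_simp
    have h1 := hBlow r hr
    have h2 : Bf r = Real.exp (-(α * r ^ β)) * deriv h r := rfl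
    rw [h2, ← hident] at h1
    have h3 : -(lam / (α * β) * r ^ (1 - β) * h r) * Real.exp (-(α * r ^ β))
        ≤ deriv h r * Real.exp (-(α * r ^ β)) := by
      calc -(lam / (α * β) * r ^ (1 - β) * h r) * Real.exp (-(α * r ^ β))
          = -(lam / (α * β) * r ^ (1 - β) * h r * Real.exp (-(α * r ^ β))) := by ring
        _ ≤ Real.exp (-(α * r ^ β)) * deriv h r := h1
        _ = deriv h r * Real.exp (-(α * r ^ β)) := by ring
    have := le_of_mul_le_mul_right h3 hgr
    linarith
  -- the function Q = h * exp(-ψ) is monotone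
  set K2 := lam / (α * β * (β - 2)) with hK2def
  have hK2pos : 0 < K2 := by
    have : (0:ℝ) < β - 2 := by linarith
    positivity
  set ψ : ℝ → ℝ := fun t => K2 * t ^ (2 - β) with hψdef
  have hψd : ∀ t : ℝ, 0 < t → HasDerivAt ψ (-(lam / (α * β)) * t ^ (1 - β)) t := by
    intro t ht
    have h1 : HasDerivAt (fun u : ℝ => u ^ (2 - β)) ((2 - β) * t ^ (2 - β - 1)) t :=
      Real.hasDerivAt_rpow_const (Or.inl ht.ne')
    have h2 : HasDerivAt (fun y => K2 * y ^ (2 - β)) (K2 * ((2 - β) * t ^ (2 - β - 1))) t :=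
      h1.const_mul K2
    convert h2 using 1
    have he : 2 - β - 1 = 1 - β := by ring
    rw [he]
    have hc : K2 * (2 - β) = -(lam / (α * β)) := by
      have hb0 : (β:ℝ) ≠ 0 := by positivity
      have hb2 : β - 2 ≠ 0 := sub_ne_zero.mpr (by linarith)
      rw [hK2def]
      field_simp
      ring
    calc -(lam / (α * β)) * t ^ (1 - β) = (K2 * (2 - β)) * t ^ (1 - β) := by rw [hc]
      _ = K2 * ((2 - β) * t ^ (1 - β)) := by ring
  set Q : ℝ → ℝ := fun t => h t * Real.exp (-(ψ t)) with hQdef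
  have hQd : ∀ x ∈ Set.Ioi (10:ℝ), HasDerivAt Q
      (Real.exp (-(ψ x)) * (deriv h x - (-(lam / (α * β)) * x ^ (1 - β)) * h x)) x := by
    intro x hx
    have hx0 : (0:ℝ) < x := by have : (10:ℝ) < x := hx; linarith
    have h1 := ((hψd x hx0).fun_neg).exp
    have h2 : HasDerivAt (fun y => h y * Real.exp (-(ψ y))) _ x :=
      (hkey x hx).1.fun_mul h1
    convert h2 using 1
    ring
  have hQmono : MonotoneOn Q (Set.Ici (11:ℝ)) := by
    apply monotoneOn_of_deriv_nonneg (convex_Ici 11)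
    · intro x hx
      have hx10 : x ∈ Set.Ioi (10:ℝ) := by
        simp only [Set.mem_Ici] at hx; simp only [Set.mem_Ioi]; linarith
      exact ((hQd x hx10).continuousAt).continuousWithinAt
    · intro x hx
      rw [interior_Ici] at hx
      have hx10 : x ∈ Set.Ioi (10:ℝ) := by
        simp only [Set.mem_Ioi] at hx ⊢; linarith
      exact (hQd x hx10).differentiableAt.differentiableWithinAt
    · intro x hx
      rw [interior_Ici] at hx
      have hx10 : x ∈ Set.Ioi (10:ℝ) := by
        simp only [Set.mem_Ioi] at hx ⊢; linarith
      rw [(hQd x hx10).deriv]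
      have := hlog x hx10
      have hexp : (0:ℝ) ≤ Real.exp (-(ψ x)) := (Real.exp_pos _).le
      apply mul_nonneg hexp
      linarith
  have hc0 : 0 < Q 11 := by
    have := hhpos 11 (by norm_num)
    have := Real.exp_pos (-(ψ 11))
    simp only [hQdef]
    positivity
  -- lower bound on h
  have hlb : ∀ r ∈ Set.Ici (11:ℝ), Q 11 ≤ h r := by
    intro r hr
    have hr11 : (11:ℝ) ≤ r := hr
    have h1 : Q 11 ≤ Q r := hQmono self_mem_Ici hr hr11
    have hr0 : (0:ℝ) < r := by linarith
    have hψpos : 0 ≤ ψ r := by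
      have := Real.rpow_pos_of_pos hr0 (2 - β)
      simp only [hψdef]
      positivity
    have hexple : Real.exp (-(ψ r)) ≤ 1 := by
      rw [Real.exp_le_one_iff]; linarith
    have hhr : 0 < h r := hhpos r (by simp only [Set.mem_Ici]; linarith)
    have h2 : Q r ≤ h r := by
      have : h r * Real.exp (-(ψ r)) ≤ h r * 1 :=
        mul_le_mul_of_nonneg_left hexple hhr.le
      simpa [hQdef] using this
    linarith
  -- limit
  set H : ℝ → ℝ := fun r => h (max r 11) with hHdef
  have hmem : ∀ r : ℝ, max r 11 ∈ Set.Ici (10:ℝ) := by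
    intro r
    simp only [Set.mem_Ici]
    have := le_max_right r 11
    linarith
  have hHanti : Antitone H := by
    intro a b hab
    exact hanti (hmem a) (hmem b) (max_le_max hab le_rfl)
  have hHbdd : BddBelow (Set.range H) := by
    refine ⟨Q 11, ?_⟩
    rintro _ ⟨r, rfl⟩
    exact hlb _ (Set.mem_Ici.mpr (le_max_right _ _))
  have hT : Tendsto H atTop (nhds (⨅ r, H r)) := tendsto_atTop_ciInf hHanti hHbdd
  have hL : Q 11 ≤ ⨅ r, H r :=
    le_ciInf fun r => hlb _ (Set.mem_Ici.mpr (le_max_right _ _))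
  have hHh : H =ᶠ[atTop] h := by
    filter_upwards [eventually_ge_atTop (11:ℝ)] with r hr
    simp only [hHdef, max_eq_left hr]
  have hTh : Tendsto h atTop (nhds (⨅ r, H r)) := hT.congr' hHh
  refine ⟨hSA, ⟨⨅ r, H r, lt_of_lt_of_le hc0 hL, hTh⟩, ?_⟩
  intro h0
  have := tendsto_nhds_unique hTh h0
  linarith [lt_of_lt_of_le hc0 hL]
end

section
/- Let m ≥ 2 be an integer and let G : [0, ∞) → ℝ be a twice continuously differentiable, positive, monotone increasing function such that ∫_0^∞ dt/G(t) < +∞ and limsup_{r→∞} G'(r)/G(r)² = α < +∞. Fix β > α and define g : [0, ∞) → ℝ by g(r) = exp(−β·∫_0^r G(t) dt). Then: (a) g^{m-1} is Lebesgue integrable on [0, ∞); and (b) the function r ↦ (∫_r^∞ g(t)^{m-1} dt)/g(r)^{m-1} is Lebesgue integrable on [0, ∞). -/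
open Set MeasureTheory Filter Real

/-- sharpness of Hsu's condition: if `G > 0` is increasing with
`1/G` integrable and `limsup G'/G² = α < ∞`, and `β > α`,
`g(r) = exp(-β ∫_0^r G)`, then `g^{m-1}` and `r ↦ (∫_r^∞ g^{m-1})/g(r)^{m-1}`
are both integrable on `[0,∞)` (so the model `M_g^m` is not Feller). -/
theorem stmt_14 (m : ℕ) (hm : 2 ≤ m) (G : ℝ → ℝ) (α β : ℝ)
    (hG : ContDiffOn ℝ 2 G (Set.Ici (0 : ℝ)))
    (hGpos : ∀ r ∈ Set.Ici (0 : ℝ), 0 < G r)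
    (hGmono : MonotoneOn G (Set.Ici (0 : ℝ)))
    (hGint : MeasureTheory.IntegrableOn (fun t => (G t)⁻¹) (Set.Ici (0 : ℝ)))
    (hlimsup : Filter.limsup (fun r => deriv G r / (G r) ^ 2) Filter.atTop = α)
    (hβ : α < β)
    (g : ℝ → ℝ)
    (hgdef : ∀ r : ℝ, g r = Real.exp (-(β * ∫ t in (0:ℝ)..r, G t))) :
    MeasureTheory.IntegrableOn (fun r => g r ^ (m - 1)) (Set.Ici (0 : ℝ)) ∧
    MeasureTheory.IntegrableOn
      (fun r => (∫ t in Set.Ici r, g t ^ (m - 1)) / g r ^ (m - 1))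
      (Set.Ici (0 : ℝ)) := by
  -- notation
  set n : ℕ := m - 1 with hn
  have hn1 : 1 ≤ n := by omega
  -- `deriv G ≥ 0` on `(0,∞)`
  have hderiv : ∀ x : ℝ, 0 < x → 0 ≤ deriv G x := by
    intro x hx
    have hmem : Set.Ici (0 : ℝ) ∈ nhds x := Ici_mem_nhds hx
    have hdiff : DifferentiableAt ℝ G x := by
      have := (hG.differentiableOn (by norm_num)) x (le_of_lt hx)
      exact this.differentiableAt hmem
    have hda : HasDerivAt G (deriv G x) x := hdiff.hasDerivAt
    have h1 : Filter.Tendsto (slope G x) (nhdsWithin x (Set.Ioi x)) (nhds (deriv G x)) :=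
      (hasDerivAt_iff_tendsto_slope.mp hda).mono_left
        (nhdsWithin_mono x (fun y hy => ne_of_gt hy))
    refine ge_of_tendsto h1 ?_
    filter_upwards [self_mem_nhdsWithin] with y hy
    have hxy : x < y := hy
    have : G x ≤ G y := hGmono (le_of_lt hx) (le_of_lt (lt_trans hx hxy)) (le_of_lt hxy)
    rw [slope_def_field]
    exact div_nonneg (by linarith) (by linarith)
  -- `α ≥ 0`, hence `β > 0`
  have hα : 0 ≤ α := by
    rw [← hlimsup, Filter.limsup_eq]
    apply Real.sInf_nonneg
    intro a ha
    simp only [Set.mem_setOf_eq] at ha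
    have hev : ∀ᶠ r in Filter.atTop, 0 ≤ deriv G r / G r ^ 2 := by
      filter_upwards [Filter.eventually_gt_atTop 0] with r hr
      exact div_nonneg (hderiv r hr) (sq_nonneg _)
    obtain ⟨r, h1, h2⟩ := (ha.and hev).exists
    linarith
  have hβ0 : 0 < β := lt_of_le_of_lt hα hβ
  set c : ℝ := G 0 with hc
  have hc0 : 0 < c := hGpos 0 Set.self_mem_Ici
  -- modified G, continuous on all of ℝ
  set Gm : ℝ → ℝ := fun t => G (max t 0) with hGm
  have hGmc : Continuous Gm := by
    apply (hG.continuousOn (s := Set.Ici 0)).comp_continuous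
      (continuous_id.max continuous_const)
    intro x; exact le_max_right x 0
  have hGmint : ∀ a b : ℝ, IntervalIntegrable Gm MeasureTheory.volume a b :=
    fun a b => hGmc.intervalIntegrable a b
  set F : ℝ → ℝ := fun r => ∫ t in (0:ℝ)..r, Gm t with hF
  have hFc : Continuous F := intervalIntegral.continuous_primitive hGmint 0
  have hGmeq : ∀ t : ℝ, 0 ≤ t → Gm t = G t := by
    intro t ht; simp [hGm, max_eq_left ht]
  have hGmlb : ∀ t : ℝ, ∀ s : ℝ, 0 ≤ s → s ≤ t → G s ≤ Gm t := by
    intro t s hs hst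
    rw [hGmeq t (le_trans hs hst)]
    exact hGmono hs (le_trans hs hst) hst
  -- g r = exp(-(β * F r)) for r ≥ 0
  have hgF : ∀ r : ℝ, 0 ≤ r → g r = Real.exp (-(β * F r)) := by
    intro r hr
    rw [hgdef r]
    have heq : (∫ t in (0:ℝ)..r, G t) = F r := by
      apply intervalIntegral.integral_congr
      intro t ht
      rw [Set.uIcc_of_le hr] at ht
      exact (hGmeq t ht.1).symm
    rw [heq]
  -- lower bound F r ≥ c * r
  have hFlb : ∀ r : ℝ, 0 ≤ r → c * r ≤ F r := by
    intro r hr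
    have h1 : (∫ t in (0:ℝ)..r, c) ≤ ∫ t in (0:ℝ)..r, Gm t := by
      apply intervalIntegral.integral_mono_on hr (intervalIntegrable_const) (hGmint 0 r)
      intro t ht
      exact hGmlb t 0 le_rfl ht.1
    have h2 : (∫ t in (0:ℝ)..r, c) = r * c := by simp
    show c * r ≤ ∫ t in (0:ℝ)..r, Gm t
    linarith
  -- additivity bound: for 0 ≤ r ≤ t, F t ≥ F r + G r * (t - r)
  have hFadd : ∀ r t : ℝ, 0 ≤ r → r ≤ t → F r + G r * (t - r) ≤ F t := by
    intro r t hr hrt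
    have hsplit : F r + (∫ s in r..t, Gm s) = F t :=
      intervalIntegral.integral_add_adjacent_intervals (hGmint 0 r) (hGmint r t)
    have h1 : (∫ s in r..t, G r) ≤ ∫ s in r..t, Gm s := by
      apply intervalIntegral.integral_mono_on hrt intervalIntegrable_const (hGmint r t)
      intro s hs
      exact hGmlb s r hr hs.1
    have h2 : (∫ s in r..t, G r) = G r * (t - r) := by
      simp [mul_comm]
    linarith
  -- expression for g^n
  have hgn : ∀ r : ℝ, 0 ≤ r → g r ^ n = Real.exp (-((n : ℝ) * β * F r)) := by
    intro r hr
    rw [hgF r hr, ← Real.exp_nat_mul]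
    ring_nf
  have hgpos : ∀ r : ℝ, 0 < g r := fun r => by rw [hgdef r]; exact Real.exp_pos _
  have hgnpos : ∀ r : ℝ, 0 < g r ^ n := fun r => pow_pos (hgpos r) n
  have hnβ : 0 < (n : ℝ) * β := by
    apply mul_pos _ hβ0
    exact_mod_cast Nat.lt_of_lt_of_le Nat.zero_lt_one hn1
  -- continuity of g^n on Ici 0
  have hgncont : ContinuousOn (fun r => g r ^ n) (Set.Ici (0 : ℝ)) := by
    apply ContinuousOn.congr (f := fun r => Real.exp (-((n : ℝ) * β * F r)))
    · exact (Real.continuous_exp.comp ((continuous_const.mul hFc).neg)).continuousOn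
    · intro r hr; exact hgn r hr
  -- Part (a)
  have hA : MeasureTheory.IntegrableOn (fun r => g r ^ n) (Set.Ici (0 : ℝ)) := by
    have hbd : MeasureTheory.IntegrableOn
        (fun r : ℝ => Real.exp (-((n : ℝ) * β * c) * r)) (Set.Ici (0 : ℝ)) := by
      rw [integrableOn_Ici_iff_integrableOn_Ioi]
      exact exp_neg_integrableOn_Ioi 0 (mul_pos hnβ hc0)
    refine MeasureTheory.Integrable.mono' hbd
      (hgncont.aestronglyMeasurable measurableSet_Ici) ?_
    rw [MeasureTheory.ae_restrict_iff' measurableSet_Ici]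
    apply MeasureTheory.ae_of_all
    intro r hr
    rw [Real.norm_eq_abs, abs_of_pos (hgnpos r), hgn r hr]
    apply Real.exp_le_exp.mpr
    have := hFlb r hr
    nlinarith [hnβ.le]
  refine ⟨hA, ?_⟩
  -- Part (b)
  set I : ℝ → ℝ := fun r => ∫ t in Set.Ici r, g t ^ n with hI
  have hInonneg : ∀ r : ℝ, 0 ≤ I r := by
    intro r
    exact MeasureTheory.setIntegral_nonneg measurableSet_Ici fun t _ => (hgnpos t).le
  -- key bound: I r ≤ g r ^ n * ((n β G r))⁻¹ for r ≥ 0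
  have hkey : ∀ r : ℝ, 0 ≤ r → I r ≤ g r ^ n * ((n : ℝ) * β * G r)⁻¹ := by
    intro r hr
    set b : ℝ := (n : ℝ) * β * G r with hb
    have hb0 : 0 < b := mul_pos hnβ (hGpos r hr)
    have hIr : MeasureTheory.IntegrableOn (fun t => g t ^ n) (Set.Ioi r) :=
      hA.mono_set (fun x hx => le_trans hr (le_of_lt hx))
    have hint2 : MeasureTheory.IntegrableOn
        (fun t : ℝ => g r ^ n * (Real.exp (b * r) * Real.exp (-b * t))) (Set.Ioi r) := by
      exact ((exp_neg_integrableOn_Ioi r hb0).const_mul _).const_mul _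
    have hmono : ∀ t ∈ Set.Ioi r, g t ^ n ≤
        g r ^ n * (Real.exp (b * r) * Real.exp (-b * t)) := by
      intro t ht
      have htr : r ≤ t := le_of_lt ht
      have ht0 : 0 ≤ t := le_trans hr htr
      rw [hgn t ht0, hgn r hr, ← Real.exp_add, ← Real.exp_add]
      apply Real.exp_le_exp.mpr
      have := hFadd r t hr htr
      have hGr : 0 ≤ G r := (hGpos r hr).le
      have : (n : ℝ) * β * (F r + G r * (t - r)) ≤ (n : ℝ) * β * F t :=
        mul_le_mul_of_nonneg_left this hnβ.le
      rw [hb]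
      nlinarith
    have hIeq : I r = ∫ t in Set.Ioi r, g t ^ n :=
      MeasureTheory.integral_Ici_eq_integral_Ioi
    have h1 : I r ≤ ∫ t in Set.Ioi r, g r ^ n * (Real.exp (b * r) * Real.exp (-b * t)) := by
      rw [hIeq]
      exact MeasureTheory.setIntegral_mono_on hIr hint2 measurableSet_Ioi hmono
    have h2 : (∫ t in Set.Ioi r, g r ^ n * (Real.exp (b * r) * Real.exp (-b * t)))
        = g r ^ n * b⁻¹ := by
      rw [MeasureTheory.integral_const_mul, MeasureTheory.integral_const_mul]
      have h3 : (∫ t in Set.Ioi r, Real.exp (-b * t))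
          = b⁻¹ * Real.exp (-(b * r)) := by
        have h4 : (∫ t in Set.Ioi r, Real.exp (-(b * t)))
            = b⁻¹ • ∫ x in Set.Ioi (b * r), Real.exp (-x) :=
          MeasureTheory.integral_comp_mul_left_Ioi (fun x => Real.exp (-x)) r hb0
        simp only [neg_mul] at h4 ⊢
        rw [h4, integral_exp_neg_Ioi, smul_eq_mul]
      rw [h3, show Real.exp (b*r) * (b⁻¹ * Real.exp (-(b*r)))
          = b⁻¹ * (Real.exp (b*r) * Real.exp (-(b*r))) from by ring, ← Real.exp_add]
      simp
    linarith
  -- measurability of the quotient on Ici 0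
  have hIanti : AntitoneOn I (Set.Ici (0 : ℝ)) := by
    intro r1 hr1 r2 hr2 hr12
    show (∫ t in Set.Ici r2, g t ^ n) ≤ ∫ t in Set.Ici r1, g t ^ n
    refine MeasureTheory.setIntegral_mono_set
      (hA.mono_set (fun x hx => Set.mem_Ici.mpr (le_trans hr1 hx)))
      (MeasureTheory.ae_of_all _ fun t => (hgnpos t).le) ?_
    exact HasSubset.Subset.eventuallyLE (Set.Ici_subset_Ici.mpr hr12)
  have hImeas : AEMeasurable I (MeasureTheory.volume.restrict (Set.Ici (0:ℝ))) :=
    aemeasurable_restrict_of_antitoneOn measurableSet_Ici hIanti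
  have hgnmeas : AEMeasurable (fun r => g r ^ n)
      (MeasureTheory.volume.restrict (Set.Ici (0:ℝ))) :=
    (hgncont.aestronglyMeasurable measurableSet_Ici).aemeasurable
  have hquotmeas : MeasureTheory.AEStronglyMeasurable
      (fun r => I r / g r ^ n) (MeasureTheory.volume.restrict (Set.Ici (0:ℝ))) :=
    (hImeas.div hgnmeas).aestronglyMeasurable
  -- dominating function
  have hdom : MeasureTheory.IntegrableOn
      (fun r : ℝ => ((n : ℝ) * β)⁻¹ * (G r)⁻¹) (Set.Ici (0 : ℝ)) :=
    hGint.const_mul _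
  refine MeasureTheory.Integrable.mono' hdom hquotmeas ?_
  rw [MeasureTheory.ae_restrict_iff' measurableSet_Ici]
  apply MeasureTheory.ae_of_all
  intro r hr
  have h0 : 0 ≤ I r / g r ^ n := div_nonneg (hInonneg r) (hgnpos r).le
  rw [Real.norm_eq_abs, abs_of_nonneg h0]
  have hkey' := hkey r hr
  rw [div_le_iff₀ (hgnpos r)]
  calc I r ≤ g r ^ n * ((n : ℝ) * β * G r)⁻¹ := hkey'
    _ = ((n : ℝ) * β)⁻¹ * (G r)⁻¹ * g r ^ n := by rw [mul_inv]; ring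
end
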